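/- arXiv:2401.00382 — 11 statements merged into one kernel-verified Lean document; each statement's English description precedes it below -/
import Mathlib

section
/- Let X be a topological vector space over K (K = ℝ or ℂ) and let Y be a linear subspace of X such that w(X) ≤ codim(Y) = α, where codim(Y) denotes the dimension of the quotient space X/Y. Then X \ Y is α-dense-lineable in X; that is, there exists a dense linear subspace Z of X with dim(Z) = α and Z ⊆ (X \ Y) ∪ {0}. -/
universe u

open Cardinal

/-- The weight of a topological space: the smallest cardinality of a basis for its topology. -/
noncomputable def tsWeight (X : Type u) [TopologicalSpace X] : Cardinal.{u} :=
  sInf { c : Cardinal.{u} | ∃ B : Set (Set X),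
    TopologicalSpace.IsTopologicalBasis B ∧ #↥B = c }

section Aux

variable {𝕜 : Type} [RCLike 𝕜] {X : Type u} [AddCommGroup X] [Module 𝕜 X]
    [TopologicalSpace X] [IsTopologicalAddGroup X] [ContinuousSMul 𝕜 X]

/-- Key step: a nonempty open set is not contained in `Y ⊔ span v` when `#v < codim Y`. -/
lemma stmt0_aux_key (Y : Submodule 𝕜 X) {α : Cardinal.{u}}
    (hcodim : Module.rank 𝕜 (X ⧸ Y) = α) {U : Set X} (hU : IsOpen U) (hne : U.Nonempty)
    {v : Set X} (hv : #v < α) :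
    ∃ z ∈ U, z ∉ Y ⊔ Submodule.span 𝕜 v := by
  haveI := NormedField.nhdsWithin_isUnit_neBot (α := 𝕜)
  have hW : Y ⊔ Submodule.span 𝕜 v ≠ ⊤ := by
    intro hW
    have hmap : Submodule.span 𝕜 (Y.mkQ '' v) = ⊤ := by
      have h1 : Submodule.map Y.mkQ (Y ⊔ Submodule.span 𝕜 v) = ⊤ := by
        rw [hW, Submodule.map_top, Submodule.range_mkQ]
      have h2 : Submodule.map Y.mkQ Y = ⊥ := by simp
      rwa [Submodule.map_sup, Submodule.map_span, h2, bot_sup_eq] at h1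
    have hrank : Module.rank 𝕜 (X ⧸ Y) ≤ #(Y.mkQ '' v) := by
      have := rank_span_le (R := 𝕜) (Y.mkQ '' v)
      rwa [hmap, rank_top] at this
    have : Module.rank 𝕜 (X ⧸ Y) ≤ #v := hrank.trans Cardinal.mk_image_le
    exact absurd (hcodim ▸ this) (not_le.2 hv)
  by_contra h
  push_neg at h
  exact hW ((Y ⊔ Submodule.span 𝕜 v).eq_top_of_nonempty_interior'
    (hne.mono (hU.subset_interior_iff.2 fun z hz => h z hz)))

end Aux

/-- Vectors each of which avoids the span of its predecessors are linearly independent. -/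
lemma stmt0_aux_li {K : Type*} {V : Type*} {ι : Type*} [DivisionRing K] [AddCommGroup V]
    [Module K V] [LinearOrder ι] {f : ι → V}
    (hf : ∀ t, f t ∉ Submodule.span K (f '' Set.Iio t)) : LinearIndependent K f := by
  rw [linearIndependent_iff]
  intro l hl
  by_contra hlne
  have hsupp : l.support.Nonempty := Finsupp.support_nonempty_iff.mpr hlne
  set t := l.support.max' hsupp with ht
  have htmem : t ∈ l.support := l.support.max'_mem hsupp
  have hlt : ∀ s ∈ l.support.erase t, s < t := fun s hs =>
    lt_of_le_of_ne (Finset.le_max' _ _ (Finset.mem_of_mem_erase hs)) (Finset.ne_of_mem_erase hs)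
  rw [Finsupp.linearCombination_apply, Finsupp.sum] at hl
  have hsplit : l t • f t + ∑ s ∈ l.support.erase t, l s • f s = 0 := by
    rw [Finset.add_sum_erase _ (fun s => l s • f s) htmem]; exact hl
  have h2 : l t • f t = -∑ s ∈ l.support.erase t, l s • f s :=
    eq_neg_of_add_eq_zero_left hsplit
  have hlt0 : l t ≠ 0 := Finsupp.mem_support_iff.1 htmem
  have hft : f t ∈ Submodule.span K (f '' Set.Iio t) := by
    have h3 : f t = (l t)⁻¹ • (l t • f t) := by
      rw [smul_smul, inv_mul_cancel₀ hlt0, one_smul]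
    rw [h3, h2]
    exact Submodule.smul_mem _ _ (Submodule.neg_mem _ (Submodule.sum_mem _ fun s hs =>
      Submodule.smul_mem _ _ (Submodule.subset_span ⟨s, hlt s hs, rfl⟩)))
  exact hf t hft

/-- Let `X` be a topological vector space over `𝕜` (`𝕜 = ℝ` or `ℂ`) and `Y` a
linear subspace with `w(X) ≤ codim(Y) = α`.  Then `X \ Y` is `α`-dense-lineable: there is a dense
linear subspace `Z` of `X` with `dim Z = α` and `Z ⊆ (X \ Y) ∪ {0}`. -/
theorem stmt0 {𝕜 : Type} [RCLike 𝕜] {X : Type u} [AddCommGroup X] [Module 𝕜 X]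
    [TopologicalSpace X] [IsTopologicalAddGroup X] [ContinuousSMul 𝕜 X]
    (Y : Submodule 𝕜 X) (α : Cardinal.{u})
    (hcodim : Module.rank 𝕜 (X ⧸ Y) = α) (hw : tsWeight X ≤ α) :
    ∃ Z : Submodule 𝕜 X, Dense (Z : Set X) ∧ Module.rank 𝕜 Z = α ∧
      (Z : Set X) ⊆ (Y : Set X)ᶜ ∪ {0} := by
  classical
  unfold tsWeight at hw
  have hSne : { c : Cardinal.{u} | ∃ B : Set (Set X),
      TopologicalSpace.IsTopologicalBasis B ∧ #↥B = c }.Nonempty :=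
    ⟨_, ⟨_, TopologicalSpace.isTopologicalBasis_opens, rfl⟩⟩
  obtain ⟨B, hB, hBcard⟩ := csInf_mem hSne
  have hBle : #↥B ≤ α := hBcard.trans_le hw
  set ι := ↥{U : Set X | U ∈ B ∧ U.Nonempty} with hιdef
  have hικ : #ι ≤ α :=
    le_trans (Cardinal.mk_le_mk_of_subset (fun U hU => hU.1)) hBle
  set κ := #ι with hκdef
  set τ := κ.ord.ToType with hτdef
  obtain ⟨e⟩ : Nonempty (τ ≃ ι) := Cardinal.eq.1 (Cardinal.mk_ord_toType κ)
  have hbound : ∀ (t : τ) (v : Set.Iio t → X), #(Set.range v) < α := fun t v =>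
    lt_of_le_of_lt Cardinal.mk_range_le
      (lt_of_lt_of_le (Cardinal.mk_Iio_ord_toType t) hικ)
  have hwf : WellFounded ((· < ·) : τ → τ → Prop) := IsWellFounded.wf
  let F : ∀ t : τ, (∀ s : τ, s < t → X) → X := fun t ih =>
    Classical.choose (stmt0_aux_key Y hcodim (hB.isOpen (e t).2.1) (e t).2.2
      (hbound t fun s : Set.Iio t => ih s.1 s.2))
  let g : τ → X := fun t => hwf.fix F t
  have gdef : ∀ t, g t = F t fun s _ => g s := fun t => hwf.fix_eq F t
  have gspec : ∀ t : τ, g t ∈ (e t).1 ∧ g t ∉ Y ⊔ Submodule.span 𝕜 (g '' Set.Iio t) := by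
    intro t
    have heq : (Set.range fun s : Set.Iio t => g s.1) = g '' Set.Iio t :=
      (Set.image_eq_range g (Set.Iio t)).symm
    have h := Classical.choose_spec (stmt0_aux_key Y hcodim (hB.isOpen (e t).2.1) (e t).2.2
      (hbound t fun s : Set.Iio t => g s.1))
    have hg : g t = Classical.choose (stmt0_aux_key Y hcodim (hB.isOpen (e t).2.1) (e t).2.2
      (hbound t fun s : Set.Iio t => g s.1)) := gdef t
    rw [hg, ← heq]
    exact ⟨h.1, h.2⟩
  let f : τ → X ⧸ Y := fun t => Y.mkQ (g t)
  have hfpred : ∀ t, f t ∉ Submodule.span 𝕜 (f '' Set.Iio t) := by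
    intro t hmem
    have himg : f '' Set.Iio t = Y.mkQ '' (g '' Set.Iio t) := by
      rw [Set.image_image]
    rw [himg, ← Submodule.map_span] at hmem
    have h2 : g t ∈ Submodule.comap Y.mkQ
        (Submodule.map Y.mkQ (Submodule.span 𝕜 (g '' Set.Iio t))) :=
      Submodule.mem_comap.2 hmem
    rw [Submodule.comap_map_eq, Submodule.ker_mkQ, sup_comm] at h2
    exact (gspec t).2 h2
  have hli : LinearIndependent 𝕜 f := stmt0_aux_li hfpred
  set S := Submodule.span 𝕜 (Set.range g) with hSdef
  have hdisj : Disjoint Y S := by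
    rw [Submodule.disjoint_def]
    intro x hxY hxS
    obtain ⟨c, hc⟩ := Finsupp.mem_span_range_iff_exists_finsupp.mp hxS
    have hmk : Y.mkQ x = 0 := (Submodule.Quotient.mk_eq_zero Y).2 hxY
    have h1 : (c.sum fun i a => a • f i) = Y.mkQ x := by
      rw [← hc, map_finsuppSum]
      simp [f]
    have h0 : Finsupp.linearCombination 𝕜 f c = 0 := by
      rw [Finsupp.linearCombination_apply, h1, hmk]
    have hc0 : c = 0 := linearIndependent_iff.1 hli c h0
    rw [hc0] at hc
    simpa using hc.symm
  have hdense : Dense (S : Set X) := by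
    rw [hB.dense_iff]
    intro o ho hone
    refine ⟨g (e.symm ⟨o, ho, hone⟩), ?_, Submodule.subset_span ⟨_, rfl⟩⟩
    have h := (gspec (e.symm ⟨o, ho, hone⟩)).1
    rwa [Equiv.apply_symm_apply] at h
  obtain ⟨C, hC⟩ := Submodule.exists_isCompl (Y ⊔ S)
  have hdisj2 : Disjoint Y (S ⊔ C) := by
    rw [Submodule.disjoint_def]
    intro x hxY hx
    obtain ⟨s, hs, c, hc, rfl⟩ := Submodule.mem_sup.1 hx
    have hcY : c ∈ Y ⊔ S := by
      have hceq : c = (s + c) - s := (add_sub_cancel_left s c).symm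
      rw [hceq]
      exact Submodule.sub_mem _ (Submodule.mem_sup_left hxY) (Submodule.mem_sup_right hs)
    have hc0 : c = 0 := Submodule.disjoint_def.1 hC.disjoint c hcY hc
    rw [hc0, add_zero] at hxY ⊢
    exact Submodule.disjoint_def.1 hdisj s hxY hs
  have hcompl : IsCompl Y (S ⊔ C) :=
    ⟨hdisj2, by rw [codisjoint_iff, ← sup_assoc]; exact codisjoint_iff.1 hC.codisjoint⟩
  refine ⟨S ⊔ C, Dense.mono (SetLike.coe_subset_coe.2 le_sup_left) hdense, ?_, ?_⟩
  · have hr := LinearEquiv.rank_eq (Submodule.quotientEquivOfIsCompl Y (S ⊔ C) hcompl)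
    rw [← hr, hcodim]
  · intro x hx
    by_cases hxY : x ∈ Y
    · exact Or.inr (Submodule.disjoint_def.1 hdisj2 x hxY hx)
    · exact Or.inl hxY
end

section
/- Let X be a topological vector space over K (K = ℝ or ℂ), M a subset of X, and α an infinite cardinal with w(X) ≤ α. Then M is α-dense-lineable if, and only if, M is α-infinitely α-dense-lineable. -/
universe u

open Cardinal

variable (𝕜 : Type) [RCLike 𝕜] {X : Type u} [AddCommGroup X] [Module 𝕜 X] [TopologicalSpace X]

/-- `M` is `α`-dense-lineable: there is a dense linear subspace `Y` of `X` with `dim Y = α`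
and `Y ⊆ M ∪ {0}`. -/
def DenseLineable (M : Set X) (α : Cardinal.{u}) : Prop :=
  ∃ Y : Submodule 𝕜 X, Dense (Y : Set X) ∧ Module.rank 𝕜 Y = α ∧ (Y : Set X) ⊆ M ∪ {0}

/-- `M` is `α`-infinitely `β`-dense-lineable: there is a family `{Y_κ}_{κ<α}` of `β`-dimensional
dense linear subspaces of `X` contained in `M ∪ {0}` with pairwise trivial intersections. -/
def InfDenseLineable (M : Set X) (α β : Cardinal.{u}) : Prop :=
  ∃ (ι : Type u) (Y : ι → Submodule 𝕜 X), #ι = α ∧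
    (∀ i, Dense (Y i : Set X) ∧ Module.rank 𝕜 (Y i) = β ∧ (Y i : Set X) ⊆ M ∪ {0}) ∧
    ∀ i j, i ≠ j → Y i ⊓ Y j = ⊥

/-- A family each of whose members is outside the span of the earlier members (with respect to a
linear order on the index type) is linearly independent. -/
theorem myLI {ι : Type*} [LinearOrder ι] {f : ι → X}
    (h : ∀ i, f i ∉ Submodule.span 𝕜 (f '' Set.Iio i)) : LinearIndependent 𝕜 f := by
  rw [linearIndependent_iff']
  intro s
  induction s using Finset.strongInductionOn with
  | _ s ih =>
    intro g hg i hi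
    have hne : s.Nonempty := ⟨i, hi⟩
    obtain ⟨m, hms, hmax⟩ : ∃ m ∈ s, ∀ j ∈ s, j ≤ m :=
      ⟨s.max' hne, s.max'_mem hne, fun j hj => s.le_max' j hj⟩
    have hsum : g m • f m + ∑ j ∈ s.erase m, g j • f j = ∑ j ∈ s, g j • f j :=
      Finset.add_sum_erase _ (fun j => g j • f j) hms
    have hgm : g m = 0 := by
      by_contra hgm
      apply h m
      have h3 : g m • f m = -∑ j ∈ s.erase m, g j • f j := by
        apply eq_neg_of_add_eq_zero_left
        rw [hsum]
        exact hg
      have h4 : f m = (g m)⁻¹ • -∑ j ∈ s.erase m, g j • f j := by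
        rw [← h3, smul_smul, inv_mul_cancel₀ hgm, one_smul]
      rw [h4]
      refine Submodule.smul_mem _ _ (Submodule.neg_mem _ (Submodule.sum_mem _ fun j hj => ?_))
      refine Submodule.smul_mem _ _ (Submodule.subset_span ?_)
      exact ⟨j, lt_of_le_of_ne (hmax j (Finset.mem_of_mem_erase hj))
        (Finset.ne_of_mem_erase hj), rfl⟩
    rcases eq_or_ne i m with rfl | him
    · exact hgm
    · refine ih (s.erase m) (Finset.erase_ssubset hms) g ?_ i
        (Finset.mem_erase.mpr ⟨him, hi⟩)
      rw [← hsum] at hg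
      rwa [hgm, zero_smul, zero_add] at hg

/-- Transfinite recursion: choose a family of vectors, each satisfying a constraint and avoiding
the span of the previously chosen ones. -/
theorem myRec {T : Type u} [LinearOrder T] [WellFoundedLT T] (C : T → Set X)
    (h : ∀ i : T, ∀ P : Set X, #P ≤ #(Set.Iio i) → ∃ y, y ∈ C i ∧ y ∉ Submodule.span 𝕜 P) :
    ∃ f : T → X, ∀ i, f i ∈ C i ∧ f i ∉ Submodule.span 𝕜 (f '' Set.Iio i) := by
  let F : ∀ i : T, (∀ j : T, j < i → X) → X := fun i prev =>
    (h i (Set.range fun j : Set.Iio i => prev j j.2) (Cardinal.mk_range_le)).choose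
  refine ⟨WellFoundedLT.fix F, fun i => ?_⟩
  have heq := WellFoundedLT.fix_eq F i
  have hspec := (h i (Set.range fun j : Set.Iio i => WellFoundedLT.fix F j)
    (Cardinal.mk_range_le)).choose_spec
  rw [show (WellFoundedLT.fix F '' Set.Iio i)
      = Set.range fun j : Set.Iio i => WellFoundedLT.fix F j from Set.image_eq_range _ _]
  rw [heq]
  exact hspec

/-- The key step: given a dense subspace of rank `≥ α`, a nonempty open set `U` and a set `P` of
fewer than `α` vectors, there is a vector of `Y` in `U` outside the span of `P`. -/
theorem myStep [IsTopologicalAddGroup X] [ContinuousSMul 𝕜 X] {Y : Submodule 𝕜 X}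
    (hYd : Dense (Y : Set X)) {α : Cardinal.{u}} (hα : Cardinal.aleph0 ≤ α)
    (hYr : α ≤ Module.rank 𝕜 Y) {U : Set X} (hU : IsOpen U) (hUne : U.Nonempty)
    {P : Set X} (hP : #P < α) :
    ∃ y, y ∈ (Y : Set X) ∧ y ∈ U ∧ y ∉ Submodule.span 𝕜 P := by
  obtain ⟨d, hdY, hdU⟩ := hYd.exists_mem_open hU hUne
  set W := Submodule.span 𝕜 (insert d P) with hW
  have hWrank : Module.rank 𝕜 W < α := by
    have h1 : Module.rank 𝕜 W ≤ #(insert d P : Set X) := rank_span_le (R := 𝕜) _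
    have h2 : #(insert d P : Set X) ≤ #P + 1 := Cardinal.mk_insert_le
    exact lt_of_le_of_lt (h1.trans h2)
      (Cardinal.add_lt_of_lt hα hP (lt_of_lt_of_le Cardinal.one_lt_aleph0 hα))
  have hex : ∃ e ∈ (Y : Set X), e ∉ W := by
    by_contra hcon
    push_neg at hcon
    have hle : Y ≤ W := fun x hx => hcon x hx
    exact absurd (hYr.trans (Submodule.rank_mono hle)) (not_le.mpr hWrank)
  obtain ⟨e, heY, heW⟩ := hex
  have hcont : Continuous fun t : 𝕜 => d + t • e :=
    continuous_const.add (continuous_id.smul continuous_const)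
  have h0 : (fun t : 𝕜 => d + t • e) 0 ∈ U := by simpa using hdU
  have hnb : (fun t : 𝕜 => d + t • e) ⁻¹' U ∈ nhds (0 : 𝕜) :=
    hcont.continuousAt.preimage_mem_nhds (hU.mem_nhds h0)
  have hpn : (((fun t : 𝕜 => d + t • e) ⁻¹' U) ∩ {(0 : 𝕜)}ᶜ).Nonempty := by
    haveI : (nhdsWithin (0 : 𝕜) {(0 : 𝕜)}ᶜ).NeBot := by
      exact NormedField.nhdsNE_neBot 0
    exact Filter.nonempty_of_mem
      (Filter.inter_mem (mem_nhdsWithin_of_mem_nhds hnb) self_mem_nhdsWithin)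
  obtain ⟨t, htU, htne⟩ := hpn
  have htne' : t ≠ 0 := htne
  refine ⟨d + t • e, Y.add_mem hdY (Y.smul_mem t heY), htU, fun hy => ?_⟩
  have hdW : d ∈ W := Submodule.subset_span (Set.mem_insert d P)
  have hyW : d + t • e ∈ W := Submodule.span_mono (Set.subset_insert d P) hy
  have hteW : t • e ∈ W := by
    have := W.sub_mem hyW hdW
    simpa using this
  apply heW
  have := W.smul_mem t⁻¹ hteW
  rwa [smul_smul, inv_mul_cancel₀ htne', one_smul] at this

/-- Let `X` be a topological vector space over `𝕜` (`𝕜 = ℝ` or `ℂ`), `M ⊆ X`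
and `α` an infinite cardinal with `w(X) ≤ α`.  Then `M` is `α`-dense-lineable iff `M` is
`α`-infinitely `α`-dense-lineable. -/
theorem stmt5 [IsTopologicalAddGroup X] [ContinuousSMul 𝕜 X] (M : Set X) (α : Cardinal.{u})
    (hα : Cardinal.aleph0 ≤ α) (hw : tsWeight X ≤ α) :
    DenseLineable 𝕜 M α ↔ InfDenseLineable 𝕜 M α α := by
  constructor
  · rintro ⟨Y, hYd, hYr, hYM⟩
    classical
    -- get a topological basis of cardinality ≤ α
    have hSne : { c : Cardinal.{u} | ∃ B : Set (Set X),
        TopologicalSpace.IsTopologicalBasis B ∧ #↥B = c }.Nonempty :=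
      ⟨_, ⟨{ S | IsOpen S }, TopologicalSpace.isTopologicalBasis_opens, rfl⟩⟩
    obtain ⟨B, hB, hBcard⟩ := csInf_mem hSne
    have hBα : #↥B ≤ α := hBcard.trans_le hw
    -- the index type
    set T := (Cardinal.ord α).ToType with hT
    have hTcard : #T = α := by rw [Cardinal.mk_toType, Cardinal.card_ord]
    have hTT : #(T × T) = #T := by
      rw [Cardinal.mk_prod, Cardinal.lift_id, hTcard, Cardinal.mul_eq_self hα]
    obtain ⟨e'⟩ := Cardinal.eq.mp hTT
    set e : T ≃ T × T := e'.symm with he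
    -- a map covering the nonempty basic open sets
    have hOB : #(Option ↥B) ≤ #T := by
      rw [Cardinal.mk_option, hTcard]
      have h1le : (1 : Cardinal.{u}) ≤ α := (le_of_lt Cardinal.one_lt_aleph0).trans hα
      exact (add_le_add hBα h1le).trans (Cardinal.add_eq_self hα).le
    obtain ⟨g⟩ := Cardinal.le_def _ _ |>.mp hOB
    haveI : Nonempty (Option ↥B) := ⟨none⟩
    set s : T → Option ↥B := Function.invFun g with hs
    have hsg : ∀ b, s (g b) = b := Function.leftInverse_invFun g.injective
    set U : T → Set X := fun j =>
      Option.elim (s j) Set.univ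
        (fun V => if (V : Set X).Nonempty then (V : Set X) else Set.univ) with hU
    have hUprop : ∀ j, IsOpen (U j) ∧ (U j).Nonempty := by
      intro j
      rcases hsj : s j with _ | V
      · simp only [hU, hsj, Option.elim]
        exact ⟨isOpen_univ, ⟨0, trivial⟩⟩
      · simp only [hU, hsj, Option.elim]
        by_cases hVne : (V : Set X).Nonempty
        · rw [if_pos hVne]
          exact ⟨hB.isOpen V.2, hVne⟩
        · rw [if_neg hVne]
          exact ⟨isOpen_univ, ⟨0, trivial⟩⟩
    have hUsurj : ∀ V ∈ B, V.Nonempty → ∃ j, U j = V := by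
      intro V hV hVne
      refine ⟨g (some ⟨V, hV⟩), ?_⟩
      simp [hU, hsg, hVne]
    -- the constraints and the recursion
    set C : T → Set X := fun i => (Y : Set X) ∩ U (e i).2 with hC
    have hkey : ∀ i : T, ∀ P : Set X, #P ≤ #(Set.Iio i) →
        ∃ y, y ∈ C i ∧ y ∉ Submodule.span 𝕜 P := by
      intro i P hP
      have hP' : #P < α := lt_of_le_of_lt hP (Cardinal.mk_Iio_ord_toType i)
      obtain ⟨y, hy1, hy2, hy3⟩ := myStep 𝕜 hYd hα hYr.ge (hUprop (e i).2).1
        (hUprop (e i).2).2 hP'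
      exact ⟨y, ⟨hy1, hy2⟩, hy3⟩
    obtain ⟨f, hf⟩ := myRec 𝕜 C hkey
    have hli : LinearIndependent 𝕜 f := myLI 𝕜 (fun i => (hf i).2)
    -- the family of subspaces
    set Z : T → Submodule 𝕜 X := fun κ => Submodule.span 𝕜 (f '' { i | (e i).1 = κ }) with hZ
    refine ⟨T, Z, hTcard, fun κ => ⟨?_, ?_, ?_⟩, ?_⟩
    · -- dense
      rw [dense_iff_inter_open]
      intro O hO hOne
      obtain ⟨x, hxO⟩ := hOne
      obtain ⟨V, hVB, hxV, hVO⟩ := hB.exists_subset_of_mem_open hxO hO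
      obtain ⟨j, hj⟩ := hUsurj V hVB ⟨x, hxV⟩
      set i := e.symm (κ, j) with hi
      have h1 : (e i).1 = κ := by simp [hi]
      have h2 : (e i).2 = j := by simp [hi]
      refine ⟨f i, ?_, Submodule.subset_span ⟨i, h1, rfl⟩⟩
      have := (hf i).1.2
      rw [h2, hj] at this
      exact hVO this
    · -- rank
      set S : Set T := { i | (e i).1 = κ } with hSdef
      have hliS : LinearIndependent 𝕜 (fun i : S => f i) :=
        hli.comp (Subtype.val : S → T) Subtype.val_injective
      have hr : Module.rank 𝕜 (Z κ) = #(Set.range fun i : S => f i) := by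
        rw [hZ]
        simp only
        exact (congrArg (fun W : Set X => Module.rank 𝕜 (Submodule.span 𝕜 W))
          (show f '' S = Set.range fun i : S => f i from Set.image_eq_range _ _)).trans
          (rank_span hliS)
      rw [hr, Cardinal.mk_range_eq _ hliS.injective]
      refine Cardinal.mk_congr ?_ |>.trans hTcard
      exact ⟨fun i => (e i.1).2, fun t => ⟨e.symm (κ, t), by simp [hSdef]⟩,
        fun i => by
          apply Subtype.ext
          have : e i.1 = (κ, (e i.1).2) := by
            have h1 : (e i.1).1 = κ := i.2
            exact Prod.ext h1 rfl
          simp only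
          rw [← this, Equiv.symm_apply_apply],
        fun t => by simp⟩
    · -- contained in M ∪ {0}
      have hZY : (Z κ : Set X) ⊆ (Y : Set X) := by
        rw [hZ]
        refine Submodule.span_le.mpr ?_
        rintro y ⟨i, -, rfl⟩
        exact (hf i).1.1
      exact hZY.trans hYM
    · -- pairwise trivial intersections
      intro κ₁ κ₂ hne
      rw [← disjoint_iff]
      refine hli.disjoint_span_image ?_
      rw [Set.disjoint_left]
      intro i h1 h2
      exact hne ((h1 : (e i).1 = κ₁) ▸ (h2 : (e i).1 = κ₂) ▸ rfl)
  · rintro ⟨ι, Yf, hcard, hprop, -⟩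
    haveI : Nonempty ι := by
      rw [← Cardinal.mk_ne_zero_iff]
      rw [hcard]
      exact ne_of_gt (lt_of_lt_of_le Cardinal.aleph0_pos hα)
    obtain ⟨i⟩ := ‹Nonempty ι›
    exact ⟨Yf i, (hprop i).1, (hprop i).2.1, (hprop i).2.2⟩
end

section
/- Let X be a topological vector space over K (K = ℝ or ℂ), M a subset of X, and α a cardinal with α ≥ ℵ₀ and w(X) ≤ α. Then M is pointwise α-dense-lineable if, and only if, M is α-infinitely pointwise α-dense-lineable. -/
universe u

open Cardinal

open Set

variable (𝕜 : Type) [RCLike 𝕜] {X : Type u} [AddCommGroup X] [Module 𝕜 X] [TopologicalSpace X]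

/-- `M` is pointwise `α`-dense-lineable: for each `x ∈ M` there is a dense linear subspace `Y`
of `X` with `dim Y = α` and `x ∈ Y ⊆ M ∪ {0}`. -/
def PointwiseDenseLineable (M : Set X) (α : Cardinal.{u}) : Prop :=
  ∀ x ∈ M, ∃ Y : Submodule 𝕜 X, x ∈ Y ∧ Dense (Y : Set X) ∧ Module.rank 𝕜 Y = α ∧
    (Y : Set X) ⊆ M ∪ {0}

/-- `M` is `α`-infinitely pointwise `β`-dense-lineable: for each `x ∈ M` there is a family
`{Y_κ}_{κ<α}` of `β`-dimensional dense linear subspaces with `x ∈ Y_κ ⊆ M ∪ {0}` and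
`Y_{κ₁} ∩ Y_{κ₂} = span {x}` whenever `κ₁ ≠ κ₂`. -/
def InfPointwiseDenseLineable (M : Set X) (α β : Cardinal.{u}) : Prop :=
  ∀ x ∈ M, ∃ (ι : Type u) (Y : ι → Submodule 𝕜 X), #ι = α ∧
    (∀ i, x ∈ Y i ∧ Dense (Y i : Set X) ∧ Module.rank 𝕜 (Y i) = β ∧ (Y i : Set X) ⊆ M ∪ {0}) ∧
    ∀ i j, i ≠ j → Y i ⊓ Y j = Submodule.span 𝕜 {x}

lemma auxComplLe {ι : Type u} (hι : ℵ₀ ≤ #ι) {s : Set ι} (hs : #s < #ι) :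
    Cardinal.mk ι ≤ #(sᶜ : Set ι) := by
  by_contra h
  push_neg at h
  exact absurd ((Cardinal.mk_sum_compl s) ▸ Cardinal.add_lt_of_lt hι hs h) (lt_irrefl _)

lemma auxIicLt (α : Cardinal.{u}) (hα : ℵ₀ ≤ α) (i : α.ord.ToType) : #(Set.Iic i) < α := by
  have h1 : #(Set.Iio i) < α := Cardinal.mk_Iio_ord_toType i
  have h2 : Set.Iic i = insert i (Set.Iio i) := by
    ext y; simp [le_iff_lt_or_eq, or_comm, eq_comm]
  rw [h2]
  exact (Cardinal.mk_insert_le).trans_lt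
    (Cardinal.add_lt_of_lt hα h1 (one_lt_aleph0.trans_le hα))

/-- Let `X` be a topological vector space over `𝕜` (`𝕜 = ℝ` or `ℂ`), `M ⊆ X`
and `α ≥ ℵ₀` a cardinal with `w(X) ≤ α`.  Then `M` is pointwise `α`-dense-lineable iff `M` is
`α`-infinitely pointwise `α`-dense-lineable. -/
theorem stmt6 [IsTopologicalAddGroup X] [ContinuousSMul 𝕜 X] (M : Set X) (α : Cardinal.{u})
    (hα : Cardinal.aleph0 ≤ α) (hw : tsWeight X ≤ α) :
    PointwiseDenseLineable 𝕜 M α ↔ InfPointwiseDenseLineable 𝕜 M α α := by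
  constructor
  · intro hM x hx
    classical
    obtain ⟨Y, hxY, hYdense, hYrank, hYsub⟩ := hM x hx
    set ι := α.ord.ToType with hιdef
    have hmkι : #ι = α := by rw [Cardinal.mk_toType, Cardinal.card_ord]
    have hιinf : ℵ₀ ≤ #ι := hmkι ▸ hα
    -- a topological basis of minimal cardinality
    have hmem : tsWeight X ∈ { c : Cardinal.{u} | ∃ B : Set (Set X),
        TopologicalSpace.IsTopologicalBasis B ∧ #↥B = c } :=
      csInf_mem ⟨_, ⟨{ U : Set X | IsOpen U },
        TopologicalSpace.isTopologicalBasis_opens, rfl⟩⟩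
    obtain ⟨B, hBbasis, hBcard⟩ := hmem
    set B' : Set (Set X) := {U | U ∈ B ∧ U.Nonempty} with hB'def
    have hB'card : #↥B' ≤ #ι := by
      rw [hmkι]
      exact le_trans (Cardinal.mk_le_mk_of_subset fun U hU => hU.1) (hBcard ▸ hw)
    have hB'ne : Nonempty ↥B' := by
      obtain ⟨V, hVB, h0V, -⟩ :=
        hBbasis.exists_subset_of_mem_open (Set.mem_univ (0 : X)) isOpen_univ
      exact ⟨⟨V, hVB, ⟨0, h0V⟩⟩⟩
    obtain ⟨femb⟩ := (Cardinal.le_def _ _).mp hB'card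
    set g₀ : ι → ↥B' := Function.invFun femb with hg₀def
    have hg₀ : Function.Surjective g₀ := Function.invFun_surjective femb.injective
    set U : ι → Set X := fun i => ↑(g₀ i) with hUdef
    have hUB : ∀ i, U i ∈ B := fun i => (g₀ i).2.1
    have hUopen : ∀ i, IsOpen (U i) := fun i => hBbasis.isOpen (hUB i)
    have hUne : ∀ i, (U i).Nonempty := fun i => (g₀ i).2.2
    have hd : ∀ i, ∃ z, z ∈ (Y : Set X) ∧ z ∈ U i := fun i =>
      hYdense.exists_mem_open (hUopen i) (hUne i)
    choose d hdY hdU using hd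
    -- a basis of Y
    set bY := Module.Basis.ofVectorSpace 𝕜 ↥Y with hbYdef
    set J := Module.Basis.ofVectorSpaceIndex 𝕜 ↥Y with hJdef
    have hJcard : #↥J = α := by rw [bY.mk_eq_rank'', hYrank]
    set x' : ↥Y := ⟨x, hxY⟩ with hx'def
    set d' : ι → ↥Y := fun i => ⟨d i, hdY i⟩ with hd'def
    -- forbidden supports
    set S : ι → Set ↥J := fun i =>
      ↑(bY.repr x').support ∪ ⋃ μ ∈ Set.Iic i, ↑(bY.repr (d' μ)).support with hSdef
    have hxS : ∀ i : ι, ↑(bY.repr x').support ⊆ S i := fun i => Set.subset_union_left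
    have hdS : ∀ i μ : ι, μ ≤ i → ↑(bY.repr (d' μ)).support ⊆ S i := by
      intro i μ hμ j hj
      exact Set.mem_union_right _ (Set.mem_biUnion hμ hj)
    have hScard : ∀ i, #(S i) < α := by
      intro i
      have hIic : #(Set.Iic i) < α := auxIicLt α hα i
      rcases eq_or_lt_of_le hα with heq | hlt
      · have hIicfin : (Set.Iic i).Finite :=
          Cardinal.lt_aleph0_iff_set_finite.mp (hIic.trans_le heq.ge)
        have hfin : (S i).Finite :=
          ((bY.repr x').support.finite_toSet).union
            (hIicfin.biUnion fun μ _ => (bY.repr (d' μ)).support.finite_toSet)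
        exact lt_of_lt_of_le hfin.lt_aleph0 heq.le
      · refine lt_of_le_of_lt (Cardinal.mk_union_le _ _) (Cardinal.add_lt_of_lt hα ?_ ?_)
        · exact lt_trans ((bY.repr x').support.finite_toSet.lt_aleph0) hlt
        · refine lt_of_le_of_lt (Cardinal.mk_biUnion_le _ _) ?_
          haveI : Nonempty (Set.Iic i) := ⟨⟨i, le_refl i⟩⟩
          have h1 : ⨆ μ : Set.Iic i, #(↑(bY.repr (d' ↑μ)).support : Set ↥J) ≤ ℵ₀ :=
            ciSup_le' fun μ => ((bY.repr (d' ↑μ)).support.finite_toSet.lt_aleph0).le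
          calc #(Set.Iic i) * ⨆ μ : Set.Iic i, #(↑(bY.repr (d' ↑μ)).support : Set ↥J)
              ≤ #(Set.Iic i) * ℵ₀ := mul_le_mul_right h1 _
            _ ≤ max (max (#(Set.Iic i)) ℵ₀) ℵ₀ := Cardinal.mul_le_max _ _
            _ < α := max_lt (max_lt hIic hlt) hlt
    -- the fresh basis vectors
    obtain ⟨E⟩ : Nonempty (ι × ι ≃ ↥J) := by
      apply Cardinal.eq.mp
      rw [Cardinal.mk_prod, Cardinal.lift_id, hmkι,
        Cardinal.mul_eq_self hα, hJcard]
    have hbad : ∀ i : ι, #ι ≤ #({k : ι | (E (i, k) : ↥J) ∈ S i}ᶜ : Set ι) := by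
      intro i
      apply auxComplLe hιinf
      rw [hmkι]
      refine lt_of_le_of_lt ?_ (hScard i)
      exact Cardinal.mk_le_of_injective
        (f := fun k : {k : ι | (E (i, k) : ↥J) ∈ S i} => (⟨E (i, ↑k), k.2⟩ : S i))
        (by intro a b hab
            have h2 : E (i, ↑a) = E (i, ↑b) := congrArg Subtype.val hab
            exact Subtype.ext (Prod.ext_iff.mp (E.injective h2)).2)
    have ψ : ∀ i : ι, ι ↪ ({k : ι | (E (i, k) : ↥J) ∈ S i}ᶜ : Set ι) := fun i =>
      Classical.choice ((Cardinal.le_def _ _).mp (hbad i))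
    set Φ : ι → ι → ↥J := fun κ i => E (i, ↑(ψ i κ)) with hΦdef
    have hΦS : ∀ κ i, Φ κ i ∉ S i := fun κ i => (ψ i κ).2
    have hΦinj : ∀ {κ i κ' i' : ι}, Φ κ i = Φ κ' i' → κ = κ' ∧ i = i' := by
      intro κ i κ' i' h
      have h2 := E.injective h
      obtain ⟨hi, hk⟩ := Prod.ext_iff.mp h2
      subst hi
      exact ⟨(ψ i).injective (Subtype.ext hk), rfl⟩
    -- choice of scalars
    have hT : ∀ κ i : ι, ∃ s : 𝕜, s ≠ 0 ∧ d i + s • (bY (Φ κ i) : X) ∈ U i := by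
      intro κ i
      have hcont : Continuous fun s : 𝕜 => d i + s • (bY (Φ κ i) : X) :=
        continuous_const.add (continuous_id.smul continuous_const)
      have hpre : (fun s : 𝕜 => d i + s • (bY (Φ κ i) : X)) ⁻¹' (U i) ∈ nhds (0 : 𝕜) := by
        apply IsOpen.mem_nhds ((hUopen i).preimage hcont)
        simpa using hdU i
      haveI : (nhdsWithin (0 : 𝕜) {(0 : 𝕜)}ᶜ).NeBot := NormedField.nhdsNE_neBot (0 : 𝕜)
      have hne : ((fun s : 𝕜 => d i + s • (bY (Φ κ i) : X)) ⁻¹' (U i) ∩ {(0 : 𝕜)}ᶜ).Nonempty :=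
        Filter.nonempty_of_mem
          (Filter.inter_mem (mem_nhdsWithin_of_mem_nhds hpre) self_mem_nhdsWithin)
      obtain ⟨s, hs1, hs2⟩ := hne
      exact ⟨s, hs2, hs1⟩
    choose t ht0 htU using hT
    set w : ι → ι → ↥Y := fun κ i => d' i + t κ i • bY (Φ κ i) with hwdef
    have hwX : ∀ κ i, (w κ i : X) = d i + t κ i • (bY (Φ κ i) : X) := fun κ i => rfl
    have hwU : ∀ κ i, (w κ i : X) ∈ U i := fun κ i => (hwX κ i) ▸ htU κ i
    -- the key linear independence computation
    have core : ∀ (c : 𝕜) (f : ι × ι →₀ 𝕜),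
        c • x' + (f.sum fun p a => a • w p.1 p.2) = 0 → f = 0 := by
      intro c f hf
      by_contra hne
      have hsupp : f.support.Nonempty := Finsupp.support_nonempty_iff.mpr hne
      have hΛ : (f.support.image Prod.snd).Nonempty := hsupp.image _
      obtain ⟨p₀, hp₀mem, hp₀⟩ :=
        Finset.mem_image.mp ((f.support.image Prod.snd).max'_mem hΛ)
      have hΦS₀ : Φ p₀.1 p₀.2 ∉ S ((f.support.image Prod.snd).max' hΛ) := by
        rw [← hp₀]; exact hΦS p₀.1 p₀.2
      have hx0 : bY.repr x' (Φ p₀.1 p₀.2) = 0 := by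
        apply Finsupp.notMem_support_iff.mp
        intro h
        exact hΦS₀ (hxS _ h)
      have hrepr : ∀ p : ι × ι, p ∈ f.support →
          bY.repr (w p.1 p.2) (Φ p₀.1 p₀.2) = if p = p₀ then t p₀.1 p₀.2 else 0 := by
        intro p hp
        have hple : p.2 ≤ (f.support.image Prod.snd).max' hΛ :=
          Finset.le_max' _ _ (Finset.mem_image_of_mem _ hp)
        have hd0 : bY.repr (d' p.2) (Φ p₀.1 p₀.2) = 0 := by
          apply Finsupp.notMem_support_iff.mp
          intro h
          exact hΦS₀ (hdS _ _ hple h)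
        have hwp : w p.1 p.2 = d' p.2 + t p.1 p.2 • bY (Φ p.1 p.2) := rfl
        rw [hwp, map_add, map_smul, Finsupp.add_apply, Finsupp.smul_apply, hd0,
          Module.Basis.repr_self, zero_add, smul_eq_mul, Finsupp.single_apply]
        by_cases hpp : p = p₀
        · subst hpp; rw [if_pos rfl, if_pos rfl, mul_one]
        · rw [if_neg, if_neg hpp, mul_zero]
          intro heq
          exact hpp (Prod.ext (hΦinj heq).1 (hΦinj heq).2)
      have h0 := congrArg (fun v : ↥Y => bY.repr v (Φ p₀.1 p₀.2)) hf
      simp only [map_add, map_smul, map_finsuppSum, Finsupp.add_apply, Finsupp.smul_apply,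
        Finsupp.sum_apply, map_zero, Finsupp.zero_apply, smul_eq_mul] at h0
      rw [hx0, mul_zero, zero_add] at h0
      have hsum : (f.sum fun p a => a * bY.repr (w p.1 p.2) (Φ p₀.1 p₀.2))
          = f p₀ * t p₀.1 p₀.2 := by
        rw [Finsupp.sum_eq_single p₀ (fun p hp hpne => by
          rw [hrepr p (Finsupp.mem_support_iff.mpr hp), if_neg hpne, mul_zero])
          (fun _ => zero_mul _), hrepr p₀ hp₀mem, if_pos rfl]
      rw [hsum] at h0
      exact (Finsupp.mem_support_iff.mp hp₀mem)
        ((mul_eq_zero.mp h0).resolve_right (ht0 p₀.1 p₀.2))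
    have coreX : ∀ (c : 𝕜) (f : ι × ι →₀ 𝕜),
        c • x + (f.sum fun p a => a • (w p.1 p.2 : X)) = 0 → f = 0 := by
      intro c f hf
      apply core c f
      have hz : ((c • x' + f.sum fun p a => a • w p.1 p.2 : ↥Y) : X)
          = c • x + f.sum fun p a => a • (w p.1 p.2 : X) := by
        simp only [Submodule.coe_add, SetLike.val_smul, Finsupp.sum,
          AddSubmonoidClass.coe_finset_sum]
        rfl
      exact Subtype.val_injective (by rw [hz]; simpa using hf)
    -- the subspaces
    set G : ι → Option ι → X := fun κ o => o.elim x (fun i => ↑(w κ i)) with hGdef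
    set Yk : ι → Submodule 𝕜 X := fun κ => Submodule.span 𝕜 (Set.range (G κ)) with hYkdef
    have hxmem : ∀ κ, x ∈ Yk κ := fun κ => Submodule.subset_span ⟨none, rfl⟩
    have hwmem : ∀ κ i, (w κ i : X) ∈ Yk κ := fun κ i => Submodule.subset_span ⟨some i, rfl⟩
    have hsub : ∀ κ, (Yk κ : Set X) ⊆ M ∪ {0} := by
      intro κ
      refine subset_trans ?_ hYsub
      have : Yk κ ≤ Y := by
        rw [hYkdef]
        apply Submodule.span_le.mpr
        rintro z ⟨o, rfl⟩
        cases o with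
        | none => exact hxY
        | some i => exact (w κ i).2
      exact this
    have hdense : ∀ κ, Dense (Yk κ : Set X) := by
      intro κ
      rw [dense_iff_inter_open]
      intro V hV hVne
      obtain ⟨v, hv⟩ := hVne
      obtain ⟨W, hWB, hvW, hWV⟩ := hBbasis.exists_subset_of_mem_open hv hV
      obtain ⟨i, hi⟩ := hg₀ ⟨W, hWB, ⟨v, hvW⟩⟩
      have hUiW : U i = W := congrArg Subtype.val hi
      exact ⟨(w κ i : X), hWV (hUiW ▸ hwU κ i), hwmem κ i⟩
    have hindY : ∀ κ, LinearIndependent 𝕜 fun i => w κ i := by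
      intro κ
      rw [linearIndependent_iff]
      intro l hl
      have hinj : Function.Injective fun i : ι => (κ, i) := fun a b h => (Prod.ext_iff.mp h).2
      have h := core 0 (Finsupp.embDomain ⟨fun i : ι => (κ, i), hinj⟩ l) ?_
      · exact Finsupp.embDomain_eq_zero.mp h
      · rw [zero_smul, zero_add, Finsupp.sum_embDomain]
        simpa [Finsupp.linearCombination_apply] using hl
    have hrank : ∀ κ, Module.rank 𝕜 ↥(Yk κ) = α := by
      intro κ
      apply le_antisymm
      · refine (rank_span_le _).trans ?_
        refine (Cardinal.mk_range_le).trans ?_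
        rw [Cardinal.mk_option, hmkι, Cardinal.add_one_eq hα]
      · rw [← hmkι]
        have hli : LinearIndependent 𝕜
            fun i : ι => (⟨(w κ i : X), hwmem κ i⟩ : ↥(Yk κ)) := by
          apply LinearIndependent.of_comp (Yk κ).subtype
          exact (hindY κ).map' Y.subtype (Submodule.ker_subtype Y)
        exact hli.cardinal_le_rank
    have hint : ∀ κ κ' : ι, κ ≠ κ' → Yk κ ⊓ Yk κ' = Submodule.span 𝕜 {x} := by
      intro κ κ' hκκ'
      apply le_antisymm
      · intro y hy
        obtain ⟨hy1, hy2⟩ := Submodule.mem_inf.mp hy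
        have hy1' : y ∈ Submodule.span 𝕜 (Set.range (G κ)) := hy1
        have hy2' : y ∈ Submodule.span 𝕜 (Set.range (G κ')) := hy2
        obtain ⟨c₁, hc₁⟩ := Finsupp.mem_span_range_iff_exists_finsupp.mp hy1'
        obtain ⟨c₂, hc₂⟩ := Finsupp.mem_span_range_iff_exists_finsupp.mp hy2'
        rw [Finsupp.sum_option_index_smul] at hc₁ hc₂
        have hG1 : G κ none = x := rfl
        have hG2 : G κ' none = x := rfl
        rw [hG1] at hc₁
        rw [hG2] at hc₂
        have hA : (c₁.some.sum fun i a => a • G κ (some i))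
            = c₁.some.sum fun i a => a • (w κ i : X) := rfl
        have hB : (c₂.some.sum fun i a => a • G κ' (some i))
            = c₂.some.sum fun i a => a • (w κ' i : X) := rfl
        rw [hA] at hc₁
        rw [hB] at hc₂
        set e₁ : ι ↪ ι × ι := ⟨fun i => (κ, i), fun a b h => (Prod.ext_iff.mp h).2⟩ with he₁
        set e₂ : ι ↪ ι × ι := ⟨fun i => (κ', i), fun a b h => (Prod.ext_iff.mp h).2⟩ with he₂
        have hf := coreX (c₁ none - c₂ none)
          (Finsupp.embDomain e₁ c₁.some - Finsupp.embDomain e₂ c₂.some) ?_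
        · have he : Finsupp.embDomain e₁ c₁.some = Finsupp.embDomain e₂ c₂.some :=
            sub_eq_zero.mp hf
          have hc₁some : c₁.some = 0 := by
            ext i
            have h1 : Finsupp.embDomain e₁ c₁.some (κ, i) = c₁.some i :=
              Finsupp.embDomain_apply_self e₁ c₁.some i
            rw [Finsupp.zero_apply, ← h1, he]
            apply Finsupp.embDomain_notin_range
            rintro ⟨j, hj⟩
            exact hκκ' ((Prod.ext_iff.mp hj).1).symm
          rw [hc₁some, Finsupp.sum_zero_index, add_zero] at hc₁
          exact Submodule.mem_span_singleton.mpr ⟨c₁ none, hc₁⟩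
        · rw [Finsupp.sum_sub_index (fun p b₁ b₂ => sub_smul b₁ b₂ _),
            Finsupp.sum_embDomain, Finsupp.sum_embDomain, sub_smul]
          calc (c₁ none • x - c₂ none • x) +
                ((c₁.some.sum fun i a => a • (w κ i : X))
                  - (c₂.some.sum fun i a => a • (w κ' i : X)))
              = (c₁ none • x + c₁.some.sum fun i a => a • (w κ i : X))
                - (c₂ none • x + c₂.some.sum fun i a => a • (w κ' i : X)) := by abel
            _ = y - y := by rw [hc₁, hc₂]
            _ = 0 := sub_self y
      · rw [Submodule.span_le, Set.singleton_subset_iff]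
        exact Submodule.mem_inf.mpr ⟨hxmem κ, hxmem κ'⟩
    exact ⟨ι, Yk, hmkι, fun κ => ⟨hxmem κ, hdense κ, hrank κ, hsub κ⟩, hint⟩
  · intro h x hx
    obtain ⟨ι, Ys, hcard, hprops, -⟩ := h x hx
    haveI : Nonempty ι := Cardinal.mk_ne_zero_iff.mp
      (by rw [hcard]; exact (aleph0_pos.trans_le hα).ne')
    obtain ⟨h1, h2, h3, h4⟩ := hprops (Classical.arbitrary ι)
    exact ⟨Ys (Classical.arbitrary ι), h1, h2, h3, h4⟩
end

section
/- Let X be a topological vector space over K (K = ℝ or ℂ), M a subset of X, and α, γ cardinals with α ≥ ℵ₀, α > γ and w(X) ≤ α. Then M is (γ,α)-dense-lineable if, and only if, M is α-infinitely (γ,α)-dense-lineable. -/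
universe u

open Cardinal

variable (𝕜 : Type) [RCLike 𝕜] {X : Type u} [AddCommGroup X] [Module 𝕜 X] [TopologicalSpace X]

/-- Linear independence of a family indexed by a linearly ordered type, given that no member
is in the span of the earlier ones. -/
theorem aux_li_of_wellOrdered {F V T : Type*} [Field F] [AddCommGroup V] [Module F V]
    [LinearOrder T] {v : T → V} (h : ∀ t, v t ∉ Submodule.span F (v '' Set.Iio t)) :
    LinearIndependent F v := by
  rw [linearIndependent_iff']
  intro s
  induction s using Finset.strongInductionOn with
  | _ s ih =>
    intro g hg i hi
    have hne : s.Nonempty := ⟨i, hi⟩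
    set m := s.max' hne with hm
    have hmlt : ∀ j ∈ s.erase m, j < m := fun j hj =>
      lt_of_le_of_ne (s.le_max' j (Finset.mem_of_mem_erase hj)) (Finset.ne_of_mem_erase hj)
    have hsum : g m • v m + ∑ j ∈ s.erase m, g j • v j = 0 := by
      rw [Finset.add_sum_erase s (fun j => g j • v j) (show m ∈ s from s.max'_mem hne)]
      exact hg
    have hgm : g m = 0 := by
      by_contra hgm
      apply h m
      have hvm : v m = (g m)⁻¹ • (g m • v m) := by
        rw [smul_smul, inv_mul_cancel₀ hgm, one_smul]
      have hneg : g m • v m = -∑ j ∈ s.erase m, g j • v j :=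
        eq_neg_of_add_eq_zero_left hsum
      rw [hvm, hneg]
      refine Submodule.smul_mem _ _ (Submodule.neg_mem _ (Submodule.sum_mem _ fun j hj => ?_))
      exact Submodule.smul_mem _ _ (Submodule.subset_span ⟨j, hmlt j hj, rfl⟩)
    rcases eq_or_ne i m with rfl | him
    · exact hgm
    · have hg' : ∑ j ∈ s.erase m, g j • v j = 0 := by
        rw [hgm, zero_smul, zero_add] at hsum; exact hsum
      exact ih (s.erase m) (Finset.erase_ssubset (s.max'_mem hne)) g hg' i
        (Finset.mem_erase.mpr ⟨him, hi⟩)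

/-- In a TVS, if an open set meets a submodule `Y` and `O ∩ Y ⊆ S`, then `Y ≤ S`. -/
theorem aux_le_of_open_inter_subset [IsTopologicalAddGroup X] [ContinuousSMul 𝕜 X]
    {Y S : Submodule 𝕜 X} {O : Set X} (hO : IsOpen O)
    (hne : (O ∩ ↑Y).Nonempty) (hsub : O ∩ ↑Y ⊆ ↑S) : Y ≤ S := by
  obtain ⟨y0, hy0O, hy0Y⟩ := hne
  intro y hy
  have hcont : Continuous fun t : 𝕜 => y0 + t • y :=
    continuous_const.add (continuous_id.smul continuous_const)
  have h0 : (fun t : 𝕜 => y0 + t • y) 0 ∈ O := by simpa using hy0O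
  have hnb : (fun t : 𝕜 => y0 + t • y) ⁻¹' O ∈ nhds (0 : 𝕜) :=
    hcont.continuousAt.preimage_mem_nhds (hO.mem_nhds h0)
  obtain ⟨ε, hε, hball⟩ := Metric.mem_nhds_iff.mp hnb
  set t : 𝕜 := ((ε / 2 : ℝ) : 𝕜) with ht
  have htO : y0 + t • y ∈ O := by
    apply hball
    simp only [Metric.mem_ball, dist_zero_right, ht, RCLike.norm_ofReal]
    rw [abs_of_pos (by linarith)]
    linarith
  have htne : t ≠ 0 := by
    rw [ht]
    exact RCLike.ofReal_ne_zero.mpr (ne_of_gt (by linarith))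
  have hS : y0 + t • y ∈ S := hsub ⟨htO, Y.add_mem hy0Y (Y.smul_mem t hy)⟩
  have hy0S : y0 ∈ S := hsub ⟨hy0O, hy0Y⟩
  have hty : t • y ∈ S := by
    have := S.sub_mem hS hy0S
    simpa using this
  exact (S.smul_mem_iff htne).mp hty

theorem aux_exists_notMem [IsTopologicalAddGroup X] [ContinuousSMul 𝕜 X]
    {Y S : Submodule 𝕜 X} {O : Set X} (hO : IsOpen O) (hne : (O ∩ ↑Y).Nonempty)
    (hrank : Module.rank 𝕜 S < Module.rank 𝕜 Y) :
    ∃ x, x ∈ O ∩ ↑Y ∧ x ∉ S := by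
  by_contra h
  push_neg at h
  exact absurd (Submodule.rank_mono (aux_le_of_open_inter_subset 𝕜 hO hne h))
    (not_le.mpr hrank)

/-- Transfinite recursion producing a function with prescribed properties depending on
the image of the earlier values. -/
theorem aux_exists_fun_of_wf {T V : Type u} [LinearOrder T] [WellFoundedLT T]
    (R : T → Set V → V → Prop)
    (H : ∀ (t : T) (s : Set V), #↥s ≤ #↥(Set.Iio t) → ∃ x, R t s x) :
    ∃ v : T → V, ∀ t, R t (v '' Set.Iio t) (v t) := by
  have key : ∀ (t : T) (prev : ∀ s, s < t → V),
      { x // R t (Set.range fun s : Set.Iio t => prev s.1 s.2) x } := fun t prev =>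
    Classical.indefiniteDescription _ (H t _ Cardinal.mk_range_le)
  let v : T → V := IsWellFounded.fix (· < ·) (fun t prev => (key t prev).1)
  refine ⟨v, fun t => ?_⟩
  have hv : v t = (key t (fun s _ => v s)).1 := IsWellFounded.fix_eq _ _ t
  have h2 := (key t (fun s _ => v s)).2
  rw [Set.image_eq_range, hv]
  exact h2

open TopologicalSpace in
/-- The main construction: given a dense subspace `Y` of rank `α` containing `W`, produce
`α` many dense subspaces of rank `α`, contained in `Y`, containing `W`, pairwise meeting in
`W`. -/
theorem aux_main [IsTopologicalAddGroup X] [ContinuousSMul 𝕜 X] {α γ : Cardinal.{u}}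
    (hα : Cardinal.aleph0 ≤ α) (hγ : γ < α) {B : Set (Set X)}
    (hB : IsTopologicalBasis B) (hBc : #↥B ≤ α) {W Y : Submodule 𝕜 X}
    (hW : Module.rank 𝕜 W = γ) (hWY : W ≤ Y) (hYd : Dense (Y : Set X))
    (hYr : Module.rank 𝕜 Y = α) :
    ∃ (ι : Type u) (Yf : ι → Submodule 𝕜 X), #ι = α ∧
      (∀ i, W ≤ Yf i ∧ Dense (Yf i : Set X) ∧ Module.rank 𝕜 (Yf i) = α ∧ Yf i ≤ Y) ∧
      ∀ i j, i ≠ j → Yf i ⊓ Yf j = W := by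
  classical
  set K := Quotient.out α with hKdef
  have hKcard : #K = α := Cardinal.mk_out α
  set J := ({U : Set X // U ∈ B ∧ U.Nonempty} ⊕ K) with hJdef
  have hJ : #J = α := by
    apply le_antisymm
    · rw [hJdef, Cardinal.mk_sum, Cardinal.lift_id, Cardinal.lift_id, hKcard]
      have h1 : #{U : Set X // U ∈ B ∧ U.Nonempty} ≤ #↥B := by
        apply Cardinal.mk_subtype_mono
        exact fun U hU => hU.1
      calc #{U : Set X // U ∈ B ∧ U.Nonempty} + α ≤ α + α := by
            exact add_le_add (h1.trans hBc) le_rfl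
        _ = α := Cardinal.add_eq_self hα
    · rw [← hKcard]
      exact Cardinal.mk_le_of_injective (Sum.inr_injective (α := {U : Set X // U ∈ B ∧ U.Nonempty}))
  set T := (Cardinal.ord α).ToType with hTdef
  have hT : #T = α := by rw [hTdef, Cardinal.mk_toType, Cardinal.card_ord]
  have heq : #T = #(K × J) := by
    rw [hT, Cardinal.mk_prod, Cardinal.lift_id, Cardinal.lift_id, hKcard, hJ,
      Cardinal.mul_eq_self hα]
  obtain ⟨e⟩ := Cardinal.eq.mp heq
  set tgt : T → Set X := fun t => Sum.elim (fun U => U.1) (fun _ => Set.univ) (e t).2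
    with htgtdef
  have htgt_eq : ∀ t, tgt t = Sum.elim (fun U => U.1) (fun _ => Set.univ) (e t).2 :=
    fun t => rfl
  have htgt : ∀ t, IsOpen (tgt t) ∧ (tgt t ∩ ↑Y).Nonempty := by
    intro t
    cases h2 : (e t).2 with
    | inl U =>
      rw [htgt_eq t, h2]
      exact ⟨hB.isOpen U.2.1, hYd.inter_open_nonempty U.1 (hB.isOpen U.2.1) U.2.2⟩
    | inr k =>
      rw [htgt_eq t, h2]
      exact ⟨isOpen_univ, ⟨0, Set.mem_univ 0, Y.zero_mem⟩⟩
  -- the transfinite recursion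
  obtain ⟨v, hv⟩ := aux_exists_fun_of_wf
    (fun t s x => (x ∈ tgt t ∩ ↑Y) ∧ x ∉ Submodule.span 𝕜 (↑W ∪ s)) (by
      intro t s hs
      have hrank : Module.rank 𝕜 (Submodule.span 𝕜 (↑W ∪ s)) < Module.rank 𝕜 Y := by
        rw [hYr, Submodule.span_union, Submodule.span_eq]
        refine lt_of_le_of_lt (Submodule.rank_add_le_rank_add_rank _ _) ?_
        refine Cardinal.add_lt_of_lt hα (by rw [hW]; exact hγ) ?_
        refine lt_of_le_of_lt ((rank_span_le _).trans hs) ?_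
        exact Cardinal.mk_Iio_ord_toType t
      obtain ⟨x, hx1, hx2⟩ := aux_exists_notMem 𝕜 (htgt t).1 (htgt t).2 hrank
      exact ⟨x, hx1, hx2⟩)
  have hvY : ∀ t, v t ∈ Y := fun t => (hv t).1.2
  -- linear independence modulo W
  have hnot : ∀ t, (W.mkQ ∘ v) t ∉ Submodule.span 𝕜 ((W.mkQ ∘ v) '' Set.Iio t) := by
    intro t hmem
    apply (hv t).2
    rw [Set.image_comp, ← Submodule.map_span] at hmem
    obtain ⟨z, hz, hzq⟩ := hmem
    have hWz : v t - z ∈ W := by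
      have h4 : W.mkQ (v t - z) = 0 := by rw [map_sub, hzq]; exact sub_self _
      rwa [Submodule.mkQ_apply, Submodule.Quotient.mk_eq_zero] at h4
    have hrw : v t = (v t - z) + z := by abel
    rw [hrw]
    exact Submodule.add_mem _ (Submodule.subset_span (Or.inl hWz))
      (Submodule.span_mono Set.subset_union_right hz)
  have hli : LinearIndependent 𝕜 (W.mkQ ∘ v) := aux_li_of_wellOrdered hnot
  -- the family
  set Pset : K → Set T := fun κ => {t | (e t).1 = κ} with hPdef
  set Yf : K → Submodule 𝕜 X := fun κ => W ⊔ Submodule.span 𝕜 (v '' Pset κ) with hYfdef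
  have hPdisj : ∀ i j : K, i ≠ j → Disjoint (Pset i) (Pset j) := by
    intro i j hij
    rw [Set.disjoint_left]
    intro t hti htj
    exact hij ((show (e t).1 = i from hti).symm.trans (show (e t).1 = j from htj))
  have hmap : ∀ κ, Submodule.map W.mkQ (Yf κ) =
      Submodule.span 𝕜 ((W.mkQ ∘ v) '' Pset κ) := by
    intro κ
    show Submodule.map W.mkQ (W ⊔ Submodule.span 𝕜 (v '' Pset κ)) = _
    rw [Submodule.map_sup, Submodule.map_span, ← Set.image_comp]
    have hbot : Submodule.map W.mkQ W = ⊥ := by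
      rw [Submodule.eq_bot_iff]
      rintro x ⟨y, hy, rfl⟩
      rw [Submodule.mkQ_apply]
      exact (Submodule.Quotient.mk_eq_zero W).mpr hy
    rw [hbot, bot_sup_eq]
  have hYfY : ∀ κ, Yf κ ≤ Y := by
    intro κ
    show W ⊔ Submodule.span 𝕜 (v '' Pset κ) ≤ Y
    refine sup_le hWY (Submodule.span_le.mpr ?_)
    rintro x ⟨t, _, rfl⟩
    exact hvY t
  have hPcard : ∀ κ, #(Pset κ) = α := by
    intro κ
    rw [← hJ]
    apply Cardinal.mk_congr
    refine ⟨fun t => (e t.1).2, fun j => ⟨e.symm (κ, j), ?_⟩, fun t => ?_, fun j => ?_⟩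
    · show (e (e.symm (κ, j))).1 = κ
      rw [e.apply_symm_apply]
    · apply Subtype.ext
      show e.symm (κ, (e t.1).2) = t.1
      have h2 : (e t.1).1 = κ := t.2
      have h1 : (κ, (e t.1).2) = e t.1 := Prod.ext h2.symm rfl
      rw [h1, e.symm_apply_apply]
    · show (e (e.symm (κ, j))).2 = j
      rw [e.apply_symm_apply]
  refine ⟨K, Yf, hKcard, fun κ => ⟨le_sup_left, ?_, ?_, hYfY κ⟩, ?_⟩
  · -- density
    rw [hB.dense_iff]
    intro U hU hUne
    set t : T := e.symm (κ, Sum.inl ⟨U, hU, hUne⟩) with htdef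
    have het : e t = (κ, Sum.inl ⟨U, hU, hUne⟩) := e.apply_symm_apply _
    have h1 : v t ∈ U := by
      have h3 := (hv t).1.1
      rw [htgt_eq t, het] at h3
      exact h3
    have h2 : v t ∈ W ⊔ Submodule.span 𝕜 (v '' Pset κ) := by
      refine Submodule.mem_sup_right (Submodule.subset_span ⟨t, ?_, rfl⟩)
      show (e t).1 = κ
      rw [het]
    exact ⟨v t, h1, h2⟩
  · -- rank
    apply le_antisymm
    · rw [← hYr]
      exact Submodule.rank_mono (hYfY κ)
    · have hli' : LinearIndependent 𝕜 ((W.mkQ ∘ v) ∘ (Subtype.val : Pset κ → T)) :=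
        hli.comp _ Subtype.val_injective
      have him : Set.range ((W.mkQ ∘ v) ∘ (Subtype.val : Pset κ → T)) =
          (W.mkQ ∘ v) '' Pset κ := by
        rw [Set.range_comp, Subtype.range_coe]
      have hr1 : Module.rank 𝕜 (Submodule.span 𝕜 ((W.mkQ ∘ v) '' Pset κ)) = α := by
        rw [← him, rank_span hli', Cardinal.mk_range_eq _ hli'.injective, hPcard κ]
      calc α = Module.rank 𝕜 (Submodule.map W.mkQ (Yf κ)) := by rw [hmap κ, hr1]
        _ ≤ Module.rank 𝕜 (Yf κ) := rank_map_le _ _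
  · -- pairwise intersections
    intro i j hij
    apply le_antisymm
    · have h1 : Submodule.map W.mkQ (Yf i) ⊓ Submodule.map W.mkQ (Yf j) = ⊥ := by
        rw [hmap i, hmap j]
        exact (hli.disjoint_span_image (hPdisj i j hij)).eq_bot
      calc Yf i ⊓ Yf j
          ≤ Submodule.comap W.mkQ (Submodule.map W.mkQ (Yf i)) ⊓
            Submodule.comap W.mkQ (Submodule.map W.mkQ (Yf j)) :=
            inf_le_inf (Submodule.le_comap_map _ _) (Submodule.le_comap_map _ _)
        _ = Submodule.comap W.mkQ
            (Submodule.map W.mkQ (Yf i) ⊓ Submodule.map W.mkQ (Yf j)) :=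
            (Submodule.comap_inf _ _ _).symm
        _ = W := by rw [h1, Submodule.comap_bot, Submodule.ker_mkQ]
    · exact le_inf le_sup_left le_sup_left

/-- `M` is `(γ,β)`-dense-lineable: `M` is `γ`-lineable and every `γ`-dimensional linear subspace
`W ⊆ M ∪ {0}` is contained in a `β`-dimensional dense linear subspace `Y ⊆ M ∪ {0}`. -/
def GBDenseLineable (M : Set X) (γ β : Cardinal.{u}) : Prop :=
  (∃ W : Submodule 𝕜 X, Module.rank 𝕜 W = γ ∧ (W : Set X) ⊆ M ∪ {0}) ∧
  ∀ W : Submodule 𝕜 X, Module.rank 𝕜 W = γ → (W : Set X) ⊆ M ∪ {0} →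
    ∃ Y : Submodule 𝕜 X, W ≤ Y ∧ Dense (Y : Set X) ∧ Module.rank 𝕜 Y = β ∧
      (Y : Set X) ⊆ M ∪ {0}

/-- `M` is `α`-infinitely `(γ,β)`-dense-lineable: `M` is `γ`-lineable and, for every
`γ`-dimensional linear subspace `W ⊆ M ∪ {0}`, there is a family `{Y_κ}_{κ<α}` of
`β`-dimensional dense linear subspaces with `W ⊆ Y_κ ⊆ M ∪ {0}` and `Y_{κ₁} ∩ Y_{κ₂} = W`
whenever `κ₁ ≠ κ₂`. -/
def InfGBDenseLineable (M : Set X) (α γ β : Cardinal.{u}) : Prop :=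
  (∃ W : Submodule 𝕜 X, Module.rank 𝕜 W = γ ∧ (W : Set X) ⊆ M ∪ {0}) ∧
  ∀ W : Submodule 𝕜 X, Module.rank 𝕜 W = γ → (W : Set X) ⊆ M ∪ {0} →
    ∃ (ι : Type u) (Y : ι → Submodule 𝕜 X), #ι = α ∧
      (∀ i, W ≤ Y i ∧ Dense (Y i : Set X) ∧ Module.rank 𝕜 (Y i) = β ∧
        (Y i : Set X) ⊆ M ∪ {0}) ∧
      ∀ i j, i ≠ j → Y i ⊓ Y j = W

/-- Let `X` be a topological vector space over `𝕜` (`𝕜 = ℝ` or `ℂ`), `M ⊆ X`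
and `α, γ` cardinals with `α ≥ ℵ₀`, `α > γ` and `w(X) ≤ α`.  Then `M` is `(γ,α)`-dense-lineable
iff `M` is `α`-infinitely `(γ,α)`-dense-lineable. -/
theorem stmt7 [IsTopologicalAddGroup X] [ContinuousSMul 𝕜 X] (M : Set X) (α γ : Cardinal.{u})
    (hα : Cardinal.aleph0 ≤ α) (hγ : γ < α) (hw : tsWeight X ≤ α) :
    GBDenseLineable 𝕜 M γ α ↔ InfGBDenseLineable 𝕜 M α γ α := by
  constructor
  · rintro ⟨hex, hmain⟩
    refine ⟨hex, fun W hW hWM => ?_⟩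
    obtain ⟨Y, hWY, hYd, hYr, hYM⟩ := hmain W hW hWM
    obtain ⟨B, hB, hBc⟩ : ∃ B : Set (Set X),
        TopologicalSpace.IsTopologicalBasis B ∧ #↥B ≤ α := by
      have hne : { c : Cardinal.{u} | ∃ B : Set (Set X),
          TopologicalSpace.IsTopologicalBasis B ∧ #↥B = c }.Nonempty :=
        ⟨_, _, TopologicalSpace.isTopologicalBasis_opens, rfl⟩
      obtain ⟨B, hB, hBc⟩ := csInf_mem hne
      exact ⟨B, hB, by rw [hBc]; exact hw⟩
    obtain ⟨ι, Yf, hι, hfam, hint⟩ := aux_main 𝕜 hα hγ hB hBc hW hWY hYd hYr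
    refine ⟨ι, Yf, hι, fun i => ⟨(hfam i).1, (hfam i).2.1, (hfam i).2.2.1,
      fun x hx => hYM ((hfam i).2.2.2 hx)⟩, hint⟩
  · rintro ⟨hex, hmain⟩
    refine ⟨hex, fun W hW hWM => ?_⟩
    obtain ⟨ι, Yf, hι, hfam, -⟩ := hmain W hW hWM
    have hne : Nonempty ι := by
      rw [← Cardinal.mk_ne_zero_iff, hι]
      exact ne_of_gt (lt_of_lt_of_le Cardinal.aleph0_pos hα)
    obtain ⟨i⟩ := hne
    exact ⟨Yf i, (hfam i).1, (hfam i).2.1, (hfam i).2.2.1, (hfam i).2.2.2⟩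
end

section
/- Let V be an ℵ₀-dimensional real vector space with the trivial (indiscrete) topology and X := ℝ^∞ × V with the product topology. Then M := ℝ^∞ × {0} is a dense linear subspace of X, and M is the only dense linear subspace of X contained in M; that is, if Y is a linear subspace of X with Y ⊆ M and Y dense in X, then Y = M. In particular, M is ℵ₀-dense-lineable in X but not ℵ₀-infinitely ℵ₀-dense-lineable. -/
open Cardinal

/-- The submodule of `ℕ → ℝ` consisting of finitely supported sequences. -/
def RinfSubmodule : Submodule ℝ (ℕ → ℝ) where
  carrier := { f | ∃ N : ℕ, ∀ n, N ≤ n → f n = 0 }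
  add_mem' := by
    rintro f g ⟨N, hN⟩ ⟨M, hM⟩
    exact ⟨max N M, fun n hn => by
      simp [hN n (le_trans (le_max_left _ _) hn), hM n (le_trans (le_max_right _ _) hn)]⟩
  zero_mem' := ⟨0, fun n _ => rfl⟩
  smul_mem' := by
    rintro c f ⟨N, hN⟩
    exact ⟨N, fun n hn => by simp [hN n hn]⟩

/-- `ℝ^∞`, the space of finitely supported real sequences, as a type synonym (so that it does
not inherit the subspace topology; it will be equipped with the inductive limit topology). -/
def Rinf : Type := RinfSubmodule

instance : AddCommGroup Rinf := inferInstanceAs (AddCommGroup RinfSubmodule)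
noncomputable instance : Module ℝ Rinf := inferInstanceAs (Module ℝ RinfSubmodule)

/-- The inclusion `u_n : ℝⁿ → ℝ^∞`. -/
def uMap (n : ℕ) (x : Fin n → ℝ) : Rinf :=
  (⟨fun i => if h : i < n then x ⟨i, h⟩ else 0,
    ⟨n, fun _ hm => dif_neg (Nat.not_lt.mpr hm)⟩⟩ : RinfSubmodule)

/-- The inductive limit (final) topology on `ℝ^∞` with respect to the inclusions
`u_n : ℝⁿ → ℝ^∞`, where each `ℝⁿ` carries the Euclidean (product) topology. -/
instance RinfTopology : TopologicalSpace Rinf :=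
  ⨆ n : ℕ, TopologicalSpace.coinduced (uMap n) inferInstance



def Rinf.toFn (x : Rinf) : ℕ → ℝ := (show RinfSubmodule from x).1

theorem Rinf.toFn_injective : Function.Injective Rinf.toFn := fun _ _ h => Subtype.ext h

/-- `uMap n` as a linear map. -/
def uLin (n : ℕ) : (Fin n → ℝ) →ₗ[ℝ] Rinf where
  toFun := uMap n
  map_add' x y := Subtype.ext <| funext fun i => by
    show (if h : i < n then (x + y) ⟨i, h⟩ else 0)
        = (if h : i < n then x ⟨i, h⟩ else 0) + (if h : i < n then y ⟨i, h⟩ else 0)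
    split <;> simp
  map_smul' c x := Subtype.ext <| funext fun i => by
    show (if h : i < n then (c • x) ⟨i, h⟩ else 0) = c * (if h : i < n then x ⟨i, h⟩ else 0)
    split <;> simp

/-- Every linear functional on `Rinf` is continuous. -/
theorem Rinf.continuous_linear (f : Rinf →ₗ[ℝ] ℝ) : Continuous f := by
  rw [show (RinfTopology) = ⨆ n : ℕ, TopologicalSpace.coinduced (uMap n) inferInstance from rfl,
    continuous_iSup_dom]
  intro n
  rw [continuous_coinduced_dom]
  exact (f.comp (uLin n)).continuous_of_finiteDimensional

noncomputable def finsuppToRinf : (ℕ →₀ ℝ) →ₗ[ℝ] Rinf where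
  toFun f := (⟨(f : ℕ → ℝ), ⟨f.support.sup id + 1, fun n hn => by
      by_contra h
      have := Finset.le_sup (f := id) (Finsupp.mem_support_iff.mpr h)
      simp only [id] at this
      omega⟩⟩ : RinfSubmodule)
  map_add' f g := Subtype.ext <| funext fun i => by
    show (f + g) i = f i + g i
    simp
  map_smul' c f := Subtype.ext <| funext fun i => by
    show (c • f) i = c * f i
    simp

theorem finsuppToRinf_bijective : Function.Bijective finsuppToRinf := by
  constructor
  · intro f g h
    ext i
    exact congrFun (congrArg Subtype.val h) i
  · rintro ⟨g, N, hN⟩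
    refine ⟨Finsupp.onFinset (Finset.range N) g (fun n hn => Finset.mem_range.mpr ?_), rfl⟩
    by_contra h
    exact hn (hN n (by omega))

noncomputable def finsuppEquivRinf : (ℕ →₀ ℝ) ≃ₗ[ℝ] Rinf :=
  LinearEquiv.ofBijective finsuppToRinf finsuppToRinf_bijective

theorem rank_Rinf : Module.rank ℝ Rinf = Cardinal.aleph0 := by
  rw [← finsuppEquivRinf.rank_eq, rank_finsupp_self', Cardinal.mk_nat]

theorem mem_fst_iff {V : Type} [AddCommGroup V] [Module ℝ V] (x : Rinf × V) :
    x ∈ Submodule.fst ℝ Rinf V ↔ x.2 = 0 := by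
  simp [Submodule.fst, Submodule.mem_comap]

/-- The canonical basis vector `e_m` of `ℝ^∞` (`1` in coordinate `m`, `0` elsewhere). -/
noncomputable def eRinf (m : ℕ) : Rinf :=
  (⟨fun i => if i = m then 1 else 0, ⟨m + 1, fun k hk => if_neg (by omega)⟩⟩ : RinfSubmodule)

set_option maxHeartbeats 1000000 in
set_option synthInstance.maxHeartbeats 400000 in
/-- Let `V` be an `ℵ₀`-dimensional real vector space with the trivial
(indiscrete) topology and `X := ℝ^∞ × V` with the product topology.  Then `M := ℝ^∞ × {0}` is a
dense linear subspace of `X` and is the only dense linear subspace of `X` contained in `M`.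
In particular `M` is `ℵ₀`-dense-lineable in `X` but not `ℵ₀`-infinitely `ℵ₀`-dense-lineable. -/
theorem stmt8 (V : Type) [AddCommGroup V] [Module ℝ V] [tV : TopologicalSpace V]
    (htriv : tV = ⊤) (hV : Module.rank ℝ V = Cardinal.aleph0) :
    Dense ((Submodule.fst ℝ Rinf V : Submodule ℝ (Rinf × V)) : Set (Rinf × V)) ∧
    (∀ Y : Submodule ℝ (Rinf × V),
      (Y : Set (Rinf × V)) ⊆ (Submodule.fst ℝ Rinf V : Set (Rinf × V)) →
      Dense (Y : Set (Rinf × V)) → Y = Submodule.fst ℝ Rinf V) ∧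
    (∃ Y : Submodule ℝ (Rinf × V), Dense (Y : Set (Rinf × V)) ∧
      Module.rank ℝ Y = Cardinal.aleph0 ∧
      (Y : Set (Rinf × V)) ⊆ (Submodule.fst ℝ Rinf V : Set (Rinf × V)) ∪ {0}) ∧
    ¬ ∃ (ι : Type) (Y : ι → Submodule ℝ (Rinf × V)), Cardinal.mk ι = Cardinal.aleph0 ∧
        (∀ i, Dense ((Y i : Submodule ℝ (Rinf × V)) : Set (Rinf × V)) ∧
          Module.rank ℝ (Y i) = Cardinal.aleph0 ∧
          ((Y i : Submodule ℝ (Rinf × V)) : Set (Rinf × V)) ⊆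
            (Submodule.fst ℝ Rinf V : Set (Rinf × V)) ∪ {0}) ∧
        ∀ i j, i ≠ j → Y i ⊓ Y j = ⊥ := by
  have hMset : ((Submodule.fst ℝ Rinf V : Submodule ℝ (Rinf × V)) : Set (Rinf × V))
      = Set.univ ×ˢ {0} := by
    ext ⟨a, b⟩
    simp [SetLike.mem_coe, mem_fst_iff, Set.mem_prod, eq_comm]
  have hdense0 : Dense ({0} : Set V) := by
    rw [dense_iff_inter_open]
    intro U hU hne
    rw [htriv] at hU
    rcases (TopologicalSpace.isOpen_top_iff U).mp hU with rfl | rfl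
    · exact absurd hne (by simp)
    · exact ⟨0, by simp⟩
  have hMdense : Dense ((Submodule.fst ℝ Rinf V : Submodule ℝ (Rinf × V)) : Set (Rinf × V)) := by
    rw [hMset]; exact dense_univ.prod hdense0
  have hMrank : Module.rank ℝ (Submodule.fst ℝ Rinf V) = Cardinal.aleph0 := by
    rw [(Submodule.fstEquiv ℝ Rinf V).rank_eq, rank_Rinf]
  have huniq : ∀ Y : Submodule ℝ (Rinf × V),
      (Y : Set (Rinf × V)) ⊆ (Submodule.fst ℝ Rinf V : Set (Rinf × V)) →
      Dense (Y : Set (Rinf × V)) → Y = Submodule.fst ℝ Rinf V := by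
    intro Y hsub hdense
    have hfst : ∀ x : Rinf, x ∈ Y.map (LinearMap.fst ℝ Rinf V) := by
      intro x
      by_contra hx
      set Y₀ := Y.map (LinearMap.fst ℝ Rinf V) with hY₀
      have hmk : (Submodule.Quotient.mk x : Rinf ⧸ Y₀) ≠ 0 := by
        simpa [Submodule.Quotient.mk_eq_zero] using hx
      obtain ⟨g, hg⟩ := not_forall.mp
        (fun h => hmk ((Module.forall_dual_apply_eq_zero_iff ℝ _).mp h))
      set f := g.comp Y₀.mkQ with hf
      have hfx : f x ≠ 0 := hg
      have hfY : ∀ y ∈ Y, f y.1 = 0 := by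
        intro y hy
        have h1 : y.1 ∈ Y₀ := ⟨y, hy, rfl⟩
        have h2 : Y₀.mkQ y.1 = 0 := (Submodule.Quotient.mk_eq_zero _).mpr h1
        simp [hf, LinearMap.comp_apply, h2]
      have hcont : Continuous fun p : Rinf × V => f p.1 :=
        (Rinf.continuous_linear f).comp continuous_fst
      have hclosed : IsClosed {p : Rinf × V | f p.1 = 0} := isClosed_eq hcont continuous_const
      have hcl : closure (Y : Set (Rinf × V)) ⊆ {p : Rinf × V | f p.1 = 0} :=
        hclosed.closure_subset_iff.mpr (fun y hy => hfY y hy)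
      rw [hdense.closure_eq] at hcl
      exact hfx (hcl (Set.mem_univ ((x, 0) : Rinf × V)))
    refine le_antisymm hsub ?_
    intro p hp
    have hp2 : p.2 = 0 := (mem_fst_iff p).mp hp
    obtain ⟨y, hy, hy1⟩ := hfst p.1
    have hy2 : y.2 = 0 := (mem_fst_iff y).mp (hsub hy)
    have : y = p := Prod.ext hy1 (by rw [hy2, hp2])
    rwa [← this]
  refine ⟨hMdense, huniq, ⟨Submodule.fst ℝ Rinf V, hMdense, hMrank, Set.subset_union_left⟩, ?_⟩
  rintro ⟨ι, Y, hι, hprop, hdisj⟩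
  have hYM : ∀ i, Y i = Submodule.fst ℝ Rinf V := by
    intro i
    refine huniq (Y i) (fun y hy => ?_) (hprop i).1
    rcases (hprop i).2.2 hy with h | h
    · exact h
    · rw [Set.mem_singleton_iff] at h
      rw [h]
      exact (Submodule.fst ℝ Rinf V).zero_mem
  have : Infinite ι := Cardinal.infinite_iff.mpr (hι ▸ le_refl _)
  obtain ⟨i, j, hij⟩ := exists_pair_ne ι
  have hbot := hdisj i j hij
  rw [hYM i, hYM j, inf_idem] at hbot
  rw [hbot] at hMrank
  rw [rank_bot] at hMrank
  exact Cardinal.aleph0_ne_zero hMrank.symm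
end

section
/- Let X be an infinite-dimensional first-countable topological vector space over K (K = ℝ or ℂ). Then w(X) ≤ dim(X); that is, X admits a basis for its topology of cardinality at most the dimension of X. -/
universe u

open Cardinal Filter Topology

/-- Let `X` be an infinite-dimensional first-countable topological vector space
over `𝕜` (`𝕜 = ℝ` or `ℂ`).  Then `w(X) ≤ dim X`. -/
theorem stmt9 (𝕜 : Type) [RCLike 𝕜] {X : Type u} [AddCommGroup X] [Module 𝕜 X]
    [TopologicalSpace X] [IsTopologicalAddGroup X] [ContinuousSMul 𝕜 X]
    [FirstCountableTopology X] (hdim : Cardinal.aleph0 ≤ Module.rank 𝕜 X) :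
    tsWeight X ≤ Module.rank 𝕜 X := by
  classical
  set b := Module.Basis.ofVectorSpace 𝕜 X with hb
  set ι := Module.Basis.ofVectorSpaceIndex 𝕜 X with hι
  have hmkι : #↥ι = Module.rank 𝕜 X := b.mk_eq_rank''
  have hιinf : Infinite ↥ι := Cardinal.infinite_iff.mpr (hmkι ▸ hdim)
  -- countable dense subfield
  obtain ⟨Q, hQc, hQd⟩ := TopologicalSpace.exists_countable_dense 𝕜
  set F : Subfield 𝕜 := Subfield.closure Q with hF
  have hFcard : #F ≤ ℵ₀ := by
    refine (Subfield.cardinalMk_closure_le_max Q).trans ?_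
    have : #Q ≤ ℵ₀ := by
      haveI := Set.countable_coe_iff.mpr hQc
      exact Cardinal.mk_le_aleph0
    exact max_le this le_rfl
  have hFdense : Dense (F : Set 𝕜) := hQd.mono Subfield.subset_closure
  -- the dense additive subgroup of rational-ish combinations
  let g : (↥ι →₀ F) →+ X := Finsupp.liftAddHom fun i =>
    ((smulAddHom 𝕜 X).flip (b i)).comp F.subtype.toAddMonoidHom
  have hg : ∀ (i : ↥ι) (q : F), g (Finsupp.single i q) = (q : 𝕜) • b i := by
    intro i q
    simp [g, Finsupp.liftAddHom_apply_single]
  let A : AddSubgroup X := g.range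
  have hsub : ∀ (k : 𝕜) (i : ↥ι), k • (b i) ∈ A.topologicalClosure := by
    intro k i
    have hc : Continuous fun q : 𝕜 => q • (b i) := continuous_id.smul continuous_const
    have hkQ : k ∈ closure (F : Set 𝕜) := hFdense k
    have hmap : Set.MapsTo (fun q : 𝕜 => q • (b i)) (F : Set 𝕜) (A : Set X) := by
      intro q hq
      exact ⟨Finsupp.single i ⟨q, hq⟩, hg i ⟨q, hq⟩⟩
    have := map_mem_closure hc hkQ hmap
    exact this
  have hAdense : Dense (A : Set X) := by
    rw [dense_iff_closure_eq]
    have : A.topologicalClosure = ⊤ := by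
      rw [eq_top_iff]
      intro x _
      have hx : (Finsupp.linearCombination 𝕜 (fun i : ↥ι => b i)) (b.repr x) = x :=
        b.linearCombination_repr x
      rw [Finsupp.linearCombination_apply, Finsupp.sum] at hx
      rw [← hx]
      exact sum_mem fun i _ => hsub _ i
    have := congrArg (fun (S : AddSubgroup X) => (S : Set X)) this
    exact this
  -- countable neighborhood basis of open symmetric sets
  obtain ⟨U, hUP, hUb⟩ := (nhds_basis_opens (0 : X)).exists_antitone_subbasis
  set V : ℕ → Set X := fun n => U n ∩ (-(U n)) with hVdef
  have hV0 : ∀ n, (0 : X) ∈ V n := fun n => ⟨(hUP n).1, by simpa using (hUP n).1⟩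
  have hVo : ∀ n, IsOpen (V n) := fun n => (hUP n).2.inter (hUP n).2.neg
  have hVsym : ∀ n (x : X), x ∈ V n → -x ∈ V n := by
    intro n x hx
    exact ⟨hx.2, by simpa using hx.1⟩
  have hVU : ∀ n, V n ⊆ U n := fun n => Set.inter_subset_left
  -- the topological basis
  set B : Set (Set X) := Set.range (fun p : ↥A × ℕ => (fun y => (p.1 : X) + y) '' V p.2)
    with hBdef
  have hB : TopologicalSpace.IsTopologicalBasis B := by
    refine TopologicalSpace.isTopologicalBasis_of_isOpen_of_nhds ?_ ?_
    · rintro u ⟨⟨a, n⟩, rfl⟩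
      exact (isOpenMap_add_left (a : X)) _ (hVo n)
    · intro x W hxW hWo
      have hW' : (fun y : X => x + y) ⁻¹' W ∈ 𝓝 (0 : X) := by
        have hc : Continuous fun y : X => x + y := continuous_const.add continuous_id
        exact hc.continuousAt.preimage_mem_nhds (by simpa using hWo.mem_nhds hxW)
      have hadd : Filter.Tendsto (fun p : X × X => p.1 + p.2) (𝓝 0 ×ˢ 𝓝 0) (𝓝 (0 : X)) := by
        have h := continuous_add.tendsto ((0 : X), (0 : X))
        rw [nhds_prod_eq] at h
        simpa using h
      have hpre := hadd hW'
      obtain ⟨n, -, hn⟩ := (hUb.toHasBasis.prod_self.mem_iff).mp hpre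
      have hVW : ∀ v ∈ V n, ∀ w ∈ V n, x + (v + w) ∈ W := by
        intro v hv w hw
        exact hn (Set.mk_mem_prod (hVU n hv) (hVU n hw))
      have hopen : IsOpen ((fun y : X => x + y) '' V n) := (isOpenMap_add_left x) _ (hVo n)
      have hne : ((fun y : X => x + y) '' V n).Nonempty := ⟨x, 0, hV0 n, add_zero x⟩
      obtain ⟨a, haA, v, hv, hav⟩ := hAdense.exists_mem_open hopen hne
      have hav' : x + v = a := hav
      refine ⟨(fun y => a + y) '' V n, ⟨(⟨a, haA⟩, n), rfl⟩, ⟨-v, hVsym n v hv, ?_⟩, ?_⟩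
      · show a + -v = x
        rw [← hav']; abel
      · rintro _ ⟨w, hw, rfl⟩
        show a + w ∈ W
        have heq : a + w = x + (v + w) := by rw [← hav']; abel
        rw [heq]
        exact hVW v hv w hw
  have hwB : tsWeight X ≤ #↥B := csInf_le' ⟨B, hB, rfl⟩
  -- cardinality estimates
  have hAcard : #↥A ≤ Module.rank 𝕜 X := by
    have h1 : #↥A ≤ #(↥ι →₀ F) :=
      Cardinal.mk_le_of_surjective g.rangeRestrict_surjective
    have h2 : #(↥ι →₀ F) = max (Cardinal.lift.{0} #↥ι) (Cardinal.lift.{u} #F) :=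
      Cardinal.mk_finsupp_lift_of_infinite _ _
    rw [h2] at h1
    refine h1.trans ?_
    rw [Cardinal.lift_uzero, hmkι]
    refine max_le le_rfl ?_
    calc Cardinal.lift.{u} #F ≤ Cardinal.lift.{u} ℵ₀ := Cardinal.lift_le.mpr hFcard
      _ = ℵ₀ := Cardinal.lift_aleph0
      _ ≤ Module.rank 𝕜 X := hdim
  have hBcard : #↥B ≤ Module.rank 𝕜 X := by
    have h1 : #↥B ≤ #(↥A × ℕ) := Cardinal.mk_range_le
    have h2 : #(↥A × ℕ) = #↥A * ℵ₀ := by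
      rw [Cardinal.mk_prod, Cardinal.lift_uzero, Cardinal.mk_nat, Cardinal.lift_aleph0]
    rw [h2] at h1
    refine h1.trans ?_
    calc #↥A * ℵ₀ ≤ Module.rank 𝕜 X * ℵ₀ :=
          mul_le_mul_left hAcard ℵ₀
      _ = Module.rank 𝕜 X := Cardinal.mul_aleph0_eq hdim
  exact hwB.trans hBcard
end

section
/- Let X be an infinite-dimensional first-countable topological vector space over K (K = ℝ or ℂ), M a subset of X, and α a cardinal with α ≥ ℵ₀. Then M is α-dense-lineable if, and only if, M is α-infinitely α-dense-lineable. -/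
universe u

open Cardinal Filter Set
variable (𝕜 : Type) [RCLike 𝕜] {X : Type u} [AddCommGroup X] [Module 𝕜 X] [TopologicalSpace X]

lemma exists_small_smul [ContinuousSMul 𝕜 X] (x : X) {U : Set X} (hU : U ∈ nhds (0:X)) :
    ∃ c : 𝕜, c ≠ 0 ∧ c • x ∈ U := by
  have hcont : Filter.Tendsto (fun t : 𝕜 => t • x) (nhds 0) (nhds (0:X)) := by
    have := (continuous_id.smul (continuous_const : Continuous fun _ : 𝕜 => x)).tendsto 0
    convert this using 2 <;> simp
  have h1 : {t : 𝕜 | t • x ∈ U} ∈ nhds (0:𝕜) := hcont hU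
  have h2 : {t : 𝕜 | t • x ∈ U} ∩ {(0:𝕜)}ᶜ ∈ nhdsWithin (0:𝕜) {(0:𝕜)}ᶜ :=
    Filter.inter_mem (nhdsWithin_le_nhds h1) self_mem_nhdsWithin
  obtain ⟨c, hc⟩ := Filter.nonempty_of_mem h2
  exact ⟨c, hc.2, hc.1⟩

lemma indep_aux {ι' J : Type*} {b : ι' → X} (hb : LinearIndependent 𝕜 b)
    (t : J → ι') (s : J → ι') (hs : Function.Injective s)
    (w : ι' → ℕ) (hw : ∀ q, w (s q) = w (t q) + 1)
    (ε : J → 𝕜) (hε : ∀ q, ε q ≠ 0) :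
    LinearIndependent 𝕜 (fun q => b (t q) + ε q • b (s q)) := by
  classical
  rw [linearIndependent_iff]
  intro l hl
  by_contra hl0
  set μ : ι' →₀ 𝕜 := l.sum (fun q c => Finsupp.single (t q) c + Finsupp.single (s q) (c * ε q))
    with hμdef
  have hμ0 : μ = 0 := by
    apply linearIndependent_iff.mp hb
    rw [hμdef, map_finsuppSum]
    rw [Finsupp.linearCombination_apply] at hl
    rw [← hl, Finsupp.sum, Finsupp.sum]
    refine Finset.sum_congr rfl fun q _ => ?_
    rw [map_add, Finsupp.linearCombination_single, Finsupp.linearCombination_single,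
      smul_add, smul_smul]
  have hsupp : l.support.Nonempty := Finsupp.support_nonempty_iff.mpr hl0
  obtain ⟨q0, hq0mem, hq0max⟩ := l.support.exists_max_image (fun q => w (t q)) hsupp
  have hval : μ (s q0) = l q0 * ε q0 := by
    rw [hμdef, Finsupp.sum_apply, Finsupp.sum]
    rw [Finset.sum_eq_single q0]
    · have h1 : t q0 ≠ s q0 := by
        intro h; have := hw q0; rw [← h] at this; omega
      simp [Finsupp.single_apply, h1]
    · intro q hq hne
      have h1 : t q ≠ s q0 := by
        intro h
        have h2 := hq0max q hq
        have h3 := hw q0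
        rw [h] at h2; omega
      have h2 : s q ≠ s q0 := fun h => hne (hs h)
      simp [Finsupp.single_apply, h1, h2]
    · intro h; exact absurd hq0mem h
  rw [hμ0] at hval
  simp only [Finsupp.coe_zero, Pi.zero_apply] at hval
  have := Finsupp.mem_support_iff.mp hq0mem
  rcases mul_eq_zero.mp hval.symm with h | h
  · exact this h
  · exact hε q0 h

/-- Let `X` be an infinite-dimensional first-countable topological vector
space over `𝕜` (`𝕜 = ℝ` or `ℂ`), `M ⊆ X` and `α ≥ ℵ₀` a cardinal.  Then `M` is
`α`-dense-lineable iff `M` is `α`-infinitely `α`-dense-lineable. -/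
theorem stmt10 [IsTopologicalAddGroup X] [ContinuousSMul 𝕜 X] [FirstCountableTopology X]
    (hdim : Cardinal.aleph0 ≤ Module.rank 𝕜 X) (M : Set X) (α : Cardinal.{u})
    (hα : Cardinal.aleph0 ≤ α) :
    DenseLineable 𝕜 M α ↔ InfDenseLineable 𝕜 M α α := by
  classical
  constructor
  · rintro ⟨Y, hYd, hYr, hYM⟩
    set ι₀ := Module.Free.ChooseBasisIndex 𝕜 Y with hι₀def
    have bY : Module.Basis ι₀ 𝕜 Y := Module.Free.chooseBasis 𝕜 Y
    have hι₀ : #ι₀ = α := by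
      rw [← hYr, Module.Free.rank_eq_card_chooseBasisIndex]
    set A := α.out with hAdef
    have hA : #A = α := Cardinal.mk_out α
    -- cardinal arithmetic
    have hPα : #(ι₀ × ℕ) = α := by
      simp only [Cardinal.mk_prod, Cardinal.mk_nat, Cardinal.lift_aleph0, Cardinal.lift_uzero,
        hι₀]
      exact Cardinal.mul_aleph0_eq hα
    have hQα : #(ι₀ × ℕ × A) = α := by
      simp only [Cardinal.mk_prod, Cardinal.mk_nat, Cardinal.lift_aleph0, Cardinal.lift_uzero,
        Cardinal.lift_id, hι₀, hA]
      rw [Cardinal.aleph0_mul_eq hα, Cardinal.mul_eq_self hα]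
    -- reindex basis by P := ι₀ × ℕ
    obtain ⟨e⟩ : Nonempty (ι₀ × ℕ ≃ ι₀) := Cardinal.eq.mp (hPα.trans hι₀.symm)
    obtain ⟨σ⟩ : Nonempty (ι₀ × ℕ × A ≃ ι₀) := Cardinal.eq.mp (hQα.trans hι₀.symm)
    set c : ι₀ → X := fun i => (bY i : X) with hcdef
    have hc_li : LinearIndependent 𝕜 c :=
      bY.linearIndependent.map' Y.subtype (Submodule.ker_subtype Y)
    have hc_span : Submodule.span 𝕜 (Set.range c) = Y := by
      have : Set.range c = Y.subtype '' Set.range bY := by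
        rw [← Set.range_comp]; rfl
      rw [this, ← Submodule.map_span, bY.span_eq, Submodule.map_top, Submodule.range_subtype]
    set B : ι₀ × ℕ → X := fun p => c (e p) with hBdef
    have hB_li : LinearIndependent 𝕜 B := hc_li.comp e e.injective
    have hB_span : Submodule.span 𝕜 (Set.range B) = Y := by
      have : Set.range B = Set.range c := by
        rw [hBdef, show (fun p => c (e p)) = c ∘ e from rfl, Set.range_comp,
          e.surjective.range_eq, Set.image_univ]
      rw [this, hc_span]
    -- targets & fresh indices
    set t : (ι₀ × ℕ) × ℕ × A → ι₀ × ℕ := fun q => q.1 with htdef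
    set s : (ι₀ × ℕ) × ℕ × A → ι₀ × ℕ := fun q => (σ (q.1.1, q.2.1, q.2.2), q.1.2 + 1)
      with hsdef
    have hs_inj : Function.Injective s := by
      rintro ⟨⟨i, m⟩, n, κ⟩ ⟨⟨i', m'⟩, n', κ'⟩ h
      simp only [s, Prod.mk.injEq] at h
      obtain ⟨h1, h2⟩ := h
      have := σ.injective h1
      simp_all [Prod.ext_iff]
    -- neighborhood basis and epsilons
    obtain ⟨U, hU⟩ := (nhds (0 : X)).exists_antitone_basis
    have key : ∀ q : (ι₀ × ℕ) × ℕ × A, ∃ cc : 𝕜, cc ≠ 0 ∧ cc • B (s q) ∈ U q.2.1 :=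
      fun q => exists_small_smul 𝕜 (B (s q)) (hU.mem q.2.1)
    choose ε hε0 hεU using key
    set V : (ι₀ × ℕ) × ℕ × A → X := fun q => B (t q) + ε q • B (s q) with hVdef
    have hV_li : LinearIndependent 𝕜 V :=
      indep_aux 𝕜 hB_li t s hs_inj Prod.snd (fun q => rfl) ε hε0
    -- the family of subspaces
    set Yk : A → Submodule 𝕜 X :=
      fun κ => Submodule.span 𝕜 (Set.range fun r : (ι₀ × ℕ) × ℕ => V (r.1, r.2, κ)) with hYkdef
    have hVY : ∀ q, V q ∈ Y := by
      intro q
      have h1 : ∀ p, B p ∈ Y := fun p => hB_span ▸ Submodule.subset_span ⟨p, rfl⟩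
      exact Y.add_mem (h1 _) (Y.smul_mem _ (h1 _))
    have hYkY : ∀ κ, Yk κ ≤ Y := by
      intro κ
      rw [hYkdef]
      apply Submodule.span_le.mpr
      rintro x ⟨r, rfl⟩
      exact hVY _
    refine ⟨A, Yk, hA, fun κ => ⟨?_, ?_, ?_⟩, ?_⟩
    · -- dense
      have hcl : ∀ p : ι₀ × ℕ, B p ∈ closure (Yk κ : Set X) := by
        intro p
        have htd : Tendsto (fun n => ε ((p, n, κ)) • B (s (p, n, κ))) atTop (nhds (0:X)) :=
          hU.tendsto (fun n => hεU (p, n, κ))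
        have htd2 : Tendsto (fun n => V (p, n, κ)) atTop (nhds (B p)) := by
          have := (tendsto_const_nhds (x := B p) (f := atTop (α := ℕ))).add htd
          simpa using this
        exact mem_closure_of_tendsto htd2
          (Filter.Eventually.of_forall fun n => Submodule.subset_span ⟨(p, n), rfl⟩)
      have hle : (Y : Set X) ⊆ closure (Yk κ : Set X) := by
        have : Y ≤ (Yk κ).topologicalClosure := by
          rw [← hB_span]
          apply Submodule.span_le.mpr
          rintro x ⟨p, rfl⟩
          exact hcl p
        exact this
      exact dense_closure.mp (hYd.mono hle)
    · -- rank
      have hli : LinearIndependent 𝕜 (fun r : (ι₀ × ℕ) × ℕ => V (r.1, r.2, κ)) :=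
        hV_li.comp (fun r : (ι₀ × ℕ) × ℕ => (r.1, r.2, κ))
          (fun a b h => by simpa [Prod.ext_iff] using h)
      rw [hYkdef]
      rw [rank_span hli, Cardinal.mk_range_eq _ hli.injective]
      simp only [Cardinal.mk_prod, Cardinal.mk_nat, Cardinal.lift_aleph0, Cardinal.lift_uzero,
        hι₀]
      rw [Cardinal.mul_aleph0_eq hα, Cardinal.mul_aleph0_eq hα]
    · -- subset M ∪ {0}
      exact fun x hx => hYM (hYkY κ hx)
    · -- pairwise trivial intersections
      intro κ κ' hne
      rw [eq_bot_iff]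
      intro x hx
      obtain ⟨hx1, hx2⟩ := Submodule.mem_inf.mp hx
      rw [hYkdef] at hx1 hx2
      rw [Finsupp.mem_span_range_iff_exists_finsupp] at hx1 hx2
      obtain ⟨l, hl⟩ := hx1
      obtain ⟨l', hl'⟩ := hx2
      set j1 : (ι₀ × ℕ) × ℕ ↪ (ι₀ × ℕ) × ℕ × A :=
        ⟨fun r => (r.1, r.2, κ), fun a b h => by simpa [Prod.ext_iff] using h⟩ with hj1
      set j2 : (ι₀ × ℕ) × ℕ ↪ (ι₀ × ℕ) × ℕ × A :=
        ⟨fun r => (r.1, r.2, κ'), fun a b h => by simpa [Prod.ext_iff] using h⟩ with hj2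
      set g := Finsupp.embDomain j1 l - Finsupp.embDomain j2 l' with hg
      have hg0 : g = 0 := by
        apply linearIndependent_iff.mp hV_li
        rw [hg, map_sub, Finsupp.linearCombination_embDomain, Finsupp.linearCombination_embDomain,
          Finsupp.linearCombination_apply, Finsupp.linearCombination_apply]
        rw [show ((fun q => V q) ∘ j1) = (fun r : (ι₀ × ℕ) × ℕ => V (r.1, r.2, κ)) from rfl,
          show ((fun q => V q) ∘ j2) = (fun r : (ι₀ × ℕ) × ℕ => V (r.1, r.2, κ')) from rfl]
        rw [hl, hl', sub_self]
      have hl0 : l = 0 := by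
        ext r
        have := DFunLike.congr_fun hg0 (j1 r)
        rw [hg] at this
        simp only [Finsupp.sub_apply, Finsupp.embDomain_apply_self, Finsupp.coe_zero,
          Pi.zero_apply] at this
        have hnr : j1 r ∉ Set.range j2 := by
          rintro ⟨r', hr'⟩
          exact hne (congrArg (fun x => x.2.2) hr').symm
        rw [Finsupp.embDomain_notin_range _ _ _ hnr] at this
        simpa using this
      rw [← hl, hl0]
      simp
  · rintro ⟨ι, Yf, hι, hprops, -⟩
    have hne : Nonempty ι := Cardinal.mk_ne_zero_iff.mp (by rw [hι]; exact (aleph0_pos.trans_le hα).ne')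
    obtain ⟨i⟩ := hne
    exact ⟨Yf i, (hprops i).1, (hprops i).2.1, (hprops i).2.2⟩
end

section
/- Let X be an infinite-dimensional first-countable topological vector space over K (K = ℝ or ℂ), M a subset of X, and α a cardinal with α ≥ ℵ₀. Then M is pointwise α-dense-lineable if, and only if, M is α-infinitely pointwise α-dense-lineable. -/
open Topology Filter


universe u

open Cardinal
variable (𝕜 : Type) [RCLike 𝕜] {X : Type u} [AddCommGroup X] [Module 𝕜 X] [TopologicalSpace X]

section Aux

variable {𝕜}

/-- Key combinatorial independence lemma, in the free module `J →₀ 𝕜`. -/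
lemma indepAux {J Q : Type*} (mn pt : Q → J) (L : J → ℕ) (w₀ : J)
    (c : Q → 𝕜) (hpt : Function.Injective pt) (hL : ∀ q, L (pt q) = L (mn q) + 1)
    (hw : ∀ q, pt q ≠ w₀) (hc : ∀ q, c q ≠ 0) :
    LinearIndependent 𝕜 (fun o : Option Q => Option.elim o (Finsupp.single w₀ (1:𝕜))
      (fun q => Finsupp.single (mn q) 1 + c q • Finsupp.single (pt q) 1)) := by
  classical
  set v : Option Q → (J →₀ 𝕜) := fun o => Option.elim o (Finsupp.single w₀ (1:𝕜))
      (fun q => Finsupp.single (mn q) 1 + c q • Finsupp.single (pt q) 1) with hv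
  rw [linearIndependent_iff']
  intro s l hsum
  have hvs : ∀ q j, v (some q) j
      = (if mn q = j then (1:𝕜) else 0) + c q * (if pt q = j then 1 else 0) := by
    intro q j
    simp [hv, Finsupp.single_apply]
  have hvn : ∀ j, v none j = if w₀ = j then (1:𝕜) else 0 := by
    intro j; simp [hv, Finsupp.single_apply]
  have happ : ∀ j, (∑ o ∈ s, l o * v o j) = 0 := by
    intro j
    have h := DFunLike.congr_fun hsum j
    rw [Finset.sum_apply'] at h
    simpa [Finsupp.smul_apply, smul_eq_mul] using h
  set N := s.sup (fun o => Option.elim o 0 (fun q => L (mn q))) with hN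
  have key : ∀ d : ℕ, ∀ q : Q, some q ∈ s → N < L (mn q) + d → l (some q) = 0 := by
    intro d
    induction d with
    | zero =>
      intro q hq hlt
      have hle : L (mn q) ≤ N := by
        have := Finset.le_sup (f := fun o : Option Q => Option.elim o 0 (fun q => L (mn q))) hq
        simpa using this
      omega
    | succ d ih =>
      intro q hq hlt
      have h0 := happ (pt q)
      have hterm : ∀ o ∈ s, o ≠ some q → l o * v o (pt q) = 0 := by
        rintro (_ | q') ho hne
        · rw [hvn, if_neg (fun h => hw q h.symm)]; ring
        · rw [hvs]
          by_cases hmq : mn q' = pt q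
          · have hlq' : l (some q') = 0 := by
              refine ih q' ho ?_
              rw [hmq, hL q]; omega
            rw [hlq']; ring
          · rw [if_neg hmq, if_neg (fun h => hne (by rw [hpt h]))]; ring
      have hsingle := Finset.sum_eq_single_of_mem (some q) hq hterm
      rw [hsingle] at h0
      have hmnpt : ¬ (mn q = pt q) := by
        intro h
        have := hL q
        rw [← h] at this
        omega
      rw [hvs, if_neg hmnpt, if_pos rfl] at h0
      have : l (some q) * c q = 0 := by linear_combination h0
      exact (mul_eq_zero.mp this).resolve_right (hc q)
  have hsome : ∀ q, some q ∈ s → l (some q) = 0 := fun q hq => key (N + 1) q hq (by omega)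
  intro o ho
  cases o with
  | some q => exact hsome q ho
  | none =>
    have h0 := happ w₀
    have hterm : ∀ o ∈ s, o ≠ none → l o * v o w₀ = 0 := by
      rintro (_ | q') ho' hne
      · exact absurd rfl hne
      · rw [hsome q' ho']; ring
    rw [Finset.sum_eq_single_of_mem none ho hterm, hvn, if_pos rfl, mul_one] at h0
    exact h0

/-- For a linearly independent family, spans of images intersect in the span of the image of the
intersection. -/
lemma spanInterAux {X : Type*} [AddCommGroup X] [Module 𝕜 X]
    {J : Type*} {F : J → X} (hF : LinearIndependent 𝕜 F) (s t : Set J) :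
    Submodule.span 𝕜 (F '' s) ⊓ Submodule.span 𝕜 (F '' t) = Submodule.span 𝕜 (F '' (s ∩ t)) := by
  refine le_antisymm ?_ (le_inf
    (Submodule.span_mono (Set.image_mono Set.inter_subset_left))
    (Submodule.span_mono (Set.image_mono Set.inter_subset_right)))
  rintro z ⟨hz1, hz2⟩
  rw [SetLike.mem_coe, Finsupp.mem_span_image_iff_linearCombination] at hz1 hz2
  rw [Finsupp.mem_span_image_iff_linearCombination]
  obtain ⟨l1, hl1, rfl⟩ := hz1
  obtain ⟨l2, hl2, hl⟩ := hz2
  have hll : l2 = l1 := hF hl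
  subst hll
  exact ⟨l2, (Finsupp.mem_supported 𝕜 _).2 (Set.subset_inter
    ((Finsupp.mem_supported 𝕜 _).1 hl1) ((Finsupp.mem_supported 𝕜 _).1 hl2)), rfl⟩

lemma cardNatAux {T : Type u} {α : Cardinal.{u}} (hα : ℵ₀ ≤ α) (h : #T = α) : #(T × ℕ) = α := by
  rw [Cardinal.mk_prod, h, Cardinal.mk_nat, Cardinal.lift_uzero, Cardinal.lift_aleph0]
  exact Cardinal.mul_eq_left hα hα Cardinal.aleph0_ne_zero

lemma cardProdAux {T T' : Type u} {α : Cardinal.{u}} (hα : ℵ₀ ≤ α) (h : #T = α) (h' : #T' = α) :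
    #(T × T') = α := by
  rw [Cardinal.mk_prod, h, h', Cardinal.lift_id]
  exact Cardinal.mul_eq_self hα

/-- The main construction: from a single dense subspace through `x` of dimension `α`, get
`α` many, pairwise meeting in `span {x}`. -/
lemma mainAux [RCLike 𝕜] {X : Type u} [AddCommGroup X] [Module 𝕜 X] [TopologicalSpace X]
    [IsTopologicalAddGroup X] [ContinuousSMul 𝕜 X] [FirstCountableTopology X]
    (M : Set X) (α : Cardinal.{u}) (hα : ℵ₀ ≤ α) (x : X)
    (Y : Submodule 𝕜 X) (hxY : x ∈ Y) (hYd : Dense (Y : Set X))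
    (hYr : Module.rank 𝕜 Y = α) (hYM : (Y : Set X) ⊆ M ∪ {0})
    {J : Type u} (E : J → X) (hE : LinearIndependent 𝕜 E)
    (hspan : Submodule.span 𝕜 (Set.range E) = Y)
    {A : Type u} (hAcard : #A = α)
    (mn₀ : A × ℕ → J) (pt : A × ((A × ℕ) × ℕ) → J) (L : J → ℕ) (w₀ : J)
    (hpt : Function.Injective pt)
    (hL : ∀ q, L (pt q) = L (mn₀ q.2.1) + 1)
    (hw₀ : ∀ q, pt q ≠ w₀)
    (hcover : ∀ j, j ∈ Set.range mn₀ ∨ E j = x)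
    (hxw : x ≠ 0 → E w₀ = x) :
    ∃ (ι : Type u) (Yf : ι → Submodule 𝕜 X), #ι = α ∧
      (∀ i, x ∈ Yf i ∧ Dense ((Yf i : Set X)) ∧ Module.rank 𝕜 (Yf i) = α ∧
        (Yf i : Set X) ⊆ M ∪ {0}) ∧
      ∀ i j, i ≠ j → Yf i ⊓ Yf j = Submodule.span 𝕜 {x} := by
  classical
  obtain ⟨U, hU⟩ := (𝓝 (0:X)).exists_antitone_basis
  have hex : ∀ q : A × ((A × ℕ) × ℕ), ∃ cc : 𝕜, cc ≠ 0 ∧ cc • E (pt q) ∈ U q.2.2 := by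
    intro q
    have hUm : U q.2.2 ∈ 𝓝 (0:X) := hU.1.mem_of_mem trivial
    have hcont : Filter.Tendsto (fun cc : 𝕜 => cc • E (pt q)) (𝓝 0) (𝓝 0) := by
      have h := (continuous_id.smul (continuous_const (y := E (pt q)))).tendsto (0 : 𝕜)
      simpa using (show Filter.Tendsto (fun cc : 𝕜 => cc • E (pt q)) (𝓝 0) (𝓝 ((0:𝕜) • E (pt q))) from h)
    have hmem : (fun cc : 𝕜 => cc • E (pt q)) ⁻¹' (U q.2.2) ∈ 𝓝[≠] (0:𝕜) :=
      nhdsWithin_le_nhds (hcont hUm)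
    obtain ⟨cc, hcc1, hcc2⟩ :=
      Filter.nonempty_of_mem (Filter.inter_mem hmem self_mem_nhdsWithin)
    exact ⟨cc, hcc2, hcc1⟩
  choose c hc0 hcU using hex
  set g : A × ((A × ℕ) × ℕ) → X := fun q => E (mn₀ q.2.1) + c q • E (pt q) with hg
  set F : Option (A × ((A × ℕ) × ℕ)) → X := fun o => Option.elim o (E w₀) g with hF
  have hEY : ∀ j, E j ∈ Y := fun j => hspan ▸ Submodule.subset_span ⟨j, rfl⟩
  have hFY : ∀ o, F o ∈ Y := by
    rintro (_ | q)
    · exact hEY w₀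
    · exact Y.add_mem (hEY _) (Y.smul_mem _ (hEY _))
  have hFind : LinearIndependent 𝕜 F := by
    have h1 := indepAux (𝕜 := 𝕜) (fun q : A × ((A × ℕ) × ℕ) => mn₀ q.2.1) pt L w₀ c hpt hL hw₀ hc0
    have h2 := h1.map' (Finsupp.linearCombination 𝕜 E) (LinearMap.ker_eq_bot.mpr hE)
    have heq : F = (Finsupp.linearCombination 𝕜 E) ∘
        (fun o : Option (A × ((A × ℕ) × ℕ)) => Option.elim o (Finsupp.single w₀ (1:𝕜))
          (fun q => Finsupp.single (mn₀ q.2.1) 1 + c q • Finsupp.single (pt q) 1)) := by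
      funext o
      cases o with
      | none => simp [hF, Finsupp.linearCombination_single]
      | some q => simp [hF, hg, Finsupp.linearCombination_single, map_add, map_smul]
    rw [heq]
    exact h2
  set NN : Set (Option (A × ((A × ℕ) × ℕ))) := if x = 0 then ∅ else {none} with hNN
  set S : A → Set (Option (A × ((A × ℕ) × ℕ))) := fun i => some '' {q | q.1 = i} with hS
  set Yf : A → Submodule 𝕜 X := fun i => Submodule.span 𝕜 (F '' (NN ∪ S i)) with hYf
  have hxYf : ∀ i, x ∈ Yf i := by
    intro i
    by_cases hx0 : x = 0
    · rw [hx0]; exact (Yf i).zero_mem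
    · refine Submodule.subset_span ⟨none, Or.inl ?_, hxw hx0⟩
      simp [hNN, hx0]
  have hYfY : ∀ i, Yf i ≤ Y := by
    intro i
    refine Submodule.span_le.mpr ?_
    rintro z ⟨o, _, rfl⟩
    exact hFY o
  refine ⟨A, Yf, hAcard, fun i => ?_, fun i j hij => ?_⟩
  · have hgmem : ∀ p m, g (i, (p, m)) ∈ Yf i := by
      intro p m
      exact Submodule.subset_span ⟨some (i, (p, m)), Or.inr ⟨(i, (p, m)), rfl, rfl⟩, rfl⟩
    have hdense : Dense ((Yf i : Set X)) := by
      have hC : Y ≤ (Yf i).topologicalClosure := by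
        rw [← hspan]
        refine Submodule.span_le.mpr ?_
        rintro z ⟨j, rfl⟩
        rcases hcover j with ⟨p, rfl⟩ | hjx
        · have h0 : Filter.Tendsto (fun m => c (i, (p, m)) • E (pt (i, (p, m))))
              Filter.atTop (𝓝 0) := hU.tendsto (fun m => hcU (i, (p, m)))
          have htend : Filter.Tendsto (fun m => g (i, (p, m))) Filter.atTop (𝓝 (E (mn₀ p))) := by
            simpa [hg] using tendsto_const_nhds.add h0
          have hcl : E (mn₀ p) ∈ closure ((Yf i : Set X)) :=
            mem_closure_of_tendsto htend (Filter.Eventually.of_forall fun m => hgmem p m)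
          show E (mn₀ p) ∈ ((Yf i).topologicalClosure : Set X)
          rw [Submodule.topologicalClosure_coe]
          exact hcl
        · rw [hjx]
          exact SetLike.mem_coe.mpr ((Yf i).le_topologicalClosure (hxYf i))
      have hsub : (Y : Set X) ⊆ closure ((Yf i : Set X)) := by
        intro z hz
        rw [← Submodule.topologicalClosure_coe]
        exact hC hz
      exact (Dense.mono hsub hYd).of_closure
    have hrank : Module.rank 𝕜 (Yf i) = α := by
      have hQcard : #((A × ℕ) × ℕ) = α := cardNatAux hα (cardNatAux hα hAcard)
      refine le_antisymm ?_ ?_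
      · rw [← hYr]; exact Submodule.rank_mono (hYfY i)
      have hinj : Function.Injective (fun r : (A × ℕ) × ℕ => some (i, r)) := by
        intro r r' h
        exact congrArg Prod.snd (Option.some_injective _ h)
      have hgi : LinearIndependent 𝕜 (fun r : (A × ℕ) × ℕ => F (some (i, r))) :=
        hFind.comp (fun r : (A × ℕ) × ℕ => some (i, r)) hinj
      have hle : Submodule.span 𝕜 (Set.range (fun r : (A × ℕ) × ℕ => F (some (i, r)))) ≤ Yf i := by
        refine Submodule.span_le.mpr ?_
        rintro z ⟨r, rfl⟩
        exact Submodule.subset_span ⟨some (i, r), Or.inr ⟨(i, r), rfl, rfl⟩, rfl⟩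
      have h1 := rank_span hgi
      have h2 : #(Set.range (fun r : (A × ℕ) × ℕ => F (some (i, r)))) = α := by
        rw [Cardinal.mk_range_eq _ hgi.injective]
        exact hQcard
      calc α = Module.rank 𝕜 (Submodule.span 𝕜
            (Set.range (fun r : (A × ℕ) × ℕ => F (some (i, r))))) := by rw [h1, h2]
        _ ≤ Module.rank 𝕜 (Yf i) := Submodule.rank_mono hle
    exact ⟨hxYf i, hdense, hrank, fun z hz => hYM (hYfY i hz)⟩
  · have hint := spanInterAux hFind (NN ∪ S i) (NN ∪ S j)
    have hset : (NN ∪ S i) ∩ (NN ∪ S j) = NN := by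
      ext o
      constructor
      · rintro ⟨h1 | h1, h2 | h2⟩
        · exact h1
        · exact h1
        · exact h2
        · exfalso
          obtain ⟨q, hq, rfl⟩ := h1
          obtain ⟨q', hq', he⟩ := h2
          obtain rfl : q' = q := Option.some_injective _ he
          exact hij (hq ▸ hq' ▸ rfl)
      · intro h; exact ⟨Or.inl h, Or.inl h⟩
    have hYfij : Yf i ⊓ Yf j
        = Submodule.span 𝕜 (F '' ((NN ∪ S i) ∩ (NN ∪ S j))) := hint
    rw [hYfij, hset]
    by_cases hx0 : x = 0
    · rw [hNN]
      rw [if_pos hx0, Set.image_empty, Submodule.span_empty, hx0,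
        Submodule.span_zero_singleton]
    · rw [hNN]
      rw [if_neg hx0, Set.image_singleton]
      have : F none = x := hxw hx0
      rw [this]

end Aux

/-- Let `X` be an infinite-dimensional first-countable topological vector
space over `𝕜` (`𝕜 = ℝ` or `ℂ`), `M ⊆ X` and `α ≥ ℵ₀` a cardinal.  Then `M` is pointwise
`α`-dense-lineable iff `M` is `α`-infinitely pointwise `α`-dense-lineable. -/
theorem stmt11 [IsTopologicalAddGroup X] [ContinuousSMul 𝕜 X] [FirstCountableTopology X]
    (hdim : Cardinal.aleph0 ≤ Module.rank 𝕜 X) (M : Set X) (α : Cardinal.{u})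
    (hα : Cardinal.aleph0 ≤ α) :
    PointwiseDenseLineable 𝕜 M α ↔ InfPointwiseDenseLineable 𝕜 M α α := by
  constructor
  · intro h x hxM
    classical
    obtain ⟨Y, hxY, hYd, hYr, hYM⟩ := h x hxM
    have hAcard : #(α.out) = α := Cardinal.mk_out α
    have hANcard : #(α.out × ℕ) = α := cardNatAux hα hAcard
    have hQcard : #(α.out × ((α.out × ℕ) × ℕ)) = α :=
      cardProdAux hα hAcard (cardNatAux hα hANcard)
    haveI hAne : Nonempty α.out := Cardinal.mk_ne_zero_iff.mp (by
      rw [hAcard]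
      exact (lt_of_lt_of_le Cardinal.aleph0_pos hα).ne')
    obtain ⟨ρe⟩ : Nonempty ((α.out × ((α.out × ℕ) × ℕ)) ≃ α.out) :=
      Cardinal.eq.mp (hQcard.trans hAcard.symm)
    by_cases hx0 : x = 0
    · -- x = 0 case
      obtain ⟨b, hbY, hbspan, hbind⟩ := exists_linearIndependent 𝕜 (Y : Set X)
      have hbcard : #↥b = α := by
        have h1 := rank_span_set hbind
        rw [hbspan, Submodule.span_eq] at h1
        exact h1.symm.trans hYr
      obtain ⟨e⟩ : Nonempty (↥b ≃ (α.out × ℕ)) :=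
        Cardinal.eq.mp (hbcard.trans hANcard.symm)
      set E : α.out × ℕ → X := fun p => ((e.symm p : ↥b) : X) with hE'
      have hEind : LinearIndependent 𝕜 E := hbind.comp e.symm e.symm.injective
      have hEspan : Submodule.span 𝕜 (Set.range E) = Y := by
        have hrange : Set.range E = b := by
          rw [hE']
          rw [show (fun p => ((e.symm p : ↥b) : X))
            = (fun y : ↥b => (y : X)) ∘ e.symm from rfl]
          rw [Function.Surjective.range_comp e.symm.surjective, Subtype.range_coe]
        rw [hrange, hbspan, Submodule.span_eq]
      obtain ⟨a₀⟩ := hAne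
      exact mainAux M α hα x Y hxY hYd hYr hYM E hEind hEspan hAcard
        id (fun q => (ρe q, q.2.1.2 + 1)) Prod.snd (a₀, 0)
        (fun q q' h => ρe.injective (congrArg Prod.fst h))
        (fun q => rfl)
        (fun q h => by simpa using congrArg Prod.snd h)
        (fun j => Or.inl ⟨j, rfl⟩)
        (fun hx => absurd hx0 hx)
    · -- x ≠ 0 case
      obtain ⟨b, hbY, hxb, hYsub', hbind'⟩ := exists_linearIndepOn_extension (K := 𝕜) (v := id)
        (LinearIndepOn.singleton (R := 𝕜) (v := id) hx0) (Set.singleton_subset_iff.mpr hxY)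
      have hYsub : (Y : Set X) ⊆ Submodule.span 𝕜 b := by simpa using hYsub'
      have hbind : LinearIndependent 𝕜 (fun y : b => (y : X)) := hbind'
      have hbspan : Submodule.span 𝕜 b = Y := by
        refine le_antisymm (Submodule.span_le.mpr hbY) ?_
        intro z hz
        exact hYsub hz
      have hbcard : #↥b = α := by
        have h1 := rank_span_set hbind
        rw [hbspan] at h1
        exact h1.symm.trans hYr
      have hxmem : x ∈ b := hxb rfl
      have hOcard : #(Option (α.out × ℕ)) = α := by
        rw [Cardinal.mk_option, hANcard]
        exact Cardinal.add_one_eq hα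
      obtain ⟨e0⟩ : Nonempty (↥b ≃ Option (α.out × ℕ)) :=
        Cardinal.eq.mp (hbcard.trans hOcard.symm)
      set e : ↥b ≃ Option (α.out × ℕ) := e0.trans (Equiv.swap (e0 ⟨x, hxmem⟩) none) with he
      have hex' : e ⟨x, hxmem⟩ = none := by
        simp [he, Equiv.swap_apply_left]
      set E : Option (α.out × ℕ) → X := fun j => ((e.symm j : ↥b) : X) with hE'
      have hEnone : E none = x := by
        have h' : e.symm none = ⟨x, hxmem⟩ := by
          rw [← hex', Equiv.symm_apply_apply]
        show ((e.symm none : ↥b) : X) = x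
        rw [h']
      have hEind : LinearIndependent 𝕜 E := hbind.comp e.symm e.symm.injective
      have hEspan : Submodule.span 𝕜 (Set.range E) = Y := by
        have hrange : Set.range E = b := by
          rw [hE']
          rw [show (fun p => ((e.symm p : ↥b) : X))
            = (fun y : ↥b => (y : X)) ∘ e.symm from rfl]
          rw [Function.Surjective.range_comp e.symm.surjective, Subtype.range_coe]
        rw [hrange, hbspan]
      exact mainAux M α hα x Y hxY hYd hYr hYM E hEind hEspan hAcard
        (fun p => some p) (fun q => some (ρe q, q.2.1.2 + 1))
        (fun o => Option.elim o 0 (fun p => p.2 + 1)) none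
        (fun q q' h => ρe.injective (congrArg Prod.fst (Option.some_injective _ h)))
        (fun q => rfl)
        (fun q h => by simp at h)
        (fun j => by
          cases j with
          | none => exact Or.inr hEnone
          | some p => exact Or.inl ⟨p, rfl⟩)
        (fun _ => hEnone)
  · intro h x hxM
    obtain ⟨ι, Yf, hι, h2, _⟩ := h x hxM
    haveI : Nonempty ι := Cardinal.mk_ne_zero_iff.mp (by
      rw [hι]
      exact (lt_of_lt_of_le Cardinal.aleph0_pos hα).ne')
    obtain ⟨i⟩ := ‹Nonempty ι›
    exact ⟨Yf i, (h2 i).1, (h2 i).2.1, (h2 i).2.2.1, (h2 i).2.2.2⟩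
end

section
/- Let X be an infinite-dimensional first-countable topological vector space over K (K = ℝ or ℂ), M a subset of X, and α, γ cardinals with α ≥ ℵ₀ and α > γ. Then M is (γ,α)-dense-lineable if, and only if, M is α-infinitely (γ,α)-dense-lineable. -/
universe u

open Cardinal
variable (𝕜 : Type) [RCLike 𝕜] {X : Type u} [AddCommGroup X] [Module 𝕜 X] [TopologicalSpace X]


/-- Let `X` be an infinite-dimensional first-countable topological vector
space over `𝕜` (`𝕜 = ℝ` or `ℂ`), `M ⊆ X` and `α, γ` cardinals with `α ≥ ℵ₀` and `α > γ`.
Then `M` is `(γ,α)`-dense-lineable iff `M` is `α`-infinitely `(γ,α)`-dense-lineable. -/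
theorem stmt12 [IsTopologicalAddGroup X] [ContinuousSMul 𝕜 X] [FirstCountableTopology X]
    (hdim : Cardinal.aleph0 ≤ Module.rank 𝕜 X) (M : Set X) (α γ : Cardinal.{u})
    (hα : Cardinal.aleph0 ≤ α) (hγ : γ < α) :
    GBDenseLineable 𝕜 M γ α ↔ InfGBDenseLineable 𝕜 M α γ α := by
  classical
  constructor
  · rintro ⟨hex, hGB⟩
    refine ⟨hex, ?_⟩
    intro W hWrank hWsub
    obtain ⟨Y, hWY, hYd, hYr, hYsub⟩ := hGB W hWrank hWsub
    -- the index type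
    set A := Quotient.out α with hAdef
    have hmkA : #A = α := Cardinal.mk_out α
    have hmkT : #(A × ℕ) = α := by
      simp only [Cardinal.mk_prod, Cardinal.mk_nat, Cardinal.lift_aleph0, Cardinal.lift_uzero,
        hmkA]
      exact Cardinal.mul_aleph0_eq hα
    -- complement of W inside Y
    set W' : Submodule 𝕜 ↥Y := W.comap Y.subtype with hW'def
    obtain ⟨q, hq⟩ := Submodule.exists_isCompl W'
    set V : Submodule 𝕜 X := q.map Y.subtype with hVdef
    have hVY : V ≤ Y := Submodule.map_subtype_le _ _
    have hWmap : W'.map Y.subtype = W := by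
      rw [hW'def, Submodule.map_comap_subtype, inf_eq_right.mpr hWY]
    have hWVinf : W ⊓ V = ⊥ := by
      rw [← hWmap, hVdef, ← Submodule.map_inf _ (Submodule.injective_subtype Y),
        hq.inf_eq_bot, Submodule.map_bot]
    have hWVsup : W ⊔ V = Y := by
      rw [← hWmap, hVdef, ← Submodule.map_sup, hq.sup_eq_top, Submodule.map_top,
        Submodule.range_subtype]
    -- rank of V is α
    have hVrank : Module.rank 𝕜 V = α := by
      have h1 := Submodule.rank_sup_add_rank_inf_eq W V
      rw [hWVsup, hWVinf, hWrank, hYr, rank_bot, add_zero] at h1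
      by_contra hne
      have hle : Module.rank 𝕜 V ≤ α := by rw [← hYr]; exact Submodule.rank_mono hVY
      have hlt : Module.rank 𝕜 V < α := lt_of_le_of_ne hle hne
      exact absurd h1.symm (ne_of_lt (Cardinal.add_lt_of_lt hα hγ hlt))
    -- a basis of V indexed by A × ℕ
    have hb0card : #(Module.Basis.ofVectorSpaceIndex 𝕜 ↥V) = #(A × ℕ) := by
      rw [(Module.Basis.ofVectorSpace 𝕜 ↥V).mk_eq_rank'', hVrank, hmkT]
    obtain ⟨e⟩ := Cardinal.eq.mp hb0card
    set b : Module.Basis (A × ℕ) 𝕜 ↥V := (Module.Basis.ofVectorSpace 𝕜 ↥V).reindex e with hbdef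
    set cX : A × ℕ → X := fun t => (b t : X) with hcXdef
    -- the helper injection
    have hψcard : #((A × ℕ) × A × ℕ × ℕ) = #A := by
      simp only [Cardinal.mk_prod, Cardinal.mk_nat, Cardinal.lift_aleph0, Cardinal.lift_id,
        Cardinal.lift_uzero, hmkA, Cardinal.aleph0_mul_aleph0]
      simp only [Cardinal.mul_aleph0_eq hα, Cardinal.mul_eq_self hα]
    obtain ⟨ψ⟩ := Cardinal.eq.mp hψcard
    set sfun : (A × ℕ) × (A × ℕ) × ℕ → A × ℕ := fun i => i.2.1 with hsfundef
    set hfun : (A × ℕ) × (A × ℕ) × ℕ → A × ℕ :=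
      fun i => (ψ (i.1, i.2.1.1, i.2.1.2, i.2.2), i.2.1.2 + 1) with hhfundef
    have hinj : Function.Injective hfun := by
      rintro ⟨k, ⟨a, m⟩, n⟩ ⟨k', ⟨a', m'⟩, n'⟩ hij
      have h1 := congrArg Prod.fst hij
      simp only [hhfundef] at h1
      have h2 := ψ.injective h1
      simp only [Prod.mk.injEq] at h2 ⊢
      exact ⟨h2.1, ⟨h2.2.1, h2.2.2.1⟩, h2.2.2.2⟩
    have hlevel : ∀ i, (hfun i).2 = (sfun i).2 + 1 := fun i => rfl
    -- countable decreasing basis of neighborhoods of 0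
    obtain ⟨U, hU⟩ := (nhds (0 : X)).exists_antitone_basis
    -- small scalars
    have hexlam : ∀ i : (A × ℕ) × (A × ℕ) × ℕ,
        ∃ μ : 𝕜, μ ≠ 0 ∧ μ • cX (hfun i) ∈ U i.2.2 := by
      intro i
      have hcont : Filter.Tendsto (fun μ : 𝕜 => μ • cX (hfun i)) (nhds 0) (nhds 0) := by
        have h : Filter.Tendsto (fun μ : 𝕜 => μ • cX (hfun i)) (nhds 0) (nhds ((0 : 𝕜) • cX (hfun i))) :=
          (continuous_id.smul (continuous_const (y := cX (hfun i)))).tendsto (0 : 𝕜)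
        simpa using h
      have hpre : (fun μ : 𝕜 => μ • cX (hfun i)) ⁻¹' U i.2.2 ∈ nhds (0 : 𝕜) :=
        hcont (hU.1.mem_of_mem trivial)
      have hpre' : (fun μ : 𝕜 => μ • cX (hfun i)) ⁻¹' U i.2.2 ∈ nhdsWithin (0 : 𝕜) {(0 : 𝕜)}ᶜ :=
        mem_nhdsWithin_of_mem_nhds hpre
      obtain ⟨μ, hμ1, hμ2⟩ := Filter.nonempty_of_mem (Filter.inter_mem hpre' self_mem_nhdsWithin)
      refine ⟨μ, ?_, hμ1⟩
      simpa using hμ2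
    choose lam hlam0 hlamU using hexlam
    -- the generators
    set v : (A × ℕ) × (A × ℕ) × ℕ → ↥V := fun i => b (sfun i) + lam i • b (hfun i) with hvdef
    have hrepr : ∀ j, b.repr (v j) =
        Finsupp.single (sfun j) 1 + Finsupp.single (hfun j) (lam j) := by
      intro j
      simp [hvdef, map_add, map_smul, Module.Basis.repr_self, Finsupp.smul_single]
    -- linear independence of the full family
    have hliv : LinearIndependent 𝕜 v := by
      rw [linearIndependent_iff]
      intro l hl
      by_contra hne
      obtain ⟨i, hiF, hmax⟩ := l.support.exists_max_image (fun j => (hfun j).2)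
        (Finsupp.support_nonempty_iff.mpr hne)
      have h0 : (b.repr (Finsupp.linearCombination 𝕜 v l)) (hfun i) = 0 := by
        rw [hl, map_zero]; rfl
      rw [Finsupp.linearCombination_apply, Finsupp.sum, map_sum, Finsupp.finset_sum_apply] at h0
      have hterm : ∀ j ∈ l.support, (b.repr (l j • v j)) (hfun i)
          = (if sfun j = hfun i then l j else 0)
            + (if hfun j = hfun i then l j * lam j else 0) := by
        intro j _
        rw [map_smul, hrepr j, Finsupp.smul_apply, Finsupp.add_apply, Finsupp.single_apply,
          Finsupp.single_apply, smul_eq_mul, mul_add]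
        split_ifs <;> ring
      rw [Finset.sum_congr rfl hterm, Finset.sum_add_distrib] at h0
      have hs0 : (∑ j ∈ l.support, if sfun j = hfun i then l j else 0) = 0 := by
        apply Finset.sum_eq_zero
        intro j hj
        rw [if_neg]
        intro hsj
        have h2 : (sfun j).2 = (sfun i).2 + 1 := by rw [hsj]
        have h3 : (hfun j).2 = (sfun i).2 + 2 := by rw [hlevel j, h2]
        have h4 : (hfun j).2 ≤ (hfun i).2 := hmax j hj
        rw [h3, hlevel i] at h4
        omega
      have hh : (∑ j ∈ l.support, if hfun j = hfun i then l j * lam j else 0)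
          = l i * lam i := by
        rw [Finset.sum_eq_single i]
        · rw [if_pos rfl]
        · intro j _ hne'
          rw [if_neg (fun h => hne' (hinj h))]
        · intro h; exact absurd hiF h
      rw [hs0, hh, zero_add] at h0
      rcases mul_eq_zero.mp h0 with h | h
      · exact (Finsupp.mem_support_iff.mp hiF) h
      · exact (hlam0 i) h
    set g : (A × ℕ) × (A × ℕ) × ℕ → X := fun i => V.subtype (v i) with hgdef
    have hlig : LinearIndependent 𝕜 g := hliv.map' V.subtype (Submodule.ker_subtype V)
    have hgV : ∀ i, g i ∈ V := fun i => (v i).2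
    set S : (A × ℕ) → Submodule 𝕜 X :=
      fun κ => Submodule.span 𝕜 (g '' {i : (A × ℕ) × (A × ℕ) × ℕ | i.1 = κ}) with hSdef
    have hSV : ∀ κ, S κ ≤ V := by
      intro κ
      rw [hSdef, Submodule.span_le]
      rintro x ⟨i, _, rfl⟩
      exact hgV i
    refine ⟨A × ℕ, fun κ => W ⊔ S κ, hmkT, ?_, ?_⟩
    · intro κ
      have hle : W ⊔ S κ ≤ Y := sup_le hWY ((hSV κ).trans hVY)
      have hseqmem : ∀ (t : A × ℕ) (n : ℕ), g (κ, t, n) ∈ W ⊔ S κ := fun t n =>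
        Submodule.mem_sup_right (Submodule.subset_span ⟨(κ, t, n), rfl, rfl⟩)
      -- every basis vector of V lies in the closure of W ⊔ S κ
      have hcmem : ∀ t : A × ℕ, cX t ∈ closure ((W ⊔ S κ : Submodule 𝕜 X) : Set X) := by
        intro t
        have h1 : ∀ n : ℕ, g (κ, t, n) - cX t ∈ U n := by
          intro n
          have hgc : g (κ, t, n) = cX t + lam (κ, t, n) • cX (hfun (κ, t, n)) := rfl
          rw [hgc, add_sub_cancel_left]
          exact hlamU (κ, t, n)
        have h2 : Filter.Tendsto (fun n => g (κ, t, n) - cX t) Filter.atTop (nhds 0) :=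
          hU.tendsto h1
        have h3 := h2.add_const (cX t)
        simp only [sub_add_cancel, zero_add] at h3
        exact mem_closure_of_tendsto h3 (Filter.Eventually.of_forall fun n => hseqmem t n)
      refine ⟨le_sup_left, ?_, ?_, fun x hx => hYsub (hle hx)⟩
      · -- density
        have hclos : Y ≤ (W ⊔ S κ).topologicalClosure := by
          rw [← hWVsup]
          apply sup_le
          · exact le_sup_left.trans (Submodule.le_topologicalClosure _)
          · have hVspan : V = Submodule.span 𝕜 (Set.range cX) := by
              have hr : Set.range cX = V.subtype '' Set.range b := by
                rw [← Set.range_comp]; rfl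
              rw [hr, ← Submodule.map_span, Module.Basis.span_eq, Submodule.map_top,
                Submodule.range_subtype]
            rw [hVspan, Submodule.span_le]
            rintro x ⟨t, rfl⟩
            show cX t ∈ ((W ⊔ S κ).topologicalClosure : Set X)
            rw [Submodule.topologicalClosure_coe]
            exact hcmem t
        have hsub' : (Y : Set X) ⊆ closure ((W ⊔ S κ : Submodule 𝕜 X) : Set X) := by
          intro x hx
          have := hclos hx
          rwa [← Submodule.topologicalClosure_coe]
        exact dense_closure.mp (hYd.mono hsub')
      · -- rank
        apply le_antisymm
        · rw [← hYr]; exact Submodule.rank_mono hle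
        · set g2 : (A × ℕ) × ℕ → X := fun p => g (κ, p.1, p.2) with hg2def
          have hg2inj : Function.Injective (fun p : (A × ℕ) × ℕ => ((κ, p.1, p.2) :
              (A × ℕ) × (A × ℕ) × ℕ)) := by
            intro p q h
            simp only [Prod.mk.injEq, true_and] at h
            exact Prod.ext h.1 h.2
          have hg2 : LinearIndependent 𝕜 g2 := hlig.comp _ hg2inj
          have hsp : Submodule.span 𝕜 (Set.range g2) ≤ W ⊔ S κ := by
            rw [Submodule.span_le]
            rintro x ⟨p, rfl⟩
            exact hseqmem p.1 p.2
          have hr := rank_span hg2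
          have hrange : #(Set.range g2) = α := by
            have h1 := Cardinal.mk_range_eq_of_injective hg2.injective
            rw [Cardinal.lift_id, Cardinal.lift_id] at h1
            rw [h1]
            simp only [Cardinal.mk_prod, Cardinal.mk_nat, Cardinal.lift_aleph0,
              Cardinal.lift_uzero, Cardinal.lift_id, hmkA, Cardinal.aleph0_mul_aleph0]
            simp only [Cardinal.mul_aleph0_eq hα, Cardinal.mul_eq_self hα]
          calc α = Module.rank 𝕜 (Submodule.span 𝕜 (Set.range g2)) := by rw [hr, hrange]
            _ ≤ Module.rank 𝕜 (W ⊔ S κ : Submodule 𝕜 X) := Submodule.rank_mono hsp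
    · -- pairwise intersections
      intro i j hij
      apply le_antisymm
      · intro x hx
        rw [Submodule.mem_inf] at hx
        obtain ⟨w1, hw1, s1, hs1, hx1⟩ := Submodule.mem_sup.mp hx.1
        obtain ⟨w2, hw2, s2, hs2, hx2⟩ := Submodule.mem_sup.mp hx.2
        have hdiff : s1 - s2 ∈ W ⊓ V := by
          constructor
          · have h5 : w1 + s1 = w2 + s2 := hx1.trans hx2.symm
            have heq : s1 - s2 = w2 - w1 := by
              rw [sub_eq_sub_iff_add_eq_add, add_comm]
              exact h5
            rw [heq]
            exact sub_mem hw2 hw1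
          · exact sub_mem (hSV i hs1) (hSV j hs2)
        rw [hWVinf, Submodule.mem_bot, sub_eq_zero] at hdiff
        have hdisj : Disjoint (S i) (S j) := by
          apply hlig.disjoint_span_image
          rw [Set.disjoint_left]
          rintro k hk hk'
          exact hij (hk ▸ hk')
        have hs10 : s1 = 0 := by
          have hm : s1 ∈ S i ⊓ S j := Submodule.mem_inf.mpr ⟨hs1, hdiff ▸ hs2⟩
          rw [hdisj.eq_bot, Submodule.mem_bot] at hm
          exact hm
        rw [← hx1, hs10, add_zero]
        exact hw1
      · exact le_inf le_sup_left le_sup_left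
  · rintro ⟨hex, hInf⟩
    refine ⟨hex, ?_⟩
    intro W h1 h2
    obtain ⟨ι, Yf, hι, hY, _⟩ := hInf W h1 h2
    have hne : Nonempty ι := by
      rw [← Cardinal.mk_ne_zero_iff, hι]
      exact (lt_of_lt_of_le Cardinal.aleph0_pos hα).ne'
    obtain ⟨i⟩ := hne
    exact ⟨Yf i, (hY i).1, (hY i).2.1, (hY i).2.2.1, (hY i).2.2.2⟩
end

section
/- Let X be a commutative free algebra over K (K = ℝ or ℂ) with set of free generators A, let S ⊆ A, let R ⊆ ⟨S⟩ be a set of free generators, and let x ∈ X \ ⟨S⟩. Then R ∪ {x} is a set of free generators. -/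
universe u

open Cardinal

variable (𝕜 : Type) [RCLike 𝕜] {X : Type} [NonUnitalCommRing X] [Module 𝕜 X]
  [SMulCommClass 𝕜 X X] [IsScalarTower 𝕜 X X]

/-- `S` is a set of free generators (SFG): for every `n`, every nonzero polynomial `P` in `n`
variables with no constant term and all pairwise distinct `x₁, …, x_n ∈ S` one has
`P(x₁, …, x_n) ≠ 0`.  (The evaluation of a polynomial with no constant term at elements of the
non-unital algebra `X` is performed inside the unitization of `X`, where it lands in the copy
of `X`.) -/
def IsSFG (S : Set X) : Prop :=
  ∀ (n : ℕ) (x : Fin n → X), (∀ i, x i ∈ S) → Function.Injective x →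
    ∀ P : MvPolynomial (Fin n) 𝕜, P ≠ 0 → MvPolynomial.constantCoeff P = 0 →
      MvPolynomial.aeval (fun i => (x i : Unitization 𝕜 X)) P ≠ 0


section Aux

open MvPolynomial

set_option maxHeartbeats 1000000

private lemma keyFin {D : Type*} [CommRing D] [IsDomain D] :
    ∀ (n : ℕ) (w : MvPolynomial (Fin n) D), IsAlgebraic D w → ∃ d, w = C d := by
  intro n
  induction n with
  | zero =>
    intro w _
    obtain ⟨d, rfl⟩ := C_surjective (Fin 0) w
    exact ⟨d, rfl⟩
  | succ n ih =>
    intro w hw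
    have hw' : IsAlgebraic D (finSuccEquiv D n w) := hw.algHom (finSuccEquiv D n).toAlgHom
    have hwE : IsAlgebraic (MvPolynomial (Fin n) D) (finSuccEquiv D n w) := by
      refine hw'.extendScalars ?_
      rw [MvPolynomial.algebraMap_eq]
      exact C_injective _ _
    have hdeg : (finSuccEquiv D n w).natDegree = 0 := by
      by_contra hne
      have hne0 : finSuccEquiv D n w ≠ 0 := fun h => hne (by simp [h])
      exact (Polynomial.transcendental _ hne
        (mem_nonZeroDivisors_of_ne_zero
          (Polynomial.leadingCoeff_ne_zero.mpr hne0))) hwE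
    obtain ⟨e, he⟩ := Polynomial.natDegree_eq_zero.mp hdeg
    have he' : IsAlgebraic D e := by
      have h2 : IsAlgebraic D (Polynomial.C e) := he ▸ hw'
      exact (isAlgebraic_algHom_iff (Polynomial.CAlgHom (R := D))
        Polynomial.C_injective).mp h2
    obtain ⟨d, rfl⟩ := ih e he'
    refine ⟨d, (finSuccEquiv D n).injective ?_⟩
    rw [← he]
    have h1 : (C d : MvPolynomial (Fin (n+1)) D) = algebraMap D _ d := rfl
    rw [h1, AlgEquiv.commutes]
    simp [Polynomial.algebraMap_apply, MvPolynomial.algebraMap_eq]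

private lemma keyMv {D : Type*} [CommRing D] [IsDomain D] {τ : Type*}
    (w : MvPolynomial τ D) (h : IsAlgebraic D w) : ∃ d, w = C d := by
  obtain ⟨t, q, rfl⟩ := exists_finset_rename w
  have hq : IsAlgebraic D q :=
    (isAlgebraic_algHom_iff (rename ((↑) : {x // x ∈ t} → τ))
      (rename_injective _ Subtype.val_injective)).mp h
  have hq' : IsAlgebraic D ((renameEquiv D (Fintype.equivFin {x // x ∈ t})) q) :=
    hq.algHom (renameEquiv D _).toAlgHom
  obtain ⟨d, hd⟩ := keyFin _ _ hq'
  refine ⟨d, ?_⟩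
  have hqC : q = C d := by
    have := congrArg (renameEquiv D (Fintype.equivFin {x // x ∈ t})).symm hd
    simpa using this
  rw [hqC, rename_C]

private lemma keyTrans {𝕜 : Type*} [Field 𝕜] {σ : Type*} (s : Set σ)
    {p : MvPolynomial σ 𝕜} (hp : p ∉ supported 𝕜 s) :
    Transcendental (MvPolynomial.supported 𝕜 s) p := by
  classical
  let eqv : σ ≃ (↥sᶜ ⊕ ↥s) := (Equiv.Set.sumCompl s).symm.trans (Equiv.sumComm _ _)
  let Φ : MvPolynomial σ 𝕜 ≃ₐ[𝕜] MvPolynomial ↥sᶜ (MvPolynomial s 𝕜) :=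
    (renameEquiv 𝕜 eqv).trans (sumAlgEquiv 𝕜 _ _)
  have hΦC : ∀ a : 𝕜, Φ (C a) = C (C a) := by
    intro a
    show (sumAlgEquiv 𝕜 _ _) (renameEquiv 𝕜 eqv (C a)) = C (C a)
    rw [renameEquiv_apply, rename_C]
    exact sumAlgEquiv_C_inl 𝕜 _ _ a
  have hΦX : ∀ j : s, Φ (X (j : σ)) = C (X j) := by
    intro j
    show (sumAlgEquiv 𝕜 _ _) (renameEquiv 𝕜 eqv (X (j : σ))) = C (X j)
    rw [renameEquiv_apply, rename_X]
    have : eqv (j : σ) = Sum.inr j := by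
      simp [eqv, Equiv.Set.sumCompl_symm_apply_of_mem j.2]
    rw [this]
    exact sumAlgEquiv_X_inr 𝕜 _ _ j
  have hcomp : RingHom.comp (algebraMap (supported 𝕜 s) (MvPolynomial σ 𝕜))
      ((supportedEquivMvPolynomial s).symm : MvPolynomial s 𝕜 ≃ₐ[𝕜] supported 𝕜 s) =
      RingHom.comp (Φ.symm : MvPolynomial ↥sᶜ (MvPolynomial s 𝕜) ≃ₐ[𝕜] MvPolynomial σ 𝕜)
        (algebraMap (MvPolynomial s 𝕜) (MvPolynomial ↥sᶜ (MvPolynomial s 𝕜))) := by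
    apply MvPolynomial.ringHom_ext
    · intro a
      simp only [RingHom.comp_apply, RingHom.coe_coe]
      rw [supportedEquivMvPolynomial_symm_C, ← IsScalarTower.algebraMap_apply,
        show (algebraMap (MvPolynomial s 𝕜) (MvPolynomial ↥sᶜ (MvPolynomial s 𝕜))) (C a)
          = C (C a) from rfl, ← hΦC a, AlgEquiv.symm_apply_apply]
      rfl
    · intro j
      simp only [RingHom.comp_apply, RingHom.coe_coe]
      rw [show (algebraMap (MvPolynomial s 𝕜) (MvPolynomial ↥sᶜ (MvPolynomial s 𝕜))) (X j)
          = C (X j) from rfl, ← hΦX j, AlgEquiv.symm_apply_apply]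
      exact supportedEquivMvPolynomial_symm_X s j
  intro halg
  have h2 : IsAlgebraic (MvPolynomial s 𝕜) (Φ p) := by
    have hiff := isAlgebraic_ringHom_iff_of_comp_eq
      ((supportedEquivMvPolynomial s).symm)
      (Φ.symm : MvPolynomial ↥sᶜ (MvPolynomial s 𝕜) ≃ₐ[𝕜] MvPolynomial σ 𝕜)
      Φ.symm.injective hcomp (a := Φ p)
    rw [show Φ.symm (Φ p) = p from Φ.symm_apply_apply p] at hiff
    exact hiff.mp halg
  obtain ⟨d, hd⟩ := keyMv _ h2
  apply hp
  have hpd : p = ((supportedEquivMvPolynomial s).symm d : MvPolynomial σ 𝕜) := by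
    have hc := congrArg (fun (r : MvPolynomial s 𝕜 →+* MvPolynomial σ 𝕜) => r d) hcomp
    simp only [RingHom.comp_apply, RingHom.coe_coe] at hc
    rw [show (algebraMap (MvPolynomial s 𝕜) (MvPolynomial ↥sᶜ (MvPolynomial s 𝕜))) d
        = C d from rfl] at hc
    rw [show p = Φ.symm (C d) from by rw [← hd, AlgEquiv.symm_apply_apply]]
    exact hc.symm
  rw [hpd]
  exact Subtype.coe_prop _

end Aux

section Aux2

variable {𝕜 : Type} [RCLike 𝕜] {X : Type} [NonUnitalCommRing X] [Module 𝕜 X]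
  [SMulCommClass 𝕜 X X] [IsScalarTower 𝕜 X X]

set_option maxHeartbeats 1000000

private lemma inr_mem_adjoin {T : Set X} {y : X} (hy : y ∈ NonUnitalAlgebra.adjoin 𝕜 T) :
    (y : Unitization 𝕜 X) ∈ Algebra.adjoin 𝕜 (((↑) : X → Unitization 𝕜 X) '' T) := by
  induction hy using NonUnitalAlgebra.adjoin_induction with
  | mem z hz => exact Algebra.subset_adjoin ⟨z, hz, rfl⟩
  | add a b _ _ ha hb => rw [Unitization.inr_add]; exact add_mem ha hb
  | zero => rw [show ((0 : X) : Unitization 𝕜 X) = 0 from Unitization.inr_zero 𝕜]; exact zero_mem _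
  | mul a b _ _ ha hb => rw [Unitization.inr_mul]; exact mul_mem ha hb
  | smul r a _ ha => rw [Unitization.inr_smul]; exact Subalgebra.smul_mem _ ha r

private lemma snd_mem_adjoin {T : Set X} {u : Unitization 𝕜 X}
    (hu : u ∈ Algebra.adjoin 𝕜 (((↑) : X → Unitization 𝕜 X) '' T)) :
    u.snd ∈ NonUnitalAlgebra.adjoin 𝕜 T := by
  induction hu using Algebra.adjoin_induction with
  | mem z hz =>
    obtain ⟨y, hy, rfl⟩ := hz
    rw [Unitization.snd_inr]
    exact NonUnitalAlgebra.subset_adjoin 𝕜 hy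
  | algebraMap c =>
    rw [Unitization.algebraMap_eq_inl, Unitization.snd_inl]
    exact zero_mem _
  | add a b _ _ ha hb => rw [Unitization.snd_add]; exact add_mem ha hb
  | mul a b _ _ ha hb =>
    rw [Unitization.snd_mul]
    exact add_mem (add_mem (SMulMemClass.smul_mem _ hb) (SMulMemClass.smul_mem _ ha))
      (mul_mem ha hb)

private lemma sfg_aux {S : Set X} (hS : IsSFG 𝕜 S) {n : ℕ} {x : Fin n → X}
    (hmem : ∀ i, x i ∈ S) (hinj : Function.Injective x) :
    AlgebraicIndependent 𝕜 (fun i => (x i : Unitization 𝕜 X)) := by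
  rw [algebraicIndependent_iff]
  intro P hP
  by_contra hP0
  have hc : MvPolynomial.constantCoeff P = 0 := by
    have h1 : (Unitization.fstHom 𝕜 X).comp
        (MvPolynomial.aeval fun i => (x i : Unitization 𝕜 X)) =
        MvPolynomial.aeval (fun _ : Fin n => (0 : 𝕜)) := by
      rw [MvPolynomial.comp_aeval]
      congr 1
    have h2 := congrArg (Unitization.fstHom 𝕜 X) hP
    rw [map_zero, ← AlgHom.comp_apply, h1, MvPolynomial.aeval_zero'] at h2
    simpa using h2
  exact hS n x hmem hinj P hP0 hc hP

private lemma sfg_to_indep {S : Set X} (hS : IsSFG 𝕜 S) :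
    AlgebraicIndependent 𝕜
      ((↑) : (((↑) : X → Unitization 𝕜 X) '' S) → Unitization 𝕜 X) := by
  classical
  apply algebraicIndependent_of_finite
  intro t ht hfin
  haveI : Fintype t := hfin.fintype
  set e := (Fintype.equivFin t).symm with he
  set x : Fin (Fintype.card t) → X := fun i => ((e i : Unitization 𝕜 X)).snd with hx
  have key : ∀ i, ((x i : Unitization 𝕜 X) = ↑(e i)) ∧ x i ∈ S := by
    intro i
    obtain ⟨y, hy, hyi⟩ := ht (e i).2
    constructor
    · rw [hx]; simp only; rw [← hyi, Unitization.snd_inr]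
    · rw [hx]; simp only; rw [← hyi, Unitization.snd_inr]; exact hy
  have hinj : Function.Injective x := by
    intro i j hij
    have : ((e i : Unitization 𝕜 X)) = ↑(e j) := by
      rw [← (key i).1, ← (key j).1, hij]
    exact e.injective (Subtype.val_injective this)
  have hind := sfg_aux hS (fun i => (key i).2) hinj
  have heq : (fun i => (x i : Unitization 𝕜 X)) = ((↑) : t → Unitization 𝕜 X) ∘ e := by
    funext i; exact (key i).1
  rw [heq] at hind
  exact (algebraicIndependent_equiv e).mp hind

private lemma indep_to_sfg {S : Set X}
    (h : AlgebraicIndependent 𝕜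
      ((↑) : (((↑) : X → Unitization 𝕜 X) '' S) → Unitization 𝕜 X)) :
    IsSFG 𝕜 S := by
  intro n x hmem hinj P hP0 _ hPeval
  have hind : AlgebraicIndependent 𝕜 (fun i => (x i : Unitization 𝕜 X)) := by
    have := h.comp
      (fun i => (⟨(x i : Unitization 𝕜 X), ⟨x i, hmem i, rfl⟩⟩ :
        (((↑) : X → Unitization 𝕜 X) '' S)))
      (fun i j hij => hinj (Unitization.inr_injective (congrArg Subtype.val hij)))
    exact this
  exact hP0 (algebraicIndependent_iff.mp hind P hPeval)

end Aux2

set_option maxHeartbeats 2000000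

/-- Let `X` be a commutative free algebra over `𝕜` (`𝕜 = ℝ` or `ℂ`) with set
of free generators `A`, let `S ⊆ A`, let `R ⊆ ⟨S⟩` be a set of free generators, and let
`x ∈ X \ ⟨S⟩`.  Then `R ∪ {x}` is a set of free generators. -/
theorem stmt13 (A S R : Set X) (hA : IsSFG 𝕜 A)
    (hXfree : NonUnitalAlgebra.adjoin 𝕜 A = (⊤ : NonUnitalSubalgebra 𝕜 X))
    (hSA : S ⊆ A) (hR : R ⊆ (NonUnitalAlgebra.adjoin 𝕜 S : Set X)) (hRsfg : IsSFG 𝕜 R)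
    (x : X) (hx : x ∉ NonUnitalAlgebra.adjoin 𝕜 S) :
    IsSFG 𝕜 (R ∪ {x}) := by
  classical
  set U := Unitization 𝕜 X with hU
  set cA : Set U := ((↑) : X → U) '' A with hcA
  have hAind := sfg_to_indep hA
  have hAtop : Algebra.adjoin 𝕜 cA = ⊤ := by
    rw [eq_top_iff]
    rintro u -
    rw [← Unitization.inl_fst_add_inr_snd_eq u]
    refine add_mem ?_ (inr_mem_adjoin (by rw [hXfree]; trivial))
    rw [← Unitization.algebraMap_eq_inl]
    exact Subalgebra.algebraMap_mem _ u.fst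
  set ι := ↥cA with hι
  have hEbij : Function.Bijective (MvPolynomial.aeval (R := 𝕜) ((↑) : ι → U)) := by
    constructor
    · exact algebraicIndependent_iff_injective_aeval.mp hAind
    · rw [← Set.range_eq_univ]
      have hr : Set.range (MvPolynomial.aeval (R := 𝕜) ((↑) : ι → U)) =
          (Algebra.adjoin 𝕜 (Set.range ((↑) : ι → U)) : Set U) := by
        rw [Algebra.adjoin_range_eq_range_aeval]
        rfl
      rw [hr, Subtype.range_coe, hAtop]
      rfl
  set E : MvPolynomial ι 𝕜 ≃ₐ[𝕜] U :=
    AlgEquiv.ofBijective (MvPolynomial.aeval (R := 𝕜) ((↑) : ι → U)) hEbij with hE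
  have hEapp : ∀ q, E q = MvPolynomial.aeval (R := 𝕜) ((↑) : ι → U) q := fun _ => rfl
  have hEX : ∀ a : ι, E (MvPolynomial.X a) = ↑a := by intro a; rw [hEapp, MvPolynomial.aeval_X]
  set s' : Set ι := {a : ι | (a : U) ∈ ((↑) : X → U) '' S} with hs'
  -- image of X-variables of s'
  have himg : (fun a : ι => E (MvPolynomial.X a)) '' s' = ((↑) : X → U) '' S := by
    ext u
    constructor
    · rintro ⟨a, ha, rfl⟩
      show E (MvPolynomial.X a) ∈ _
      rw [hEX]
      exact ha
    · rintro ⟨y, hy, rfl⟩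
      refine ⟨⟨(y : U), ⟨y, hSA hy, rfl⟩⟩, ?_, ?_⟩
      · exact ⟨y, hy, rfl⟩
      · show E (MvPolynomial.X _) = _
        rw [hEX]
  have hsup : ∀ q : MvPolynomial ι 𝕜,
      q ∈ MvPolynomial.supported 𝕜 s' ↔ E q ∈ Algebra.adjoin 𝕜 (((↑) : X → U) '' S) := by
    intro q
    have hmap : (MvPolynomial.supported 𝕜 s').map E.toAlgHom
        = Algebra.adjoin 𝕜 (((↑) : X → U) '' S) := by
      rw [MvPolynomial.supported, AlgHom.map_adjoin]
      congr 1
      rw [Set.image_image]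
      exact himg
    constructor
    · intro hq
      rw [← hmap]
      exact ⟨q, hq, rfl⟩
    · intro hq
      rw [← hmap] at hq
      obtain ⟨q', hq', hqq⟩ := hq
      rwa [← E.injective hqq]
  set p : MvPolynomial ι 𝕜 := E.symm (x : U) with hp'
  have hpE : E p = (x : U) := E.apply_symm_apply _
  have hp : p ∉ MvPolynomial.supported 𝕜 s' := by
    intro hmem
    apply hx
    have := (hsup p).mp hmem
    rw [hpE] at this
    have := snd_mem_adjoin this
    rwa [Unitization.snd_inr] at this
  set T₀ : Set (MvPolynomial ι 𝕜) := ⇑E.symm '' (((↑) : X → U) '' R) with hT₀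
  have hT₀sup : T₀ ⊆ (MvPolynomial.supported 𝕜 s' : Set (MvPolynomial ι 𝕜)) := by
    rintro _ ⟨u, ⟨y, hy, rfl⟩, rfl⟩
    have : E (E.symm (y : U)) ∈ Algebra.adjoin 𝕜 (((↑) : X → U) '' S) := by
      rw [E.apply_symm_apply]
      exact inr_mem_adjoin (hR hy)
    exact (hsup _).mpr this
  have hT₀ind : AlgebraicIndependent 𝕜 ((↑) : T₀ → MvPolynomial ι 𝕜) := by
    have h0 := sfg_to_indep hRsfg
    have h1 := h0.map' (f := E.symm.toAlgHom) E.symm.injective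
    exact h1.image
  have hunion : AlgebraicIndependent 𝕜 ((↑) : ↥(T₀ ∪ {p}) → MvPolynomial ι 𝕜) := by
    apply algebraicIndependent_of_finite
    intro t ht hfin
    by_cases hpt : p ∈ t
    · have h1 : t \ {p} ⊆ T₀ := by
        rintro z ⟨hz1, hz2⟩
        rcases ht hz1 with h | h
        · exact h
        · exact absurd h hz2
      have base := hT₀ind.mono h1
      have htr : Transcendental
          (Algebra.adjoin 𝕜 (Set.range ((↑) : ↥(t \ {p}) → MvPolynomial ι 𝕜))) p := by
        rw [Subtype.range_coe]
        exact (keyTrans s' hp).of_tower_top_of_subalgebra_le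
          (Algebra.adjoin_le (h1.trans hT₀sup))
      have hopt := (base.option_iff_transcendental p).2 htr
      have hnot : p ∉ t \ {p} := by simp
      have hins : t = insert p (t \ {p}) := by
        rw [Set.insert_diff_singleton, Set.insert_eq_self.mpr hpt]
      rw [hins]
      convert hopt.comp _ (Set.subtypeInsertEquivOption hnot).injective
      ext y
      by_cases h : ↑y = p <;> simp [h, Set.subtypeInsertEquivOption]
    · refine hT₀ind.mono fun z hz => ?_
      rcases ht hz with h | h
      · exact h
      · rw [h] at hz
        exact absurd hz hpt
  have hfin1 := (hunion.map' (f := E.toAlgHom) E.injective).image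
  have him1 : ⇑E.toAlgHom '' T₀ = ((↑) : X → U) '' R := by
    rw [hT₀, Set.image_image]
    have h : ∀ u : U, E.toAlgHom (E.symm u) = u := fun u => E.apply_symm_apply u
    simp only [h]
    exact Set.image_id _
  have hset : ⇑E.toAlgHom '' (T₀ ∪ {p}) = ((↑) : X → U) '' (R ∪ {x}) := by
    rw [Set.image_union, Set.image_union, Set.image_singleton, Set.image_singleton, him1,
      show E.toAlgHom p = (x : U) from hpE]
  rw [hset] at hfin1
  exact indep_to_sfg hfin1
end

section
/- Let X be a commutative topological free algebra over K (K = ℝ or ℂ) that is α-generated free (it has a set of free generators A with |A| = α and X = ⟨A⟩), where α is infinite and w(X) ≤ α. Then there is a family {Y_κ}_{κ<α} of subalgebras of X such that: (1) each Y_κ is an α-generated free dense subalgebra of X; and (2) the family {Y_κ}_{κ<α} is algebraically independent (in particular Y_{κ₁} ∩ Y_{κ₂} = {0} whenever κ₁ ≠ κ₂). -/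
universe u

open Cardinal

namespace Stmt15Aux

open MvPolynomial

section PolyLemmas

variable {K : Type*} [Field K]

theorem aeval_congr_vars {σ τ : Type*} [CommSemiring τ] [Algebra K τ]
    {g₁ g₂ : σ → τ} {p : MvPolynomial σ K}
    (h : ∀ i ∈ p.vars, g₁ i = g₂ i) : aeval g₁ p = aeval g₂ p := by
  have := eval₂Hom_congr' (f₁ := algebraMap K τ) (f₂ := algebraMap K τ)
    (g₁ := g₁) (g₂ := g₂) (p₁ := p) (p₂ := p) rfl (fun i h1 _ => h i h1) rfl
  simpa [aeval_def] using this

theorem bind₁_congr_vars {σ : Type*} {g₁ g₂ : σ → MvPolynomial σ K} {p : MvPolynomial σ K}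
    (h : ∀ i ∈ p.vars, g₁ i = g₂ i) : bind₁ g₁ p = bind₁ g₂ p :=
  aeval_congr_vars h

theorem bind₁_update_injective {σ : Type*} [DecidableEq σ] (v : σ) (t : K) (ht : t ≠ 0)
    (q : MvPolynomial σ K) (hq : v ∉ q.vars) :
    Function.Injective (bind₁ (Function.update X v (C t * X v + q)) :
      MvPolynomial σ K →ₐ[K] MvPolynomial σ K) := by
  set g := Function.update X v (C t * X v + q) with hg
  set g' := Function.update X v (C t⁻¹ * (X v - q)) with hg'
  have hleft : ∀ p, bind₁ g' (bind₁ g p) = p := by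
    intro p
    rw [bind₁_bind₁]
    have hfun : (fun i => bind₁ g' (g i)) = X := by
      funext i
      by_cases hiv : i = v
      · subst hiv
        have h1 : g i = C t * X i + q := Function.update_self ..
        have h2 : bind₁ g' q = q := by
          have : bind₁ g' q = bind₁ X q :=
            bind₁_congr_vars
              (fun u hu => Function.update_of_ne (fun huv => hq (by rwa [huv] at hu)) _ _)
          rw [this, bind₁_X_left]; rfl
        rw [h1, map_add, map_mul, bind₁_C_right, bind₁_X_right, h2]
        have h3 : g' i = C t⁻¹ * (X i - q) := Function.update_self ..
        rw [h3, ← mul_assoc, ← C_mul, mul_inv_cancel₀ ht, C_1, one_mul, sub_add_cancel]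
      · rw [show g i = X i from Function.update_of_ne hiv _ _, bind₁_X_right,
          show g' i = X i from Function.update_of_ne hiv _ _]
    rw [hfun, bind₁_X_left]; rfl
  exact Function.LeftInverse.injective hleft

theorem bind₁_triangular_injective {σ : Type*} [DecidableEq σ] {γ : Type*} [LinearOrder γ]
    (ord : σ → γ) (s : Finset σ) :
    ∀ (g : σ → MvPolynomial σ K),
    (∀ v, v ∉ s → g v = X v) →
    (∀ v ∈ s, ∃ t q, t ≠ 0 ∧ g v = C t * X v + q ∧
        (∀ u ∈ q.vars, u ∈ s → ord u < ord v)) →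
    Function.Injective (bind₁ g : MvPolynomial σ K →ₐ[K] MvPolynomial σ K) := by
  induction s using Finset.strongInduction with
  | _ s ih =>
    intro g hX hs
    rcases s.eq_empty_or_nonempty with rfl | hne
    · have : g = X := funext fun v => hX v (by simp)
      rw [this, bind₁_X_left]
      exact fun a b h => h
    · obtain ⟨v, hv, hvmax⟩ := s.exists_max_image ord hne
      obtain ⟨t, q, ht, hgv, hq⟩ := hs v hv
      have hvq : v ∉ q.vars := fun h => lt_irrefl _ (hq v h hv)
      set g' := Function.update g v (X v) with hg'def
      set τ := Function.update X v (g v) with hτdef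
      have hτinj : Function.Injective (bind₁ τ : MvPolynomial σ K →ₐ[K] MvPolynomial σ K) := by
        rw [hτdef, hgv]; exact bind₁_update_injective v t ht q hvq
      have hg'inj : Function.Injective (bind₁ g' : MvPolynomial σ K →ₐ[K] MvPolynomial σ K) := by
        apply ih (s.erase v) (Finset.erase_ssubset hv) g'
        · intro u hu
          by_cases huv : u = v
          · subst huv; rw [hg'def]; exact Function.update_self ..
          · rw [hg'def, Function.update_of_ne huv]
            exact hX u (fun hus => hu (Finset.mem_erase.2 ⟨huv, hus⟩))
        · intro u hu
          obtain ⟨huv, hus⟩ := Finset.mem_erase.1 hu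
          obtain ⟨t', q', ht', hgu, hq'⟩ := hs u hus
          exact ⟨t', q', ht', by rw [hg'def, Function.update_of_ne huv]; exact hgu,
            fun w hw hws => hq' w hw (Finset.mem_of_mem_erase hws)⟩
      have hcomp : ∀ p, bind₁ g p = bind₁ τ (bind₁ g' p) := by
        intro p
        rw [bind₁_bind₁]
        apply congrFun
        apply congrArg
        apply congrArg
        funext u
        by_cases huv : u = v
        · subst huv
          rw [hg'def, hτdef]
          rw [Function.update_self, bind₁_X_right, Function.update_self]
        · rw [hg'def, Function.update_of_ne huv]
          by_cases hus : u ∈ s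
          · obtain ⟨t', q', ht', hgu, hq'⟩ := hs u hus
            have hvars : ∀ w ∈ (g u).vars, τ w = X w := by
              intro w hw
              rw [hτdef]
              apply Function.update_of_ne _ _ _
              rintro rfl
              rw [hgu] at hw
              have : w ∈ (C t' * X u : MvPolynomial σ K).vars ∪ q'.vars :=
                vars_add_subset _ _ hw
              rw [vars_C_mul _ ht', vars_X] at this
              rcases Finset.mem_union.1 this with h | h
              · exact huv (Finset.mem_singleton.1 h).symm
              · exact absurd (hvmax u hus) (not_le_of_gt (hq' _ h hv))
            have h5 : bind₁ τ (g u) = bind₁ X (g u) := bind₁_congr_vars hvars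
            rw [h5, bind₁_X_left]; rfl
          · rw [hX u hus, bind₁_X_right, hτdef, Function.update_of_ne huv]
      intro p₁ p₂ h
      apply hg'inj
      apply hτinj
      rw [← hcomp, ← hcomp, h]

theorem constantCoeff_bind₁_eq_zero {σ τ : Type*} (G : σ → MvPolynomial τ K)
    (p : MvPolynomial σ K) (hG : ∀ v, constantCoeff (G v) = 0)
    (hp : constantCoeff p = 0) : constantCoeff (bind₁ G p) = 0 := by
  have h1 : aeval (fun _ => (0:K)) (bind₁ G p) = constantCoeff (bind₁ G p) := by
    rw [aeval_zero']; simp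
  rw [← h1, aeval_bind₁]
  have h2 : (fun v => aeval (fun _ => (0:K)) (G v)) = fun _ => (0:K) := by
    funext v; rw [aeval_zero']; simp [hG v]
  rw [h2, aeval_zero']; simp [hp]

end PolyLemmas

section CardLemmas

open Cardinal

theorem mk_biUnion_lt {c : Cardinal} (hc : ℵ₀ ≤ c) {ι Z : Type} (s : Set ι) (f : ι → Set Z)
    (hs : #s < c) (hf : ∀ i, (f i).Finite) : #(⋃ i ∈ s, f i) < c := by
  rcases eq_or_lt_of_le hc with rfl | hlt
  · have hsf : s.Finite := Cardinal.lt_aleph0_iff_set_finite.1 hs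
    exact Cardinal.lt_aleph0_iff_set_finite.2 (hsf.biUnion (fun i _ => hf i))
  · have h1 : #(⋃ i ∈ s, f i) ≤ #s * ⨆ i : s, #(f i) := Cardinal.mk_biUnion_le f s
    have h2 : (⨆ i : s, #(f i)) ≤ ℵ₀ :=
      ciSup_le' (fun i => le_of_lt ((hf i).lt_aleph0))
    calc #(⋃ i ∈ s, f i) ≤ #s * ℵ₀ := h1.trans (mul_le_mul_right h2 _)
    _ ≤ max (max #s ℵ₀) ℵ₀ := Cardinal.mul_le_max _ _
    _ = max #s ℵ₀ := by rw [max_assoc, max_self]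
    _ < c := max_lt hs hlt

theorem mk_Iic_lt {c : Cardinal} (hc : ℵ₀ ≤ c) (g : c.ord.ToType) :
    #(Set.Iic g) < c := by
  have h1 : #(Set.Iio g) < c := Cardinal.mk_Iio_ord_toType g
  have h2 : Set.Iic g = insert g (Set.Iio g) := Set.Iio_insert.symm
  rw [h2]
  calc #(insert g (Set.Iio g) : Set _) ≤ #(Set.Iio g) + 1 := Cardinal.mk_insert_le
  _ < c := Cardinal.add_lt_of_lt hc h1 (lt_of_lt_of_le Cardinal.one_lt_aleph0 hc)

theorem exists_pick {c : Cardinal} (hc : ℵ₀ ≤ c) {Z : Type} (A : Set Z) (hA : #A = c)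
    (supp : c.ord.ToType → Set Z) (hsupp : ∀ g, (supp g).Finite) :
    ∃ a : c.ord.ToType → A, Function.Injective a ∧
      ∀ g g', g' ≤ g → (a g : Z) ∉ supp g' := by
  classical
  have key : ∀ (g : c.ord.ToType) (prev : ∀ g' : c.ord.ToType, g' < g → A),
      ∃ z : A, ((z : Z) ∉ ⋃ g' ∈ Set.Iic g, supp g') ∧ ∀ g' (h : g' < g), z ≠ prev g' h := by
    intro g prev
    set bad : Set A := ((fun z : A => (z:Z)) ⁻¹' (⋃ g' ∈ Set.Iic g, supp g')) ∪
      (Set.range fun (p : {g' : c.ord.ToType // g' < g}) => prev p.1 p.2) with hbaddef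
    have hb1 : #((fun z : A => (z:Z)) ⁻¹' (⋃ g' ∈ Set.Iic g, supp g')) < c :=
      lt_of_le_of_lt (Cardinal.mk_preimage_of_injective _ _ Subtype.val_injective)
        (mk_biUnion_lt hc _ _ (mk_Iic_lt hc g) hsupp)
    have hb2 : #(Set.range fun (p : {g' : c.ord.ToType // g' < g}) => prev p.1 p.2) < c :=
      lt_of_le_of_lt (Cardinal.mk_range_le) (Cardinal.mk_Iio_ord_toType g)
    have hbad : #bad < c := by
      calc #bad ≤ _ + _ := Cardinal.mk_union_le _ _
      _ < c := Cardinal.add_lt_of_lt hc hb1 hb2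
    have hne : bad ≠ Set.univ := by
      intro h
      rw [h] at hbad
      simp only [Cardinal.mk_univ] at hbad
      rw [hA] at hbad
      exact lt_irrefl _ hbad
    obtain ⟨z, hz⟩ := Set.ne_univ_iff_exists_notMem _ |>.1 hne
    refine ⟨z, fun h => hz (Set.mem_union_left _ h), fun g' h hmem => hz ?_⟩
    exact Set.mem_union_right _ ⟨⟨g', h⟩, hmem.symm⟩
  have wf : WellFounded ((· < ·) : c.ord.ToType → c.ord.ToType → Prop) := IsWellFounded.wf
  set pick : c.ord.ToType → A :=
    wf.fix (fun g ih => (key g ih).choose) with hpickdef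
  have hfix : ∀ g, pick g = (key g (fun g' _ => pick g')).choose := by
    intro g
    rw [hpickdef]
    exact wf.fix_eq _ g
  have hspec : ∀ g, ((pick g : Z) ∉ ⋃ g' ∈ Set.Iic g, supp g') ∧
      ∀ g' (h : g' < g), pick g ≠ pick g' := by
    intro g
    rw [hfix g]
    exact (key g (fun g' _ => pick g')).choose_spec
  refine ⟨pick, ?_, ?_⟩
  · intro g1 g2 h
    by_contra hne
    rcases lt_trichotomy g1 g2 with hlt | rfl | hlt
    · exact (hspec g2).2 g1 hlt h.symm
    · exact hne rfl
    · exact (hspec g1).2 g2 hlt h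
  · intro g g' hle hmem
    exact (hspec g).1 (Set.mem_biUnion hle hmem)

end CardLemmas

section Misc

theorem inj_pair {Z : Type} {g1 g2 : Z} (h : g1 ≠ g2) : Function.Injective ![g1, g2] := by
  intro i j hij
  fin_cases i <;> fin_cases j <;> simp_all

theorem append_injective {Z : Type} {m1 m2 : ℕ} {v1 : Fin m1 → Z} {v2 : Fin m2 → Z}
    (h1 : Function.Injective v1) (h2 : Function.Injective v2)
    (hd : ∀ i j, v1 i ≠ v2 j) : Function.Injective (Fin.append v1 v2) := by
  intro i j
  refine Fin.addCases
    (motive := fun i => Fin.append v1 v2 i = Fin.append v1 v2 j → i = j) ?_ ?_ i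
  · refine Fin.addCases
      (motive := fun j => ∀ i', Fin.append v1 v2 (Fin.castAdd m2 i') = Fin.append v1 v2 j →
        Fin.castAdd m2 i' = j) ?_ ?_ j
    · intro j' i' h
      rw [Fin.append_left, Fin.append_left] at h
      exact congrArg (Fin.castAdd m2) (h1 h)
    · intro j' i' h
      rw [Fin.append_left, Fin.append_right] at h
      exact absurd h (hd i' j')
  · refine Fin.addCases
      (motive := fun j => ∀ i', Fin.append v1 v2 (Fin.natAdd m1 i') = Fin.append v1 v2 j →
        Fin.natAdd m1 i' = j) ?_ ?_ j
    · intro j' i' h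
      rw [Fin.append_right, Fin.append_left] at h
      exact absurd h.symm (hd j' i')
    · intro j' i' h
      rw [Fin.append_right, Fin.append_right] at h
      exact congrArg (Fin.natAdd m1) (h2 h)

end Misc

end Stmt15Aux

variable (𝕜 : Type) [RCLike 𝕜] {X : Type} [NonUnitalCommRing X] [Module 𝕜 X]
  [SMulCommClass 𝕜 X X] [IsScalarTower 𝕜 X X]

namespace Stmt15Aux

open MvPolynomial

theorem sfg_mono {S T : Set X} (h : S ⊆ T) (hT : IsSFG 𝕜 T) : IsSFG 𝕜 S :=
  fun n x hx hinj => hT n x (fun i => h (hx i)) hinj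

theorem adjoin_rep (S : Set X) {z : X} (hz : z ∈ NonUnitalAlgebra.adjoin 𝕜 S) :
    ∃ (n : ℕ) (v : Fin n → X) (P : MvPolynomial (Fin n) 𝕜),
      (∀ i, v i ∈ S) ∧ MvPolynomial.constantCoeff P = 0 ∧
      MvPolynomial.aeval (fun i => (v i : Unitization 𝕜 X)) P = (z : Unitization 𝕜 X) := by
  induction hz using NonUnitalAlgebra.adjoin_induction with
  | mem x hx =>
    refine ⟨1, fun _ => x, MvPolynomial.X 0, fun _ => hx, by simp, ?_⟩
    simp
  | zero =>
    refine ⟨0, Fin.elim0, 0, fun i => i.elim0, map_zero _, ?_⟩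
    simp [Unitization.inr_zero]
  | add x y hx hy ihx ihy =>
    obtain ⟨n₁, v₁, P₁, hv₁, hc₁, he₁⟩ := ihx
    obtain ⟨n₂, v₂, P₂, hv₂, hc₂, he₂⟩ := ihy
    refine ⟨n₁ + n₂, Fin.append v₁ v₂,
      rename (Fin.castAdd n₂) P₁ + rename (Fin.natAdd n₁) P₂, ?_, ?_, ?_⟩
    · intro i
      refine Fin.addCases (fun j => ?_) (fun j => ?_) i
      · rw [Fin.append_left]; exact hv₁ j
      · rw [Fin.append_right]; exact hv₂ j
    · rw [map_add, constantCoeff_rename, constantCoeff_rename, hc₁, hc₂, add_zero]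
    · rw [map_add, aeval_rename, aeval_rename]
      have e₁ : ((fun i => ((Fin.append v₁ v₂ i : X) : Unitization 𝕜 X)) ∘ Fin.castAdd n₂)
          = fun i => ((v₁ i : X) : Unitization 𝕜 X) := by
        funext j; simp [Function.comp, Fin.append_left]
      have e₂ : ((fun i => ((Fin.append v₁ v₂ i : X) : Unitization 𝕜 X)) ∘ Fin.natAdd n₁)
          = fun i => ((v₂ i : X) : Unitization 𝕜 X) := by
        funext j; simp [Function.comp, Fin.append_right]
      rw [e₁, e₂, he₁, he₂, ← Unitization.inr_add]
  | mul x y hx hy ihx ihy =>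
    obtain ⟨n₁, v₁, P₁, hv₁, hc₁, he₁⟩ := ihx
    obtain ⟨n₂, v₂, P₂, hv₂, hc₂, he₂⟩ := ihy
    refine ⟨n₁ + n₂, Fin.append v₁ v₂,
      rename (Fin.castAdd n₂) P₁ * rename (Fin.natAdd n₁) P₂, ?_, ?_, ?_⟩
    · intro i
      refine Fin.addCases (fun j => ?_) (fun j => ?_) i
      · rw [Fin.append_left]; exact hv₁ j
      · rw [Fin.append_right]; exact hv₂ j
    · rw [map_mul, constantCoeff_rename, hc₁, zero_mul]
    · rw [map_mul, aeval_rename, aeval_rename]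
      have e₁ : ((fun i => ((Fin.append v₁ v₂ i : X) : Unitization 𝕜 X)) ∘ Fin.castAdd n₂)
          = fun i => ((v₁ i : X) : Unitization 𝕜 X) := by
        funext j; simp [Function.comp, Fin.append_left]
      have e₂ : ((fun i => ((Fin.append v₁ v₂ i : X) : Unitization 𝕜 X)) ∘ Fin.natAdd n₁)
          = fun i => ((v₂ i : X) : Unitization 𝕜 X) := by
        funext j; simp [Function.comp, Fin.append_right]
      rw [e₁, e₂, he₁, he₂, ← Unitization.inr_mul]
  | smul r x hx ihx =>
    obtain ⟨n, v, P, hv, hc, he⟩ := ihx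
    refine ⟨n, v, r • P, hv, ?_, ?_⟩
    · rw [smul_eq_C_mul, map_mul, constantCoeff_C, hc, mul_zero]
    · rw [map_smul, he, ← Unitization.inr_smul]

theorem dedup_rep (S : Set X) {n : ℕ} (v : Fin n → X) (hv : ∀ i, v i ∈ S)
    (P : MvPolynomial (Fin n) 𝕜) :
    ∃ (m : ℕ) (w : Fin m → X) (Q : MvPolynomial (Fin m) 𝕜),
      (∀ i, w i ∈ S) ∧ Function.Injective w ∧
      MvPolynomial.constantCoeff Q = MvPolynomial.constantCoeff P ∧
      MvPolynomial.aeval (fun i => (w i : Unitization 𝕜 X)) Q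
        = MvPolynomial.aeval (fun i => (v i : Unitization 𝕜 X)) P := by
  classical
  have hmem : ∀ i, v i ∈ Finset.univ.image v :=
    fun i => Finset.mem_image.2 ⟨i, Finset.mem_univ i, rfl⟩
  obtain ⟨e⟩ : Nonempty ((Finset.univ.image v : Finset X) ≃ Fin (Finset.univ.image v).card) :=
    ⟨(Finset.univ.image v).equivFin⟩
  refine ⟨(Finset.univ.image v).card, fun j => (e.symm j : X),
    MvPolynomial.rename (fun i => e ⟨v i, hmem i⟩) P, ?_, ?_, MvPolynomial.constantCoeff_rename _ _, ?_⟩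
  · intro j
    obtain ⟨i, -, hi⟩ := Finset.mem_image.1 (e.symm j).2
    show ((e.symm j : X)) ∈ S
    exact hi ▸ hv i
  · exact fun a b hab => e.symm.injective (Subtype.ext hab)
  · rw [MvPolynomial.aeval_rename]
    have : ((fun j => (((e.symm j : X)) : Unitization 𝕜 X)) ∘ (fun i => e ⟨v i, hmem i⟩))
        = fun i => ((v i : X) : Unitization 𝕜 X) := by
      funext i
      simp [Function.comp, Equiv.symm_apply_apply]
    rw [this]


theorem main_sfg {γ : Type} [LinearOrder γ] (A : Set X) (hA : IsSFG 𝕜 A)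
    (a : γ → X) (ha : ∀ g, a g ∈ A) (hainj : Function.Injective a)
    (m : γ → ℕ) (w : ∀ g, Fin (m g) → X) (hw : ∀ g j, w g j ∈ A)
    (Q : ∀ g, MvPolynomial (Fin (m g)) 𝕜) (hQ : ∀ g, MvPolynomial.constantCoeff (Q g) = 0)
    (t : γ → 𝕜) (ht : ∀ g, t g ≠ 0) (x : γ → X)
    (hx : ∀ g, MvPolynomial.aeval (fun j => (w g j : Unitization 𝕜 X)) (Q g)
      = (x g : Unitization 𝕜 X))
    (hfresh : ∀ g g', g' ≤ g → a g ∉ Set.range (w g'))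
    (f : γ → X) (hf : ∀ g, f g = x g + t g • a g) :
    ∀ (n : ℕ) (gg : Fin n → γ), Function.Injective gg →
      ∀ P : MvPolynomial (Fin n) 𝕜, P ≠ 0 → MvPolynomial.constantCoeff P = 0 →
        MvPolynomial.aeval (fun i => (f (gg i) : Unitization 𝕜 X)) P ≠ 0 := by
  classical
  intro n gg hgg P hP hcc
  -- the finite set of generators involved
  set WW : Finset X := (Finset.univ.image (fun i => a (gg i))) ∪
    (Finset.univ.image (fun p : (i : Fin n) × Fin (m (gg i)) => w (gg p.1) p.2)) with hWWdef
  have memA : ∀ i, a (gg i) ∈ WW := fun i =>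
    Finset.mem_union_left _ (Finset.mem_image.2 ⟨i, Finset.mem_univ i, rfl⟩)
  have memW : ∀ (i : Fin n) (j : Fin (m (gg i))), w (gg i) j ∈ WW := fun i j =>
    Finset.mem_union_right _ (Finset.mem_image.2 ⟨⟨i, j⟩, Finset.mem_univ _, rfl⟩)
  have memAll : ∀ z ∈ WW, z ∈ A := by
    intro z hz
    rcases Finset.mem_union.1 hz with h | h
    · obtain ⟨i, -, rfl⟩ := Finset.mem_image.1 h; exact ha (gg i)
    · obtain ⟨p, -, rfl⟩ := Finset.mem_image.1 h; exact hw (gg p.1) p.2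
  set σv := {z : X // z ∈ WW} with hσv
  set embA : Fin n → σv := fun i => ⟨a (gg i), memA i⟩ with hembA
  have hembAinj : Function.Injective embA := fun i j h =>
    hgg (hainj (congrArg Subtype.val h))
  have hch : ∀ (i : Fin n) (h : ∃ i', embA i' = embA i), h.choose = i := fun i h =>
    hembAinj h.choose_spec
  set embW : ∀ i : Fin n, Fin (m (gg i)) → σv := fun i j => ⟨w (gg i) j, memW i j⟩ with hembW
  set Q' : Fin n → MvPolynomial σv 𝕜 := fun i => rename (embW i) (Q (gg i)) with hQ'
  set bigG : σv → MvPolynomial σv 𝕜 :=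
    fun v => if h : ∃ i, embA i = v then C (t (gg h.choose)) * MvPolynomial.X v + Q' h.choose else MvPolynomial.X v
    with hbigG
  set s : Finset σv := Finset.univ.image embA with hs
  -- n = 0 case
  rcases Nat.eq_zero_or_pos n with rfl | hn
  · exfalso
    obtain ⟨r, rfl⟩ := (MvPolynomial.C_surjective (Fin 0)) P
    rw [constantCoeff_C] at hcc
    exact hP (by rw [hcc, map_zero])
  have hnempty : Nonempty (Fin n) := ⟨⟨0, hn⟩⟩
  set ordv : σv → γ := fun v => if h : ∃ i, embA i = v then gg h.choose
    else gg (Classical.arbitrary (Fin n)) with hordv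
  -- triangular hypotheses
  have hGX : ∀ v, v ∉ s → bigG v = MvPolynomial.X v := by
    intro v hv
    simp only [hbigG]
    rw [dif_neg]
    rintro ⟨i, rfl⟩
    exact hv (Finset.mem_image.2 ⟨i, Finset.mem_univ i, rfl⟩)
  have hGs : ∀ v ∈ s, ∃ tt q, tt ≠ 0 ∧ bigG v = C tt * MvPolynomial.X v + q ∧
      (∀ u ∈ q.vars, u ∈ s → ordv u < ordv v) := by
    intro v hv
    obtain ⟨i, -, rfl⟩ := Finset.mem_image.1 hv
    have hex : ∃ i', embA i' = embA i := ⟨i, rfl⟩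
    refine ⟨t (gg i), Q' i, ht _, ?_, ?_⟩
    · simp only [hbigG]; rw [dif_pos hex, hch i hex]
    · intro u hu hus
      obtain ⟨k, -, rfl⟩ := Finset.mem_image.1 hus
      have hexk : ∃ i', embA i' = embA k := ⟨k, rfl⟩
      have h1 : ordv (embA k) = gg k := by simp only [hordv]; rw [dif_pos hexk, hch k hexk]
      have h2 : ordv (embA i) = gg i := by simp only [hordv]; rw [dif_pos hex, hch i hex]
      rw [h1, h2]
      -- embA k ∈ vars (Q' i) hence a (gg k) ∈ range (w (gg i))
      have hmem' : (embA k : σv) ∈ (Q' i).vars := hu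
      have : ∃ j, embW i j = embA k := by
        have := MvPolynomial.mem_vars_rename _ _ hmem'
        obtain ⟨j, -, hj⟩ := this
        exact ⟨j, hj⟩
      obtain ⟨j, hj⟩ := this
      have hrange : a (gg k) ∈ Set.range (w (gg i)) :=
        ⟨j, congrArg Subtype.val hj⟩
      by_contra hle
      push_neg at hle
      have : gg i ≤ gg k := hle
      exact hfresh (gg k) (gg i) this hrange
  have hbinj : Function.Injective (bind₁ bigG : MvPolynomial σv 𝕜 →ₐ[𝕜] MvPolynomial σv 𝕜) :=
    bind₁_triangular_injective ordv s bigG hGX hGs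
  -- bigP
  set bigP : MvPolynomial σv 𝕜 := bind₁ bigG (rename embA P) with hbigP
  have hrenP : rename embA P ≠ 0 := fun h =>
    hP ((MvPolynomial.rename_injective _ hembAinj) (by rw [h, map_zero]))
  have hbigPne : bigP ≠ 0 := by
    intro h
    apply hrenP
    apply hbinj
    rw [← hbigP, h, map_zero]
  have hGcc : ∀ v, constantCoeff (bigG v) = 0 := by
    intro v
    simp only [hbigG]
    by_cases h : ∃ i, embA i = v
    · rw [dif_pos h, map_add, map_mul, constantCoeff_C, constantCoeff_X, mul_zero, zero_add,
        hQ', constantCoeff_rename, hQ]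
    · rw [dif_neg h, constantCoeff_X]
  have hbigPcc : constantCoeff bigP = 0 :=
    constantCoeff_bind₁_eq_zero _ _ hGcc (by rw [constantCoeff_rename]; exact hcc)
  -- apply SFG of A
  set NN := Fintype.card σv with hNN
  set ee : σv ≃ Fin NN := Fintype.equivFin σv with hee
  set u : Fin NN → X := fun k => (ee.symm k : X) with hu
  have huinj : Function.Injective u := fun k1 k2 h =>
    ee.symm.injective (Subtype.ext h)
  have huA : ∀ k, u k ∈ A := fun k => memAll _ (ee.symm k).2
  have happlied := hA NN u huA huinj (rename ee bigP)
    (fun h => hbigPne ((MvPolynomial.rename_injective _ ee.injective) (by rw [h, map_zero])))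
    (by rw [constantCoeff_rename]; exact hbigPcc)
  rw [aeval_rename] at happlied
  have hcompu : ((fun k => ((u k : X) : Unitization 𝕜 X)) ∘ ee) = fun v : σv =>
      ((v : X) : Unitization 𝕜 X) := by
    funext v
    simp [hu, Function.comp, Equiv.symm_apply_apply]
  rw [hcompu] at happlied
  -- final computation
  have hfinal : aeval (fun v : σv => ((v : X) : Unitization 𝕜 X)) bigP
      = aeval (fun i => ((f (gg i) : X) : Unitization 𝕜 X)) P := by
    rw [hbigP, aeval_bind₁, aeval_rename]
    apply aeval_congr_vars (K := 𝕜)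
    intro i _
    show aeval (fun v : σv => ((v : X) : Unitization 𝕜 X)) (bigG (embA i)) = _
    have hex : ∃ i', embA i' = embA i := ⟨i, rfl⟩
    simp only [hbigG]
    rw [dif_pos hex, hch i hex, map_add, map_mul, aeval_C, aeval_X]
    have hQeval : aeval (fun v : σv => ((v : X) : Unitization 𝕜 X)) (Q' i)
        = ((x (gg i) : X) : Unitization 𝕜 X) := by
      rw [hQ', aeval_rename]
      have : ((fun v : σv => ((v : X) : Unitization 𝕜 X)) ∘ embW i)
          = fun j => ((w (gg i) j : X) : Unitization 𝕜 X) := by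
        funext j; rfl
      rw [this, hx]
    rw [hQeval]
    show algebraMap 𝕜 (Unitization 𝕜 X) (t (gg i)) * Unitization.inr (a (gg i))
      + Unitization.inr (x (gg i)) = Unitization.inr (f (gg i))
    rw [Unitization.algebraMap_eq_inl, Unitization.inl_mul_inr, ← Unitization.inr_add,
      hf (gg i), add_comm]
  rw [hfinal] at happlied
  exact happlied


end Stmt15Aux

open Topology Filter in
/-- Let `X` be a commutative topological free algebra over `𝕜` which is
`α`-generated free (it has a set of free generators `A` with `|A| = α` and `X = ⟨A⟩`), with `α`
infinite and `w(X) ≤ α`.  Then there is a family `{Y_κ}_{κ<α}` of subalgebras `Y_κ = ⟨F_κ⟩` of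
`X` such that each `Y_κ` is an `α`-generated free dense subalgebra, and the family is
algebraically independent, i.e. `⋃ F_κ` is an SFG and the `F_κ` are pairwise disjoint (in
particular `Y_{κ₁} ∩ Y_{κ₂} = {0}` for `κ₁ ≠ κ₂`). -/
theorem stmt15 [TopologicalSpace X] [IsTopologicalRing X] [ContinuousSMul 𝕜 X]
    (A : Set X) (hA : IsSFG 𝕜 A)
    (hXfree : NonUnitalAlgebra.adjoin 𝕜 A = (⊤ : NonUnitalSubalgebra 𝕜 X))
    (α : Cardinal) (hcard : #↥A = α) (hinf : Cardinal.aleph0 ≤ α) (hw : tsWeight X ≤ α) :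
    ∃ (ι : Type) (F : ι → Set X), #ι = α ∧
      (∀ i, IsSFG 𝕜 (F i) ∧ #↥(F i) = α ∧
        Dense ((NonUnitalAlgebra.adjoin 𝕜 (F i) : NonUnitalSubalgebra 𝕜 X) : Set X)) ∧
      IsSFG 𝕜 (⋃ i, F i) ∧
      (∀ i j, i ≠ j → F i ∩ F j = ∅) ∧
      (∀ i j, i ≠ j →
        NonUnitalAlgebra.adjoin 𝕜 (F i) ⊓ NonUnitalAlgebra.adjoin 𝕜 (F j) =
          (⊥ : NonUnitalSubalgebra 𝕜 X)) := by
  classical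
  -- Step 1: a topological basis of cardinality at most α
  have hSne : { c : Cardinal.{0} | ∃ B : Set (Set X),
      TopologicalSpace.IsTopologicalBasis B ∧ #↥B = c }.Nonempty :=
    ⟨#↥{s : Set X | IsOpen s}, ⟨{s : Set X | IsOpen s},
      TopologicalSpace.isTopologicalBasis_opens, rfl⟩⟩
  obtain ⟨B, hBbasis, hBcard⟩ := csInf_mem hSne
  have hBle : #↥B ≤ α := by rw [hBcard]; exact hw
  -- Step 2: enumeration of the nonempty basic sets by ↥A
  obtain ⟨U₀, hU₀B, hU₀mem, -⟩ :=
    hBbasis.exists_subset_of_mem_open (Set.mem_univ (0 : X)) isOpen_univ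
  have hB'ne : Nonempty (↥{U : Set X | U ∈ B ∧ U.Nonempty}) := ⟨⟨U₀, hU₀B, ⟨0, hU₀mem⟩⟩⟩
  have hB'le : #↥{U : Set X | U ∈ B ∧ U.Nonempty} ≤ #↥A := by
    rw [hcard]
    exact le_trans (Cardinal.mk_le_mk_of_subset (fun U hU => hU.1)) hBle
  obtain ⟨jB⟩ : Nonempty (↥{U : Set X | U ∈ B ∧ U.Nonempty} ↪ ↥A) :=
    (Cardinal.le_def _ _).1 hB'le
  set sB : ↥A → Set X := fun β => ((Function.invFun jB β : ↥{U : Set X | U ∈ B ∧ U.Nonempty}) :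
    Set X) with hsBdef
  have hsBmem : ∀ β, sB β ∈ B ∧ (sB β).Nonempty := fun β => (Function.invFun jB β).2
  have hsBsurj : ∀ V : Set X, V ∈ B → V.Nonempty → ∃ β, sB β = V := by
    intro V hVB hVne
    refine ⟨jB ⟨V, hVB, hVne⟩, ?_⟩
    have hlv : Function.invFun jB (jB ⟨V, hVB, hVne⟩) = ⟨V, hVB, hVne⟩ :=
      Function.leftInverse_invFun jB.injective _
    show ((Function.invFun jB (jB ⟨V, hVB, hVne⟩) :
      ↥{U : Set X | U ∈ B ∧ U.Nonempty}) : Set X) = V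
    rw [hlv]
  -- Step 3: the index type γty ≃ ↥A × ↥A with good well-order
  have hAA : #(↥A × ↥A) = α := by
    rw [Cardinal.mk_prod]
    simp only [Cardinal.lift_id]
    rw [hcard, Cardinal.mul_eq_self hinf]
  have hγ : #(α.ord.ToType) = α := by rw [Cardinal.mk_toType, Cardinal.card_ord]
  obtain ⟨q⟩ : Nonempty (α.ord.ToType ≃ ↥A × ↥A) := Cardinal.eq.1 (by rw [hγ, hAA])
  -- Step 4: chosen points of basic sets, and their polynomial representations
  choose pt hptmem using fun β : ↥A => (hsBmem β).2
  have hrep : ∀ β : ↥A, ∃ r : (Σ n : ℕ, (Fin n → X) × MvPolynomial (Fin n) 𝕜),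
      (∀ i, r.2.1 i ∈ A) ∧ MvPolynomial.constantCoeff r.2.2 = 0 ∧
      MvPolynomial.aeval (fun i => (r.2.1 i : Unitization 𝕜 X)) r.2.2
        = (pt β : Unitization 𝕜 X) := by
    intro β
    have hmem : pt β ∈ NonUnitalAlgebra.adjoin 𝕜 A := by
      rw [hXfree]; exact NonUnitalAlgebra.mem_top
    obtain ⟨n, v, P, h1, h2, h3⟩ := Stmt15Aux.adjoin_rep 𝕜 A hmem
    exact ⟨⟨n, v, P⟩, h1, h2, h3⟩
  choose Rep hRepA hRepcc hRepev using hrep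
  set m : α.ord.ToType → ℕ := fun g => (Rep ((q g).2)).1 with hmdef
  set w : ∀ g : α.ord.ToType, Fin (m g) → X := fun g => (Rep ((q g).2)).2.1 with hwdef
  set Q : ∀ g : α.ord.ToType, MvPolynomial (Fin (m g)) 𝕜 := fun g => (Rep ((q g).2)).2.2
    with hQdef
  set xx : α.ord.ToType → X := fun g => pt ((q g).2) with hxxdef
  -- Step 5: fresh free generators
  obtain ⟨a, hainj, hfresh⟩ := Stmt15Aux.exists_pick hinf A hcard
    (fun g => Set.range (w g)) (fun g => Set.finite_range _)
  set aX : α.ord.ToType → X := fun g => (a g : X) with haXdef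
  have haXinj : Function.Injective aX := fun g1 g2 h => hainj (Subtype.ext h)
  -- Step 6: small perturbations landing inside the basic sets
  have hts : ∀ g : α.ord.ToType, ∃ t : 𝕜, t ≠ 0 ∧ xx g + t • aX g ∈ sB ((q g).2) := by
    intro g
    have hopen : IsOpen (sB ((q g).2)) := hBbasis.isOpen (hsBmem ((q g).2)).1
    have hcont : Continuous fun s : 𝕜 => xx g + s • aX g :=
      continuous_const.add (continuous_id.smul continuous_const)
    have h0 : xx g + (0:𝕜) • aX g ∈ sB ((q g).2) := by
      rw [zero_smul, add_zero]
      exact hptmem ((q g).2)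
    have hpre : (fun s : 𝕜 => xx g + s • aX g) ⁻¹' sB ((q g).2) ∈ 𝓝 (0:𝕜) :=
      (hopen.preimage hcont).mem_nhds h0
    obtain ⟨s, hs1, hs2⟩ := Filter.nonempty_of_mem
      (Filter.inter_mem (mem_nhdsWithin_of_mem_nhds hpre)
        (self_mem_nhdsWithin (a := (0:𝕜)) (s := {(0:𝕜)}ᶜ)))
    exact ⟨s, by simpa using hs2, hs1⟩
  choose tt htt0 httU using hts
  set f : α.ord.ToType → X := fun g => xx g + tt g • aX g with hfdef
  -- Step 7: the master freeness property
  have hmain := Stmt15Aux.main_sfg 𝕜 A hA aX (fun g => (a g).2) haXinj m w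
    (fun g j => hRepA ((q g).2) j) Q (fun g => hRepcc ((q g).2)) tt htt0 xx
    (fun g => hRepev ((q g).2)) hfresh f (fun g => rfl)
  -- f is injective
  have hfinj : Function.Injective f := by
    intro g1 g2 h
    by_contra hne
    have hPne : (MvPolynomial.X 0 - MvPolynomial.X 1 : MvPolynomial (Fin 2) 𝕜) ≠ 0 := by
      refine sub_ne_zero.2 (fun hXX => ?_)
      have := congrArg (MvPolynomial.aeval (fun i : Fin 2 => if i = 0 then (1:𝕜) else 0)) hXX
      simp at this
    refine hmain 2 ![g1, g2] (Stmt15Aux.inj_pair hne)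
      (MvPolynomial.X 0 - MvPolynomial.X 1) hPne (by simp) ?_
    rw [map_sub, MvPolynomial.aeval_X, MvPolynomial.aeval_X]
    simp only [Matrix.cons_val_zero, Matrix.cons_val_one, Matrix.head_cons]
    rw [h, sub_self]
  -- the family
  set F : ↥A → Set X := fun κ => f '' {g : α.ord.ToType | (q g).1 = κ} with hFdef
  -- union is an SFG
  have hUnionSFG : IsSFG 𝕜 (⋃ κ : ↥A, F κ) := by
    intro n yy hyy hyyinj P hP hcc
    have hsel : ∀ i : Fin n, ∃ g : α.ord.ToType, f g = yy i := by
      intro i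
      obtain ⟨κ, hκ⟩ := Set.mem_iUnion.1 (hyy i)
      obtain ⟨g, -, hg⟩ := hκ
      exact ⟨g, hg⟩
    choose gg hgg using hsel
    have hgginj : Function.Injective gg := fun i j h => hyyinj (by rw [← hgg i, ← hgg j, h])
    have heq : (fun i => ((yy i : X) : Unitization 𝕜 X))
        = fun i => ((f (gg i) : X) : Unitization 𝕜 X) := by
      funext i; rw [hgg i]
    rw [heq]
    exact hmain n gg hgginj P hP hcc
  -- disjointness
  have hdisj : ∀ i j : ↥A, i ≠ j → F i ∩ F j = ∅ := by
    intro i j hij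
    ext z
    simp only [Set.mem_inter_iff, Set.mem_empty_iff_false, iff_false, not_and]
    rintro ⟨g1, hg1, rfl⟩ ⟨g2, hg2, hg2f⟩
    have hgeq : g2 = g1 := hfinj hg2f
    subst hgeq
    exact hij (hg1.symm.trans hg2)
  refine ⟨↥A, F, hcard, ?_, hUnionSFG, hdisj, ?_⟩
  · -- each F κ : SFG, cardinality α, dense span
    intro κ
    refine ⟨Stmt15Aux.sfg_mono 𝕜 (fun z hz => Set.mem_iUnion.2 ⟨κ, hz⟩) hUnionSFG, ?_, ?_⟩
    · -- cardinality
      have h1 : #↥(F κ) = #({g : α.ord.ToType | (q g).1 = κ}) := Cardinal.mk_image_eq hfinj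
      have e1 : {g : α.ord.ToType | (q g).1 = κ} ≃ {p : ↥A × ↥A // p.1 = κ} :=
        Equiv.subtypeEquiv q (fun g => Iff.rfl)
      have e2 : {p : ↥A × ↥A // p.1 = κ} ≃ ↥A :=
        { toFun := fun p => p.1.2
          invFun := fun β => ⟨(κ, β), rfl⟩
          left_inv := by rintro ⟨⟨k, β⟩, hk⟩; simp only at hk; subst hk; rfl
          right_inv := fun β => rfl }
      rw [h1, Cardinal.mk_congr (e1.trans e2), hcard]
    · -- density
      rw [dense_iff_inter_open]
      intro O hO hOne
      obtain ⟨z, hz⟩ := hOne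
      obtain ⟨U, hUB, hzU, hUO⟩ := hBbasis.exists_subset_of_mem_open hz hO
      obtain ⟨β, hβ⟩ := hsBsurj U hUB ⟨z, hzU⟩
      set g : α.ord.ToType := q.symm (κ, β) with hgdef
      have hqg : q g = (κ, β) := Equiv.apply_symm_apply q _
      have hfg : f g ∈ sB ((q g).2) := httU g
      have hmemU : f g ∈ U := by
        rw [hqg] at hfg
        rwa [hβ] at hfg
      have hmemF : f g ∈ F κ := ⟨g, by rw [Set.mem_setOf_eq, hqg], rfl⟩
      exact ⟨f g, hUO hmemU, NonUnitalAlgebra.subset_adjoin 𝕜 hmemF⟩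
  · -- trivial pairwise intersections of the generated subalgebras
    intro i j hij
    rw [eq_bot_iff, SetLike.le_def]
    intro z hz
    rw [NonUnitalAlgebra.mem_bot]
    obtain ⟨hzi, hzj⟩ := NonUnitalAlgebra.mem_inf.1 hz
    obtain ⟨n1, v1, P1, hv1, hcc1, he1⟩ := Stmt15Aux.adjoin_rep 𝕜 (F i) hzi
    obtain ⟨n2, v2, P2, hv2, hcc2, he2⟩ := Stmt15Aux.adjoin_rep 𝕜 (F j) hzj
    obtain ⟨m1, w1, Q1, hw1, hw1inj, hQ1cc, hQ1ev⟩ := Stmt15Aux.dedup_rep 𝕜 (F i) v1 hv1 P1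
    obtain ⟨m2, w2, Q2, hw2, hw2inj, hQ2cc, hQ2ev⟩ := Stmt15Aux.dedup_rep 𝕜 (F j) v2 hv2 P2
    have hd : ∀ p q, w1 p ≠ w2 q := by
      intro p q hpq
      have : w1 p ∈ F i ∩ F j := ⟨hw1 p, hpq ▸ hw2 q⟩
      rw [hdisj i j hij] at this
      exact this
    have hvvinj : Function.Injective (Fin.append w1 w2) :=
      Stmt15Aux.append_injective hw1inj hw2inj hd
    have hvvmem : ∀ k, Fin.append w1 w2 k ∈ ⋃ κ : ↥A, F κ := by
      intro k
      refine Fin.addCases (fun p => ?_) (fun p => ?_) k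
      · rw [Fin.append_left]; exact Set.mem_iUnion.2 ⟨i, hw1 p⟩
      · rw [Fin.append_right]; exact Set.mem_iUnion.2 ⟨j, hw2 p⟩
    set PP : MvPolynomial (Fin (m1 + m2)) 𝕜 :=
      MvPolynomial.rename (Fin.castAdd m2) Q1 - MvPolynomial.rename (Fin.natAdd m1) Q2
      with hPPdef
    have hecomp1 : ((fun k => ((Fin.append w1 w2 k : X) : Unitization 𝕜 X)) ∘ Fin.castAdd m2)
        = fun p => ((w1 p : X) : Unitization 𝕜 X) := by
      funext p; simp [Function.comp, Fin.append_left]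
    have hecomp2 : ((fun k => ((Fin.append w1 w2 k : X) : Unitization 𝕜 X)) ∘ Fin.natAdd m1)
        = fun p => ((w2 p : X) : Unitization 𝕜 X) := by
      funext p; simp [Function.comp, Fin.append_right]
    have hPPev : MvPolynomial.aeval
        (fun k => ((Fin.append w1 w2 k : X) : Unitization 𝕜 X)) PP = 0 := by
      rw [hPPdef, map_sub, MvPolynomial.aeval_rename, MvPolynomial.aeval_rename,
        hecomp1, hecomp2, hQ1ev, hQ2ev, he1, he2, sub_self]
    have hPPcc : MvPolynomial.constantCoeff PP = 0 := by
      rw [hPPdef, map_sub, MvPolynomial.constantCoeff_rename,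
        MvPolynomial.constantCoeff_rename, hQ1cc, hQ2cc, hcc1, hcc2, sub_self]
    have hPP0 : PP = 0 := by
      by_contra hne
      exact hUnionSFG (m1 + m2) (Fin.append w1 w2) hvvmem hvvinj PP hne hPPcc hPPev
    have heqren : MvPolynomial.rename (Fin.castAdd m2) Q1
        = MvPolynomial.rename (Fin.natAdd m1) Q2 := by
      have := sub_eq_zero.1 (hPPdef ▸ hPP0)
      exact this
    -- kill the second block of variables
    set kmap : Fin (m1 + m2) → MvPolynomial (Fin m1) 𝕜 :=
      fun idx => Fin.addCases (fun p => MvPolynomial.X p) (fun _ => 0) idx with hkdef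
    have hk1 : MvPolynomial.aeval kmap (MvPolynomial.rename (Fin.castAdd m2) Q1) = Q1 := by
      rw [MvPolynomial.aeval_rename]
      have : (kmap ∘ Fin.castAdd m2) = (MvPolynomial.X : Fin m1 → MvPolynomial (Fin m1) 𝕜) := by
        funext p
        simp only [hkdef, Function.comp]
        exact Fin.addCases_left p
      rw [this, MvPolynomial.aeval_X_left_apply]
    have hk2 : MvPolynomial.aeval kmap (MvPolynomial.rename (Fin.natAdd m1) Q2) = 0 := by
      rw [MvPolynomial.aeval_rename]
      have : (kmap ∘ Fin.natAdd m1) = fun _ : Fin m2 => (0 : MvPolynomial (Fin m1) 𝕜) := by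
        funext p
        simp only [hkdef, Function.comp]
        exact Fin.addCases_right p
      rw [this, MvPolynomial.aeval_zero']
      rw [hQ2cc, hcc2, map_zero]
    have hQ10 : Q1 = 0 := by rw [← hk1, heqren, hk2]
    have hzz : ((z : X) : Unitization 𝕜 X) = 0 := by
      rw [← he1, ← hQ1ev, hQ10, map_zero]
    have : ((z : X) : Unitization 𝕜 X) = ((0 : X) : Unitization 𝕜 X) := by
      rw [hzz, Unitization.inr_zero]
    exact Unitization.inr_injective this
end
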